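/- arXiv:2208.09806 — 6 statements merged into one kernel-verified Lean document; each statement's English description precedes it below -/
import Mathlib

section
/- Let f : ℕ → ℂ be an arithmetic function, k a positive integer, and p > 0 a real number. Suppose there exist constants C > 0 and α with max(0, p−k) < α < p such that |S_k(x,t)| ≤ C·x^α for all real x ≥ 1 and all t ∈ ℝ. Then the Hausdorff dimension of the image F_{k,p}([0,1]) = {F_{k,p}(t) : t ∈ [0,1]} ⊂ ℂ is at most k/(p−α). -/
open Filter Finset Topology
open scoped ENNReal NNReal

section Stmt8Aux
open Real

/-- Key lower bound: `min c 1 * (x/(1+x)) ≤ 1 - (1+x)^(-c)` for `c, x > 0`. -/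
lemma stmt8_key (c x : ℝ) (hc : 0 < c) (hx : 0 < x) :
    min c 1 * (x / (1 + x)) ≤ 1 - (1 + x) ^ (-c) := by
  have h1x : (0:ℝ) < 1 + x := by linarith
  rcases le_or_gt c 1 with h | h
  · rw [min_eq_left h]
    have amgm := Real.geom_mean_le_arith_mean2_weighted hc.le (by linarith : (0:ℝ) ≤ 1 - c)
      (by positivity : (0:ℝ) ≤ (1 + x)⁻¹) zero_le_one (by ring)
    have : (1 + x) ^ (-c) = ((1 + x)⁻¹) ^ c := by
      rw [← Real.rpow_neg_one, ← Real.rpow_mul h1x.le]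
      norm_num
    rw [this]
    have h2 : ((1 + x)⁻¹) ^ c * 1 ^ (1 - c) ≤ c * (1 + x)⁻¹ + (1 - c) * 1 := amgm
    rw [Real.one_rpow, mul_one, mul_one] at h2
    have : x / (1 + x) = 1 - (1 + x)⁻¹ := by field_simp; ring
    rw [this]
    nlinarith
  · rw [min_eq_right h.le]
    have h2 : (1 + x) ^ (-c) ≤ (1 + x) ^ (-1 : ℝ) :=
      Real.rpow_le_rpow_of_exponent_le (by linarith) (by linarith)
    rw [Real.rpow_neg_one] at h2
    have : x / (1 + x) = 1 - (1 + x)⁻¹ := by field_simp; ring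
    rw [one_mul, this]
    linarith

/-- Bernoulli-type upper bound: `1 - p*x ≤ (1+x)^(-p)` for `p > 0`, `x ≥ 0`. -/
lemma stmt8_bern (p x : ℝ) (hp : 0 < p) (hx : 0 ≤ x) :
    1 - p * x ≤ (1 + x) ^ (-p) := by
  have h1x : (0:ℝ) < 1 + x := by linarith
  rcases le_or_gt (1 - p * x) 0 with h | h
  · exact h.trans (Real.rpow_nonneg h1x.le _)
  · have hlog : Real.log (1 + x) ≤ x := by
      have := Real.log_le_sub_one_of_pos h1x
      linarith
    have hpow : (1 + x) ^ p ≤ Real.exp (p * x) := by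
      rw [Real.rpow_def_of_pos h1x]
      exact Real.exp_le_exp.2 (by nlinarith [Real.log_le_sub_one_of_pos h1x])
    have hb : 1 - p * x ≤ Real.exp (-(p * x)) := by
      have := Real.add_one_le_exp (-(p * x)); linarith
    have hprod : (1 - p * x) * (1 + x) ^ p ≤ 1 := by
      calc (1 - p * x) * (1 + x) ^ p ≤ Real.exp (-(p*x)) * Real.exp (p*x) :=
            mul_le_mul hb hpow (Real.rpow_nonneg h1x.le _) (Real.exp_nonneg _)
        _ = 1 := by rw [← Real.exp_add]; ring_nf; exact Real.exp_zero
    have hpos := Real.rpow_pos_of_pos h1x p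
    rw [Real.rpow_neg h1x.le, ← one_div, le_div_iff₀ hpos]
    linarith

/-- a helper: uniform lower bound `(1+x)^(γ-1) ≥ min 1 (base) ...` specialized. -/
lemma stmt8_pow_factor {y : ℝ} (γ : ℝ) (hγ : 0 < γ) (h1 : 1 ≤ y) (h2 : y ≤ 2) :
    (1/2 : ℝ) ≤ y ^ (γ - 1) := by
  rcases le_or_gt 1 γ with h | h
  · calc (1/2:ℝ) ≤ 1 := by norm_num
      _ ≤ y ^ (γ-1) := Real.one_le_rpow h1 (by linarith)
  · have : y ^ (γ-1) ≥ (2:ℝ) ^ (γ-1) :=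
      Real.rpow_le_rpow_of_nonpos (by linarith) h2 (by linarith)
    have h2' : (2:ℝ) ^ (-1:ℝ) ≤ (2:ℝ) ^ (γ-1) :=
      Real.rpow_le_rpow_of_exponent_le (by norm_num) (by linarith)
    rw [Real.rpow_neg_one] at h2'
    norm_num at h2' ⊢
    linarith

/-- Telescope lower bound (head): `(min γ 1/2) n^(γ-1) ≤ (n+1)^γ - n^γ`. -/
lemma stmt8_tel_head (γ : ℝ) (hγ : 0 < γ) (n : ℕ) (hn : 1 ≤ n) :
    min γ 1 / 2 * (n:ℝ) ^ (γ - 1) ≤ ((n:ℝ) + 1) ^ γ - (n:ℝ) ^ γ := by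
  have hn' : (1:ℝ) ≤ (n:ℝ) := by exact_mod_cast hn
  have hnpos : (0:ℝ) < n := by linarith
  set x : ℝ := 1 / n with hxdef
  have hx : 0 < x := by positivity
  have hx1 : x ≤ 1 := by rw [hxdef]; rw [div_le_one hnpos]; linarith
  have key := stmt8_key γ x hγ hx
  have h1x : (0:ℝ) < 1 + x := by linarith
  have hmul : (n:ℝ) ^ γ * (1 + x) ^ γ = ((n:ℝ) + 1) ^ γ := by
    rw [← Real.mul_rpow hnpos.le h1x.le]
    congr 1
    rw [hxdef]
    field_simp
  -- multiply key by (1+x)^γ ≥ 0 :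
  have hpow : (0:ℝ) < (1+x) ^ γ := Real.rpow_pos_of_pos h1x γ
  have key2 : min γ 1 * (x / (1 + x)) * (1+x)^γ ≤ (1+x)^γ - 1 := by
    have := mul_le_mul_of_nonneg_right key hpow.le
    calc min γ 1 * (x / (1 + x)) * (1+x)^γ ≤ (1 - (1+x)^(-γ)) * (1+x)^γ := this
      _ = (1+x)^γ - (1+x)^(-γ) * (1+x)^γ := by ring
      _ = (1+x)^γ - 1 := by rw [← Real.rpow_add h1x]; norm_num
  have hfac : x / (1 + x) * (1+x)^γ = x * (1+x)^(γ-1) := by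
    rw [Real.rpow_sub h1x, Real.rpow_one]; field_simp
  rw [mul_assoc, hfac] at key2
  -- now multiply by n^γ
  have key3 : min γ 1 * (x * (1+x)^(γ-1)) * (n:ℝ)^γ ≤ ((n:ℝ)+1)^γ - (n:ℝ)^γ := by
    have := mul_le_mul_of_nonneg_right key2 (Real.rpow_pos_of_pos hnpos γ).le
    calc min γ 1 * (x * (1+x)^(γ-1)) * (n:ℝ)^γ
        ≤ ((1+x)^γ - 1) * (n:ℝ)^γ := this
      _ = (n:ℝ)^γ * (1+x)^γ - (n:ℝ)^γ := by ring
      _ = ((n:ℝ)+1)^γ - (n:ℝ)^γ := by rw [hmul]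
  refine le_trans ?_ key3
  have hxe : x * (n:ℝ)^γ = (n:ℝ)^(γ-1) := by
    rw [Real.rpow_sub hnpos, Real.rpow_one, hxdef]; field_simp
  have hhalf : (1/2:ℝ) ≤ (1+x)^(γ-1) := stmt8_pow_factor γ hγ (by linarith) (by linarith)
  have hmin : 0 ≤ min γ 1 := le_min hγ.le zero_le_one
  calc min γ 1 / 2 * (n:ℝ)^(γ-1)
      = min γ 1 * (1/2) * (x * (n:ℝ)^γ) := by rw [hxe]; ring
    _ ≤ min γ 1 * (1+x)^(γ-1) * (x * (n:ℝ)^γ) := by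
        apply mul_le_mul_of_nonneg_right _ (by positivity)
        exact mul_le_mul_of_nonneg_left hhalf hmin
    _ = min γ 1 * (x * (1+x)^(γ-1)) * (n:ℝ)^γ := by ring

/-- Telescope lower bound (tail): `(min c 1/2) n^(-c-1) ≤ n^(-c) - (n+1)^(-c)`. -/
lemma stmt8_tel_tail (c : ℝ) (hc : 0 < c) (n : ℕ) (hn : 1 ≤ n) :
    min c 1 / 2 * (n:ℝ) ^ (-c - 1) ≤ (n:ℝ) ^ (-c) - ((n:ℝ) + 1) ^ (-c) := by
  have hn' : (1:ℝ) ≤ (n:ℝ) := by exact_mod_cast hn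
  have hnpos : (0:ℝ) < n := by linarith
  set x : ℝ := 1 / n with hxdef
  have hx : 0 < x := by positivity
  have hx1 : x ≤ 1 := by rw [hxdef, div_le_one hnpos]; linarith
  have h1x : (0:ℝ) < 1 + x := by linarith
  have key := stmt8_key c x hc hx
  have hmul : (n:ℝ) ^ (-c) * (1 + x) ^ (-c) = ((n:ℝ) + 1) ^ (-c) := by
    rw [← Real.mul_rpow hnpos.le h1x.le]
    congr 1
    rw [hxdef]
    field_simp
  have hpow : (0:ℝ) < (n:ℝ) ^ (-c) := Real.rpow_pos_of_pos hnpos _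
  have key2 : min c 1 * (x / (1+x)) * (n:ℝ)^(-c) ≤ (n:ℝ)^(-c) - ((n:ℝ)+1)^(-c) := by
    have := mul_le_mul_of_nonneg_right key hpow.le
    calc min c 1 * (x / (1+x)) * (n:ℝ)^(-c)
        ≤ (1 - (1+x)^(-c)) * (n:ℝ)^(-c) := this
      _ = (n:ℝ)^(-c) - (n:ℝ)^(-c) * (1+x)^(-c) := by ring
      _ = (n:ℝ)^(-c) - ((n:ℝ)+1)^(-c) := by rw [hmul]
  refine le_trans ?_ key2
  have hmin : 0 ≤ min c 1 := le_min hc.le zero_le_one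
  have hfrac : x / 2 ≤ x / (1 + x) := by
    apply div_le_div_of_nonneg_left hx.le h1x
    linarith
  have hxe : x * (n:ℝ)^(-c) = (n:ℝ)^(-c-1) := by
    rw [Real.rpow_sub hnpos, Real.rpow_one, hxdef]; field_simp
  calc min c 1 / 2 * (n:ℝ)^(-c-1)
      = min c 1 * (x/2) * (n:ℝ)^(-c) := by rw [← hxe]; ring
    _ ≤ min c 1 * (x/(1+x)) * (n:ℝ)^(-c) := by
        apply mul_le_mul_of_nonneg_right _ hpow.le
        exact mul_le_mul_of_nonneg_left hfrac hmin

/-- Upper bound: `n^(-p) - (n+1)^(-p) ≤ p * n^(-p-1)`, and nonnegativity. -/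
lemma stmt8_diff_upper (p : ℝ) (hp : 0 < p) (n : ℕ) (hn : 1 ≤ n) :
    (n:ℝ) ^ (-p) - ((n:ℝ) + 1) ^ (-p) ≤ p * (n:ℝ) ^ (-p - 1) := by
  have hn' : (1:ℝ) ≤ (n:ℝ) := by exact_mod_cast hn
  have hnpos : (0:ℝ) < n := by linarith
  set x : ℝ := 1 / n with hxdef
  have hx : 0 < x := by positivity
  have h1x : (0:ℝ) < 1 + x := by linarith
  have key := stmt8_bern p x hp hx.le
  have hmul : (n:ℝ) ^ (-p) * (1 + x) ^ (-p) = ((n:ℝ) + 1) ^ (-p) := by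
    rw [← Real.mul_rpow hnpos.le h1x.le]; congr 1; rw [hxdef]; field_simp
  have hpow : (0:ℝ) < (n:ℝ) ^ (-p) := Real.rpow_pos_of_pos hnpos _
  have hxe : x * (n:ℝ)^(-p) = (n:ℝ)^(-p-1) := by
    rw [Real.rpow_sub hnpos, Real.rpow_one, hxdef]; field_simp
  have := mul_le_mul_of_nonneg_right key hpow.le
  rw [sub_mul, one_mul, mul_comm ((1+x) ^ (-p))] at this
  rw [hmul] at this
  nlinarith [this]

lemma stmt8_diff_nonneg (p : ℝ) (hp : 0 < p) (n : ℕ) (hn : 1 ≤ n) :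
    0 ≤ (n:ℝ) ^ (-p) - ((n:ℝ) + 1) ^ (-p) := by
  have hnpos : (0:ℝ) < n := by exact_mod_cast hn
  have := Real.rpow_le_rpow_of_nonpos hnpos (by linarith : (n:ℝ) ≤ (n:ℝ)+1)
    (by linarith : -p ≤ 0)
  linarith

lemma stmt8_tel_sum_Icc (g : ℕ → ℝ) : ∀ N : ℕ,
    ∑ n ∈ Icc 1 N, (g (n+1) - g n) = g (N+1) - g 1 := by
  intro N
  induction N with
  | zero => simp
  | succ N ih =>
    rw [Finset.sum_Icc_succ_top (Nat.le_add_left 1 N), ih]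
    ring

lemma stmt8_tel_sum_Ioc (g : ℕ → ℝ) (M : ℕ) : ∀ N, M ≤ N →
    ∑ n ∈ Ioc M N, (g n - g (n+1)) = g (M+1) - g (N+1) := by
  intro N
  induction N with
  | zero => intro h; interval_cases M; simp
  | succ N ih =>
    intro h
    rcases Nat.lt_or_ge M (N+1) with h' | h'
    · have hMN : M ≤ N := Nat.lt_succ_iff.mp h'
      rw [Finset.sum_Ioc_succ_top hMN, ih hMN]
      ring
    · have : M = N + 1 := le_antisymm h h'
      subst this
      simp

lemma stmt8_abel (c b : ℕ → ℂ) (M : ℕ) : ∀ N, M ≤ N →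
    ∑ n ∈ Ioc M N, c n * b n
      = ∑ n ∈ Ioc M N, (∑ m ∈ Icc 1 n, c m) * (b n - b (n+1))
        + (∑ m ∈ Icc 1 N, c m) * b (N+1) - (∑ m ∈ Icc 1 M, c m) * b (M+1) := by
  intro N
  induction N with
  | zero =>
    intro h
    interval_cases M
    simp
  | succ N ih =>
    intro h
    rcases Nat.lt_or_ge M (N+1) with h' | h'
    · have hMN : M ≤ N := Nat.lt_succ_iff.mp h'
      rw [Finset.sum_Ioc_succ_top hMN, Finset.sum_Ioc_succ_top hMN, ih hMN,
        Finset.sum_Icc_succ_top (Nat.le_add_left 1 N)]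
      ring
    · have : M = N + 1 := le_antisymm h h'
      subst this
      simp

lemma stmt8_min_pos (γ : ℝ) (hγ : 0 < γ) : 0 < min γ 1 := lt_min hγ zero_lt_one

lemma stmt8_sum_head (γ : ℝ) (hγ : 0 < γ) (N : ℕ) (hN : 1 ≤ N) :
    ∑ n ∈ Icc 1 N, (n:ℝ)^(γ-1) ≤ (2 / min γ 1) * 2^γ * (N:ℝ)^γ := by
  have hmin := stmt8_min_pos γ hγ
  have hstep : ∀ n ∈ Icc 1 N, (n:ℝ)^(γ-1)
      ≤ (2 / min γ 1) * (((n+1:ℕ):ℝ)^γ - (n:ℝ)^γ) := by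
    intro n hn
    have hn1 : 1 ≤ n := (Finset.mem_Icc.mp hn).1
    have := stmt8_tel_head γ hγ n hn1
    have h2 : ((n:ℝ)+1) = ((n+1:ℕ):ℝ) := by push_cast; ring
    rw [h2] at this
    rw [div_mul_eq_mul_div, le_div_iff₀ hmin]
    calc (n:ℝ)^(γ-1) * min γ 1 = 2 * (min γ 1 / 2 * (n:ℝ)^(γ-1)) := by ring
      _ ≤ 2 * (((n+1:ℕ):ℝ)^γ - (n:ℝ)^γ) := by linarith
  calc ∑ n ∈ Icc 1 N, (n:ℝ)^(γ-1)
      ≤ ∑ n ∈ Icc 1 N, (2 / min γ 1) * (((n+1:ℕ):ℝ)^γ - (n:ℝ)^γ) :=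
        Finset.sum_le_sum hstep
    _ = (2 / min γ 1) * ∑ n ∈ Icc 1 N, (((n+1:ℕ):ℝ)^γ - (n:ℝ)^γ) := by
        rw [Finset.mul_sum]
    _ = (2 / min γ 1) * (((N+1:ℕ):ℝ)^γ - ((1:ℕ):ℝ)^γ) := by
        rw [stmt8_tel_sum_Icc (fun n => (n:ℝ)^γ) N]
    _ ≤ (2 / min γ 1) * (2^γ * (N:ℝ)^γ) := by
        apply mul_le_mul_of_nonneg_left _ (by positivity)
        have h1 : ((1:ℕ):ℝ)^γ = 1 := by norm_num
        have h2 : ((N+1:ℕ):ℝ)^γ ≤ (2*(N:ℝ))^γ := by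
          apply Real.rpow_le_rpow (by positivity) _ hγ.le
          push_cast
          have : (1:ℝ) ≤ (N:ℝ) := by exact_mod_cast hN
          linarith
        rw [Real.mul_rpow (by norm_num) (Nat.cast_nonneg N)] at h2
        rw [h1]
        have : (0:ℝ) ≤ 2^γ * (N:ℝ)^γ - ((N+1:ℕ):ℝ)^γ := by linarith
        nlinarith [Real.rpow_nonneg (Nat.cast_nonneg (N+1)) γ]
    _ = (2 / min γ 1) * 2^γ * (N:ℝ)^γ := by ring

lemma stmt8_sum_tail (c : ℝ) (hc : 0 < c) (M N : ℕ) (hM : 1 ≤ M) :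
    ∑ n ∈ Ioc M N, (n:ℝ)^(-c-1) ≤ (2 / min c 1) * (M:ℝ)^(-c) := by
  have hmin := stmt8_min_pos c hc
  have hMpos : (0:ℝ) < M := by exact_mod_cast hM
  rcases Nat.lt_or_ge N M with h | h
  · rw [Finset.Ioc_eq_empty (by omega)]
    simp only [Finset.sum_empty]
    positivity
  · have hstep : ∀ n ∈ Ioc M N, (n:ℝ)^(-c-1)
        ≤ (2 / min c 1) * ((n:ℝ)^(-c) - ((n+1:ℕ):ℝ)^(-c)) := by
      intro n hn
      have hn1 : 1 ≤ n := le_trans hM (Finset.mem_Ioc.mp hn).1.le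
      have := stmt8_tel_tail c hc n hn1
      have h2 : ((n:ℝ)+1) = ((n+1:ℕ):ℝ) := by push_cast; ring
      rw [h2] at this
      rw [div_mul_eq_mul_div, le_div_iff₀ hmin]
      calc (n:ℝ)^(-c-1) * min c 1 = 2 * (min c 1 / 2 * (n:ℝ)^(-c-1)) := by ring
        _ ≤ 2 * ((n:ℝ)^(-c) - ((n+1:ℕ):ℝ)^(-c)) := by linarith
    calc ∑ n ∈ Ioc M N, (n:ℝ)^(-c-1)
        ≤ ∑ n ∈ Ioc M N, (2 / min c 1) * ((n:ℝ)^(-c) - ((n+1:ℕ):ℝ)^(-c)) :=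
          Finset.sum_le_sum hstep
      _ = (2 / min c 1) * ∑ n ∈ Ioc M N, ((n:ℝ)^(-c) - ((n+1:ℕ):ℝ)^(-c)) := by
          rw [Finset.mul_sum]
      _ = (2 / min c 1) * (((M+1:ℕ):ℝ)^(-c) - ((N+1:ℕ):ℝ)^(-c)) := by
          rw [stmt8_tel_sum_Ioc (fun n => (n:ℝ)^(-c)) M N h]
      _ ≤ (2 / min c 1) * (M:ℝ)^(-c) := by
          apply mul_le_mul_of_nonneg_left _ (by positivity)
          have h1 : ((M+1:ℕ):ℝ)^(-c) ≤ (M:ℝ)^(-c) := by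
            apply Real.rpow_le_rpow_of_nonpos hMpos _ (by linarith)
            push_cast; linarith
          have h2 : (0:ℝ) ≤ ((N+1:ℕ):ℝ)^(-c) :=
            Real.rpow_nonneg (Nat.cast_nonneg _) _
          linarith

/-- `(n+1)^κ - n^κ ≤ κ e^κ n^(κ-1)` for `n ≥ 1`. -/
lemma stmt8_pow_diff (κ : ℝ) (hκ : 0 < κ) (n : ℕ) (hn : 1 ≤ n) :
    ((n:ℝ)+1)^κ - (n:ℝ)^κ ≤ κ * Real.exp κ * (n:ℝ)^(κ-1) := by
  have hn' : (1:ℝ) ≤ (n:ℝ) := by exact_mod_cast hn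
  have hnpos : (0:ℝ) < n := by linarith
  set x : ℝ := 1/n with hxdef
  have hx : 0 < x := by positivity
  have hx1 : x ≤ 1 := by rw [hxdef, div_le_one hnpos]; linarith
  have h1x : (0:ℝ) < 1 + x := by linarith
  -- (1+x)^κ ≤ exp (κ x)
  have h1 : (1+x)^κ ≤ Real.exp (κ*x) := by
    rw [Real.rpow_def_of_pos h1x]
    apply Real.exp_le_exp.2
    have := Real.log_le_sub_one_of_pos h1x
    nlinarith
  -- exp t ≤ 1 + t * exp t  for t ≥ 0
  have h2 : ∀ t : ℝ, Real.exp t ≤ 1 + t * Real.exp t := by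
    intro t
    have h := Real.add_one_le_exp (-t)
    have hprod : Real.exp t * Real.exp (-t) = 1 := by
      rw [← Real.exp_add]; simp
    nlinarith [mul_le_mul_of_nonneg_left h (Real.exp_pos t).le]
  have h3 : Real.exp (κ*x) ≤ 1 + κ * x * Real.exp κ := by
    have := h2 (κ*x)
    have hmono : Real.exp (κ*x) ≤ Real.exp κ := by
      apply Real.exp_le_exp.2; nlinarith
    nlinarith [Real.exp_pos (κ*x), mul_pos hκ hx]
  have h4 : (1+x)^κ ≤ 1 + κ * x * Real.exp κ := le_trans h1 h3
  have hmul : ((n:ℝ)+1)^κ = (n:ℝ)^κ * (1+x)^κ := by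
    rw [← Real.mul_rpow hnpos.le h1x.le]; congr 1; rw [hxdef]; field_simp
  have hxe : x * (n:ℝ)^κ = (n:ℝ)^(κ-1) := by
    rw [Real.rpow_sub hnpos, Real.rpow_one, hxdef]; field_simp
  have hnκ : (0:ℝ) < (n:ℝ)^κ := Real.rpow_pos_of_pos hnpos _
  calc ((n:ℝ)+1)^κ - (n:ℝ)^κ = (n:ℝ)^κ * ((1+x)^κ - 1) := by rw [hmul]; ring
    _ ≤ (n:ℝ)^κ * (κ * x * Real.exp κ) := by
        apply mul_le_mul_of_nonneg_left _ hnκ.le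
        linarith
    _ = κ * Real.exp κ * (x * (n:ℝ)^κ) := by ring
    _ = κ * Real.exp κ * (n:ℝ)^(κ-1) := by rw [hxe]

/-- Abel bound with increasing weights `n^k`. -/
lemma stmt8_abel_pow (c : ℕ → ℂ) (G α : ℝ) (hG : 0 ≤ G) (hα : 0 < α) (k : ℕ) (hk : 1 ≤ k)
    (hP : ∀ n : ℕ, 1 ≤ n → ‖∑ m ∈ Icc 1 n, c m‖ ≤ G * (n:ℝ)^α) (N : ℕ) (hN : 1 ≤ N) :
    ‖∑ n ∈ Icc 1 N, c n * ((n:ℂ)^k)‖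
      ≤ G * ((k:ℝ) * Real.exp k * ((2 / min (α+(k:ℝ)) 1) * 2^(α+(k:ℝ))) + 2^(α+(k:ℝ)))
          * (N:ℝ)^(α+(k:ℝ)) := by
  have hκ : (0:ℝ) < (k:ℝ) := by exact_mod_cast hk
  have hγ : (0:ℝ) < α + (k:ℝ) := by linarith
  have hIcc : (Icc 1 N) = Ioc 0 N := (Finset.Icc_add_one_left_eq_Ioc 0 N).symm ▸ rfl
  have habel := stmt8_abel c (fun n => ((n:ℂ)^k)) 0 N (Nat.zero_le N)
  simp only [show (Icc 1 0 : Finset ℕ) = ∅ from rfl, Finset.sum_empty, zero_mul, sub_zero]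
    at habel
  rw [hIcc]
  rw [habel]
  have hNpos : (0:ℝ) < (N:ℝ) := by exact_mod_cast hN
  -- bound each piece
  have hterm : ∀ n ∈ Ioc 0 N,
      ‖(∑ m ∈ Icc 1 n, c m) * (((n:ℂ)^k) - (((n+1:ℕ):ℂ)^k))‖
        ≤ G * ((k:ℝ) * Real.exp k) * (n:ℝ)^((α+(k:ℝ))-1) := by
    intro n hn
    have hn1 : 1 ≤ n := (Finset.mem_Ioc.mp hn).1
    have hn' : (0:ℝ) < (n:ℝ) := by exact_mod_cast hn1
    rw [norm_mul]
    have hb : ‖((n:ℂ)^k) - (((n+1:ℕ):ℂ)^k)‖ = ((n:ℝ)+1)^(k:ℝ) - (n:ℝ)^(k:ℝ) := by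
      have : ((n:ℂ)^k) - (((n+1:ℕ):ℂ)^k)
          = ((((n:ℝ)^k - ((n+1:ℕ):ℝ)^k) : ℝ) : ℂ) := by push_cast; ring
      rw [this, Complex.norm_real, Real.norm_eq_abs]
      rw [abs_sub_comm, abs_of_nonneg]
      · push_cast
        rw [Real.rpow_natCast, Real.rpow_natCast]
      · have : (n:ℝ)^k ≤ ((n+1:ℕ):ℝ)^k := by
          apply pow_le_pow_left₀ (Nat.cast_nonneg n)
          push_cast; linarith
        linarith
    rw [hb]
    calc ‖∑ m ∈ Icc 1 n, c m‖ * (((n:ℝ)+1)^(k:ℝ) - (n:ℝ)^(k:ℝ))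
        ≤ (G * (n:ℝ)^α) * ((k:ℝ) * Real.exp k * (n:ℝ)^((k:ℝ)-1)) := by
          apply mul_le_mul (hP n hn1) (stmt8_pow_diff (k:ℝ) hκ n hn1)
          · have := stmt8_pow_diff (k:ℝ) hκ n hn1
            nlinarith [Real.rpow_le_rpow hn'.le (by linarith : (n:ℝ) ≤ (n:ℝ)+1) hκ.le]
          · positivity
      _ = G * ((k:ℝ) * Real.exp k) * ((n:ℝ)^α * (n:ℝ)^((k:ℝ)-1)) := by ring
      _ = G * ((k:ℝ) * Real.exp k) * (n:ℝ)^((α+(k:ℝ))-1) := by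
          rw [← Real.rpow_add hn']; ring_nf
  have hsum1 : ‖∑ n ∈ Ioc 0 N, (∑ m ∈ Icc 1 n, c m) * (((n:ℂ)^k) - (((n+1:ℕ):ℂ)^k))‖
      ≤ G * ((k:ℝ) * Real.exp k) * ((2 / min (α+(k:ℝ)) 1) * 2^(α+(k:ℝ)) * (N:ℝ)^(α+(k:ℝ))) := by
    calc ‖∑ n ∈ Ioc 0 N, (∑ m ∈ Icc 1 n, c m) * (((n:ℂ)^k) - (((n+1:ℕ):ℂ)^k))‖
        ≤ ∑ n ∈ Ioc 0 N, ‖(∑ m ∈ Icc 1 n, c m) * (((n:ℂ)^k) - (((n+1:ℕ):ℂ)^k))‖ :=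
          norm_sum_le _ _
      _ ≤ ∑ n ∈ Ioc 0 N, G * ((k:ℝ) * Real.exp k) * (n:ℝ)^((α+(k:ℝ))-1) :=
          Finset.sum_le_sum hterm
      _ = G * ((k:ℝ) * Real.exp k) * ∑ n ∈ Icc 1 N, (n:ℝ)^((α+(k:ℝ))-1) := by
          rw [← hIcc, Finset.mul_sum]
      _ ≤ G * ((k:ℝ) * Real.exp k) * ((2 / min (α+(k:ℝ)) 1) * 2^(α+(k:ℝ)) * (N:ℝ)^(α+(k:ℝ))) := by
          apply mul_le_mul_of_nonneg_left _ (by positivity)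
          have := stmt8_sum_head (α+(k:ℝ)) hγ N hN
          linarith
  have hsum2 : ‖(∑ m ∈ Icc 1 N, c m) * (((N+1:ℕ):ℂ)^k)‖
      ≤ G * 2^(α+(k:ℝ)) * (N:ℝ)^(α+(k:ℝ)) := by
    rw [norm_mul]
    have hb : ‖(((N+1:ℕ):ℂ)^k)‖ = ((N+1:ℕ):ℝ)^k := by
      have : (((N+1:ℕ):ℂ)^k) = ((((N+1:ℕ):ℝ)^k : ℝ) : ℂ) := by push_cast; ring
      rw [this, Complex.norm_real, Real.norm_eq_abs, abs_of_nonneg (by positivity)]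
    rw [hb]
    have h1 : ((N+1:ℕ):ℝ)^k ≤ 2^(k:ℝ) * (N:ℝ)^(k:ℝ) := by
      rw [← Real.rpow_natCast ((N+1:ℕ):ℝ) k, ← Real.mul_rpow (by norm_num) hNpos.le]
      apply Real.rpow_le_rpow (by positivity) _ hκ.le
      push_cast
      have : (1:ℝ) ≤ (N:ℝ) := by exact_mod_cast hN
      linarith
    have h2 : (2:ℝ)^(k:ℝ) ≤ 2^(α+(k:ℝ)) :=
      Real.rpow_le_rpow_of_exponent_le (by norm_num) (by linarith)
    calc ‖∑ m ∈ Icc 1 N, c m‖ * ((N+1:ℕ):ℝ)^k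
        ≤ (G * (N:ℝ)^α) * (2^(α+(k:ℝ)) * (N:ℝ)^(k:ℝ)) := by
          apply mul_le_mul (hP N hN) _ (by positivity) (by positivity)
          calc ((N+1:ℕ):ℝ)^k ≤ 2^(k:ℝ) * (N:ℝ)^(k:ℝ) := h1
            _ ≤ 2^(α+(k:ℝ)) * (N:ℝ)^(k:ℝ) := by
                apply mul_le_mul_of_nonneg_right h2 (by positivity)
      _ = G * 2^(α+(k:ℝ)) * ((N:ℝ)^α * (N:ℝ)^(k:ℝ)) := by ring
      _ = G * 2^(α+(k:ℝ)) * (N:ℝ)^(α+(k:ℝ)) := by rw [← Real.rpow_add hNpos]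
  calc ‖∑ n ∈ Ioc 0 N, (∑ m ∈ Icc 1 n, c m) * (((n:ℂ)^k) - (((n+1:ℕ):ℂ)^k))
        + (∑ m ∈ Icc 1 N, c m) * (((N+1:ℕ):ℂ)^k)‖
      ≤ ‖∑ n ∈ Ioc 0 N, (∑ m ∈ Icc 1 n, c m) * (((n:ℂ)^k) - (((n+1:ℕ):ℂ)^k))‖
        + ‖(∑ m ∈ Icc 1 N, c m) * (((N+1:ℕ):ℂ)^k)‖ := norm_add_le _ _
    _ ≤ G * ((k:ℝ) * Real.exp k) * ((2 / min (α+(k:ℝ)) 1) * 2^(α+(k:ℝ)) * (N:ℝ)^(α+(k:ℝ)))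
        + G * 2^(α+(k:ℝ)) * (N:ℝ)^(α+(k:ℝ)) := add_le_add hsum1 hsum2
    _ = G * ((k:ℝ) * Real.exp k * ((2 / min (α+(k:ℝ)) 1) * 2^(α+(k:ℝ))) + 2^(α+(k:ℝ)))
          * (N:ℝ)^(α+(k:ℝ)) := by ring

/-- norm of the weight difference -/
lemma stmt8_bnorm (p : ℝ) (hp : 0 < p) (n : ℕ) (hn : 1 ≤ n) :
    ‖((((n:ℝ)^(-p) : ℝ) : ℂ) - ((((n+1:ℕ):ℝ)^(-p) : ℝ) : ℂ))‖
      = (n:ℝ)^(-p) - ((n:ℝ)+1)^(-p) := by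
  have h2 : (((n+1:ℕ):ℝ)) = ((n:ℝ)+1) := by push_cast; ring
  rw [h2, ← Complex.ofReal_sub, Complex.norm_real, Real.norm_eq_abs,
    abs_of_nonneg (stmt8_diff_nonneg p hp n hn)]

lemma stmt8_abel_decr (c : ℕ → ℂ) (G β p : ℝ) (hG : 0 ≤ G) (hp : 0 < p) (hβp : 0 < β - p)
    (hP : ∀ n : ℕ, 1 ≤ n → ‖∑ m ∈ Icc 1 n, c m‖ ≤ G * (n:ℝ)^β) (N : ℕ) (hN : 1 ≤ N) :
    ‖∑ n ∈ Icc 1 N, c n * (((n:ℝ)^(-p) : ℝ) : ℂ)‖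
      ≤ G * (p * ((2 / min (β-p) 1) * 2^(β-p)) + 1) * (N:ℝ)^(β-p) := by
  have hIcc : (Icc 1 N) = Ioc 0 N := (Finset.Icc_add_one_left_eq_Ioc 0 N).symm ▸ rfl
  have habel := stmt8_abel c (fun n => (((n:ℝ)^(-p) : ℝ) : ℂ)) 0 N (Nat.zero_le N)
  simp only [show (Icc 1 0 : Finset ℕ) = ∅ from rfl, Finset.sum_empty, zero_mul, sub_zero]
    at habel
  rw [hIcc, habel]
  have hNpos : (0:ℝ) < (N:ℝ) := by exact_mod_cast hN
  have hβ : (0:ℝ) < β := by linarith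
  have hterm : ∀ n ∈ Ioc 0 N,
      ‖(∑ m ∈ Icc 1 n, c m) * ((((n:ℝ)^(-p) : ℝ) : ℂ) - ((((n+1:ℕ):ℝ)^(-p) : ℝ) : ℂ))‖
        ≤ G * p * (n:ℝ)^((β-p)-1) := by
    intro n hn
    have hn1 : 1 ≤ n := (Finset.mem_Ioc.mp hn).1
    have hn' : (0:ℝ) < (n:ℝ) := by exact_mod_cast hn1
    rw [norm_mul, stmt8_bnorm p hp n hn1]
    calc ‖∑ m ∈ Icc 1 n, c m‖ * ((n:ℝ)^(-p) - ((n:ℝ)+1)^(-p))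
        ≤ (G * (n:ℝ)^β) * (p * (n:ℝ)^(-p-1)) := by
          apply mul_le_mul (hP n hn1) (stmt8_diff_upper p hp n hn1)
            (stmt8_diff_nonneg p hp n hn1) (by positivity)
      _ = G * p * ((n:ℝ)^β * (n:ℝ)^(-p-1)) := by ring
      _ = G * p * (n:ℝ)^((β-p)-1) := by rw [← Real.rpow_add hn']; ring_nf
  have hsum1 : ‖∑ n ∈ Ioc 0 N,
      (∑ m ∈ Icc 1 n, c m) * ((((n:ℝ)^(-p) : ℝ) : ℂ) - ((((n+1:ℕ):ℝ)^(-p) : ℝ) : ℂ))‖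
      ≤ G * p * ((2 / min (β-p) 1) * 2^(β-p) * (N:ℝ)^(β-p)) := by
    calc ‖∑ n ∈ Ioc 0 N,
        (∑ m ∈ Icc 1 n, c m) * ((((n:ℝ)^(-p) : ℝ) : ℂ) - ((((n+1:ℕ):ℝ)^(-p) : ℝ) : ℂ))‖
        ≤ ∑ n ∈ Ioc 0 N,
          ‖(∑ m ∈ Icc 1 n, c m) * ((((n:ℝ)^(-p) : ℝ) : ℂ) - ((((n+1:ℕ):ℝ)^(-p) : ℝ) : ℂ))‖ :=
          norm_sum_le _ _
      _ ≤ ∑ n ∈ Ioc 0 N, G * p * (n:ℝ)^((β-p)-1) := Finset.sum_le_sum hterm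
      _ = G * p * ∑ n ∈ Icc 1 N, (n:ℝ)^((β-p)-1) := by rw [← hIcc, Finset.mul_sum]
      _ ≤ G * p * ((2 / min (β-p) 1) * 2^(β-p) * (N:ℝ)^(β-p)) := by
          apply mul_le_mul_of_nonneg_left _ (by positivity)
          have := stmt8_sum_head (β-p) hβp N hN
          linarith
  have hsum2 : ‖(∑ m ∈ Icc 1 N, c m) * ((((N+1:ℕ):ℝ)^(-p) : ℝ) : ℂ)‖
      ≤ G * (N:ℝ)^(β-p) := by
    rw [norm_mul, Complex.norm_real, Real.norm_eq_abs,
      abs_of_nonneg (Real.rpow_nonneg (Nat.cast_nonneg _) _)]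
    have h1 : ((N+1:ℕ):ℝ)^(-p) ≤ (N:ℝ)^(-p) := by
      apply Real.rpow_le_rpow_of_nonpos hNpos _ (by linarith)
      push_cast; linarith
    calc ‖∑ m ∈ Icc 1 N, c m‖ * ((N+1:ℕ):ℝ)^(-p)
        ≤ (G * (N:ℝ)^β) * (N:ℝ)^(-p) := by
          apply mul_le_mul (hP N hN) h1 (Real.rpow_nonneg (Nat.cast_nonneg _) _) (by positivity)
      _ = G * ((N:ℝ)^β * (N:ℝ)^(-p)) := by ring
      _ = G * (N:ℝ)^(β-p) := by rw [← Real.rpow_add hNpos]; ring_nf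
  calc ‖∑ n ∈ Ioc 0 N,
        (∑ m ∈ Icc 1 n, c m) * ((((n:ℝ)^(-p) : ℝ) : ℂ) - ((((n+1:ℕ):ℝ)^(-p) : ℝ) : ℂ))
        + (∑ m ∈ Icc 1 N, c m) * ((((N+1:ℕ):ℝ)^(-p) : ℝ) : ℂ)‖
      ≤ ‖∑ n ∈ Ioc 0 N,
          (∑ m ∈ Icc 1 n, c m) * ((((n:ℝ)^(-p) : ℝ) : ℂ) - ((((n+1:ℕ):ℝ)^(-p) : ℝ) : ℂ))‖
        + ‖(∑ m ∈ Icc 1 N, c m) * ((((N+1:ℕ):ℝ)^(-p) : ℝ) : ℂ)‖ := norm_add_le _ _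
    _ ≤ G * p * ((2 / min (β-p) 1) * 2^(β-p) * (N:ℝ)^(β-p)) + G * (N:ℝ)^(β-p) :=
        add_le_add hsum1 hsum2
    _ = G * (p * ((2 / min (β-p) 1) * 2^(β-p)) + 1) * (N:ℝ)^(β-p) := by ring

lemma stmt8_abel_tail (c : ℕ → ℂ) (G α p : ℝ) (hG : 0 ≤ G) (hp : 0 < p) (hαp : 0 < p - α)
    (hα : 0 < α)
    (hP : ∀ n : ℕ, 1 ≤ n → ‖∑ m ∈ Icc 1 n, c m‖ ≤ G * (n:ℝ)^α) (M N : ℕ) (hM : 1 ≤ M)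
    (hMN : M ≤ N) :
    ‖∑ n ∈ Ioc M N, c n * (((n:ℝ)^(-p) : ℝ) : ℂ)‖
      ≤ G * (p * (2 / min (p-α) 1) + 2) * (M:ℝ)^(α-p) := by
  have habel := stmt8_abel c (fun n => (((n:ℝ)^(-p) : ℝ) : ℂ)) M N hMN
  rw [habel]
  have hMpos : (0:ℝ) < (M:ℝ) := by exact_mod_cast hM
  have hNpos : (0:ℝ) < (N:ℝ) := by exact_mod_cast le_trans hM hMN
  have hterm : ∀ n ∈ Ioc M N,
      ‖(∑ m ∈ Icc 1 n, c m) * ((((n:ℝ)^(-p) : ℝ) : ℂ) - ((((n+1:ℕ):ℝ)^(-p) : ℝ) : ℂ))‖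
        ≤ G * p * (n:ℝ)^(-(p-α)-1) := by
    intro n hn
    have hn1 : 1 ≤ n := le_trans hM (Finset.mem_Ioc.mp hn).1.le
    have hn' : (0:ℝ) < (n:ℝ) := by exact_mod_cast hn1
    rw [norm_mul, stmt8_bnorm p hp n hn1]
    calc ‖∑ m ∈ Icc 1 n, c m‖ * ((n:ℝ)^(-p) - ((n:ℝ)+1)^(-p))
        ≤ (G * (n:ℝ)^α) * (p * (n:ℝ)^(-p-1)) :=
          mul_le_mul (hP n hn1) (stmt8_diff_upper p hp n hn1)
            (stmt8_diff_nonneg p hp n hn1) (by positivity)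
      _ = G * p * ((n:ℝ)^α * (n:ℝ)^(-p-1)) := by ring
      _ = G * p * (n:ℝ)^(-(p-α)-1) := by rw [← Real.rpow_add hn']; ring_nf
  have hsum1 : ‖∑ n ∈ Ioc M N,
      (∑ m ∈ Icc 1 n, c m) * ((((n:ℝ)^(-p) : ℝ) : ℂ) - ((((n+1:ℕ):ℝ)^(-p) : ℝ) : ℂ))‖
      ≤ G * p * ((2 / min (p-α) 1) * (M:ℝ)^(α-p)) := by
    have hexp : -(p-α) = α - p := by ring
    calc ‖∑ n ∈ Ioc M N,
        (∑ m ∈ Icc 1 n, c m) * ((((n:ℝ)^(-p) : ℝ) : ℂ) - ((((n+1:ℕ):ℝ)^(-p) : ℝ) : ℂ))‖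
        ≤ ∑ n ∈ Ioc M N,
          ‖(∑ m ∈ Icc 1 n, c m) * ((((n:ℝ)^(-p) : ℝ) : ℂ) - ((((n+1:ℕ):ℝ)^(-p) : ℝ) : ℂ))‖ :=
          norm_sum_le _ _
      _ ≤ ∑ n ∈ Ioc M N, G * p * (n:ℝ)^(-(p-α)-1) := Finset.sum_le_sum hterm
      _ = G * p * ∑ n ∈ Ioc M N, (n:ℝ)^(-(p-α)-1) := by rw [Finset.mul_sum]
      _ ≤ G * p * ((2 / min (p-α) 1) * (M:ℝ)^(-(p-α))) := by
          apply mul_le_mul_of_nonneg_left _ (by positivity)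
          exact stmt8_sum_tail (p-α) hαp M N hM
      _ = G * p * ((2 / min (p-α) 1) * (M:ℝ)^(α-p)) := by rw [hexp]
  have hbnd : ∀ L : ℕ, 1 ≤ L → M ≤ L →
      ‖(∑ m ∈ Icc 1 L, c m) * ((((L+1:ℕ):ℝ)^(-p) : ℝ) : ℂ)‖ ≤ G * (M:ℝ)^(α-p) := by
    intro L hL1 hML
    have hLpos : (0:ℝ) < (L:ℝ) := by exact_mod_cast hL1
    rw [norm_mul, Complex.norm_real, Real.norm_eq_abs,
      abs_of_nonneg (Real.rpow_nonneg (Nat.cast_nonneg _) _)]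
    have h1 : ((L+1:ℕ):ℝ)^(-p) ≤ (L:ℝ)^(-p) := by
      apply Real.rpow_le_rpow_of_nonpos hLpos _ (by linarith)
      push_cast; linarith
    have h2 : (L:ℝ)^(α-p) ≤ (M:ℝ)^(α-p) := by
      apply Real.rpow_le_rpow_of_nonpos hMpos (by exact_mod_cast hML) (by linarith)
    calc ‖∑ m ∈ Icc 1 L, c m‖ * ((L+1:ℕ):ℝ)^(-p)
        ≤ (G * (L:ℝ)^α) * (L:ℝ)^(-p) :=
          mul_le_mul (hP L hL1) h1 (Real.rpow_nonneg (Nat.cast_nonneg _) _) (by positivity)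
      _ = G * ((L:ℝ)^α * (L:ℝ)^(-p)) := by ring
      _ = G * (L:ℝ)^(α-p) := by rw [← Real.rpow_add hLpos]; ring_nf
      _ ≤ G * (M:ℝ)^(α-p) := mul_le_mul_of_nonneg_left h2 hG
  calc ‖∑ n ∈ Ioc M N,
        (∑ m ∈ Icc 1 n, c m) * ((((n:ℝ)^(-p) : ℝ) : ℂ) - ((((n+1:ℕ):ℝ)^(-p) : ℝ) : ℂ))
        + (∑ m ∈ Icc 1 N, c m) * ((((N+1:ℕ):ℝ)^(-p) : ℝ) : ℂ)
        - (∑ m ∈ Icc 1 M, c m) * ((((M+1:ℕ):ℝ)^(-p) : ℝ) : ℂ)‖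
      ≤ ‖∑ n ∈ Ioc M N,
          (∑ m ∈ Icc 1 n, c m) * ((((n:ℝ)^(-p) : ℝ) : ℂ) - ((((n+1:ℕ):ℝ)^(-p) : ℝ) : ℂ))
          + (∑ m ∈ Icc 1 N, c m) * ((((N+1:ℕ):ℝ)^(-p) : ℝ) : ℂ)‖
        + ‖(∑ m ∈ Icc 1 M, c m) * ((((M+1:ℕ):ℝ)^(-p) : ℝ) : ℂ)‖ := norm_sub_le _ _
    _ ≤ ‖∑ n ∈ Ioc M N,
          (∑ m ∈ Icc 1 n, c m) * ((((n:ℝ)^(-p) : ℝ) : ℂ) - ((((n+1:ℕ):ℝ)^(-p) : ℝ) : ℂ))‖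
        + ‖(∑ m ∈ Icc 1 N, c m) * ((((N+1:ℕ):ℝ)^(-p) : ℝ) : ℂ)‖
        + ‖(∑ m ∈ Icc 1 M, c m) * ((((M+1:ℕ):ℝ)^(-p) : ℝ) : ℂ)‖ := by
        apply add_le_add_left (norm_add_le _ _)
    _ ≤ G * p * ((2 / min (p-α) 1) * (M:ℝ)^(α-p)) + G * (M:ℝ)^(α-p) + G * (M:ℝ)^(α-p) := by
        apply add_le_add (add_le_add hsum1 (hbnd N (le_trans hM hMN) hMN)) (hbnd M hM le_rfl)
    _ = G * (p * (2 / min (p-α) 1) + 2) * (M:ℝ)^(α-p) := by ring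

lemma stmt8_deriv (a : ℂ) (t : ℝ) :
    HasDerivAt (fun u : ℝ => Complex.exp (a * (u:ℂ))) (a * Complex.exp (a * (t:ℂ))) t := by
  have h1 : HasDerivAt (fun z : ℂ => Complex.exp (a * z))
      (Complex.exp (a * (t:ℂ)) * (a * 1)) (t:ℂ) :=
    ((hasDerivAt_id ((t:ℝ):ℂ)).const_mul a).cexp
  have h2 := h1.comp_ofReal
  convert h2 using 1
  ring

/-- Lipschitz bound for the partial sums `A t N` in `t`. -/
lemma stmt8_lip (f : ℕ → ℂ) (k : ℕ) (hk : 1 ≤ k) (C α : ℝ) (hC : 0 < C) (hα : 0 < α)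
    (hA : ∀ (t : ℝ) (N : ℕ), 1 ≤ N →
      ‖∑ n ∈ Icc 1 N, f n * Complex.exp (2 * Real.pi * Complex.I * ((n:ℂ)^k) * (t:ℂ))‖
        ≤ C * (N:ℝ)^α)
    (N : ℕ) (hN : 1 ≤ N) (t s : ℝ) :
    ‖(∑ n ∈ Icc 1 N, f n * Complex.exp (2 * Real.pi * Complex.I * ((n:ℂ)^k) * (t:ℂ)))
      - (∑ n ∈ Icc 1 N, f n * Complex.exp (2 * Real.pi * Complex.I * ((n:ℂ)^k) * (s:ℂ)))‖
      ≤ (2 * Real.pi * (C * ((k:ℝ) * Real.exp k * ((2 / min (α+(k:ℝ)) 1) * 2^(α+(k:ℝ)))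
          + 2^(α+(k:ℝ))))) * (N:ℝ)^(α+(k:ℝ)) * |t - s| := by
  set Φ : ℝ := C * ((k:ℝ) * Real.exp k * ((2 / min (α+(k:ℝ)) 1) * 2^(α+(k:ℝ))) + 2^(α+(k:ℝ)))
    with hΦdef
  set g : ℝ → ℂ := fun u => ∑ n ∈ Icc 1 N, f n * Complex.exp (2 * Real.pi * Complex.I * ((n:ℂ)^k) * (u:ℂ))
    with hgdef
  set g' : ℝ → ℂ := fun u => ∑ n ∈ Icc 1 N,
      f n * ((2 * Real.pi * Complex.I * ((n:ℂ)^k)) * Complex.exp (2 * Real.pi * Complex.I * ((n:ℂ)^k) * (u:ℂ)))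
    with hg'def
  have hderiv : ∀ u : ℝ, HasDerivAt g (g' u) u := by
    intro u
    apply HasDerivAt.fun_sum
    intro n _
    exact (stmt8_deriv (2 * Real.pi * Complex.I * ((n:ℂ)^k)) u).const_mul (f n)
  have hbound : ∀ u : ℝ, ‖g' u‖ ≤ 2 * Real.pi * Φ * (N:ℝ)^(α+(k:ℝ)) := by
    intro u
    have hre : g' u = (2 * Real.pi * Complex.I)
        * ∑ n ∈ Icc 1 N, (f n * Complex.exp (2 * Real.pi * Complex.I * ((n:ℂ)^k) * (u:ℂ)))
            * ((n:ℂ)^k) := by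
      rw [hg'def, Finset.mul_sum]
      apply Finset.sum_congr rfl
      intro n _
      ring
    rw [hre, norm_mul]
    have hnI : ‖(2 * (Real.pi:ℂ) * Complex.I : ℂ)‖ = 2 * Real.pi := by
      simp [abs_of_nonneg Real.pi_nonneg]
    have habel := stmt8_abel_pow
      (fun n => f n * Complex.exp (2 * Real.pi * Complex.I * ((n:ℂ)^k) * (u:ℂ)))
      C α hC.le hα k hk (fun n hn => hA u n hn) N hN
    calc ‖(2 * (Real.pi:ℂ) * Complex.I : ℂ)‖
          * ‖∑ n ∈ Icc 1 N, (f n * Complex.exp (2 * Real.pi * Complex.I * ((n:ℂ)^k) * (u:ℂ)))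
              * ((n:ℂ)^k)‖
        ≤ (2 * Real.pi) * (Φ * (N:ℝ)^(α+(k:ℝ))) := by
          rw [hnI]
          apply mul_le_mul_of_nonneg_left _ (by positivity)
          exact le_trans habel (le_of_eq rfl)
      _ = 2 * Real.pi * Φ * (N:ℝ)^(α+(k:ℝ)) := by ring
  have := Convex.norm_image_sub_le_of_norm_hasDerivWithin_le
    (f := g) (f' := g') (s := Set.univ)
    (fun x _ => (hderiv x).hasDerivWithinAt)
    (fun x _ => hbound x) convex_univ (Set.mem_univ s) (Set.mem_univ t)
  calc ‖g t - g s‖ ≤ 2 * Real.pi * Φ * (N:ℝ)^(α+(k:ℝ)) * ‖t - s‖ := this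
    _ = 2 * Real.pi * Φ * (N:ℝ)^(α+(k:ℝ)) * |t - s| := by rw [Real.norm_eq_abs]

end Stmt8Aux

/-- If `|S_k(x,t)| ≤ C x^α` uniformly with `max(0, p−k) < α < p`, then the
Hausdorff dimension of the image `F_{k,p}([0,1]) ⊂ ℂ` is at most `k/(p−α)`. -/
theorem stmt_8 (f : ℕ → ℂ) (k : ℕ) (hk : 1 ≤ k) (p : ℝ) (hp : 0 < p)
    (C α : ℝ) (hC : 0 < C) (hα : max 0 (p - (k : ℝ)) < α) (hαp : α < p)
    (hS : ∀ x : ℝ, 1 ≤ x → ∀ t : ℝ,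
      ‖∑ n ∈ Finset.Icc 1 ⌊x⌋₊,
        f n * Complex.exp (2 * Real.pi * Complex.I * ((n : ℂ) ^ k) * (t : ℂ))‖ ≤ C * x ^ α)
    (F : ℝ → ℂ)
    (hF : ∀ t : ℝ, Tendsto (fun N : ℕ => ∑ n ∈ Finset.Icc 1 N,
        f n * Complex.exp (2 * Real.pi * Complex.I * ((n : ℂ) ^ k) * (t : ℂ))
          / (((n : ℝ) ^ p : ℝ) : ℂ))
      atTop (𝓝 (F t))) :
    dimH (F '' Set.Icc (0 : ℝ) 1) ≤ ENNReal.ofReal ((k : ℝ) / (p - α)) := by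
  -- basic positivity facts
  have hα0 : 0 < α := lt_of_le_of_lt (le_max_left _ _) hα
  have hpk : p - (k:ℝ) < α := lt_of_le_of_lt (le_max_right _ _) hα
  have hk' : (0:ℝ) < (k:ℝ) := by exact_mod_cast hk
  have hpα : 0 < p - α := by linarith
  have hγ : 0 < α + (k:ℝ) - p := by linarith
  have hmin1 : 0 < min (α+(k:ℝ)) 1 := lt_min (by linarith) one_pos
  have hmin2 : 0 < min (α+(k:ℝ)-p) 1 := lt_min hγ one_pos
  have hmin3 : 0 < min (p-α) 1 := lt_min hpα one_pos
  -- notation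
  set E : ℕ → ℝ → ℂ := fun n t =>
    Complex.exp (2 * Real.pi * Complex.I * ((n : ℂ) ^ k) * (t : ℂ)) with hE
  set Sp : ℝ → ℕ → ℂ := fun t N => ∑ n ∈ Finset.Icc 1 N,
    f n * E n t / (((n : ℝ) ^ p : ℝ) : ℂ) with hSp
  -- bound on exponential sums, with norms
  have hA : ∀ (t : ℝ) (N : ℕ), 1 ≤ N → ‖∑ n ∈ Icc 1 N, f n * E n t‖ ≤ C * (N:ℝ)^α := by
    intro t N hN
    have h1 : (1:ℝ) ≤ (N:ℝ) := by exact_mod_cast hN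
    have := hS (N:ℝ) h1 t
    rwa [Nat.floor_natCast] at this
  -- constants
  set c₁ : ℝ := 2 * Real.pi * (C * ((k:ℝ) * Real.exp k * ((2 / min (α+(k:ℝ)) 1) * 2^(α+(k:ℝ)))
      + 2^(α+(k:ℝ)))) with hc₁
  have hc₁pos : 0 < c₁ := by
    apply mul_pos (by positivity)
    apply mul_pos hC
    apply add_pos _ (Real.rpow_pos_of_pos two_pos _)
    apply mul_pos (mul_pos hk' (Real.exp_pos _))
    exact mul_pos (div_pos two_pos hmin1) (Real.rpow_pos_of_pos two_pos _)
  set c₂ : ℝ := c₁ * (p * ((2 / min (α+(k:ℝ)-p) 1) * 2^(α+(k:ℝ)-p)) + 1) with hc₂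
  have hc₂pos : 0 < c₂ := by
    apply mul_pos hc₁pos
    have : 0 < p * ((2 / min (α+(k:ℝ)-p) 1) * 2^(α+(k:ℝ)-p)) :=
      mul_pos hp (mul_pos (div_pos two_pos hmin2) (Real.rpow_pos_of_pos two_pos _))
    linarith
  set c₃ : ℝ := C * (p * (2 / min (p-α) 1) + 2) with hc₃
  have hc₃pos : 0 < c₃ := by
    apply mul_pos hC
    have : 0 < p * (2 / min (p-α) 1) := mul_pos hp (div_pos two_pos hmin3)
    linarith
  -- conversion of the summand
  have hconv : ∀ (t : ℝ) (n : ℕ), 1 ≤ n →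
      f n * E n t / (((n : ℝ) ^ p : ℝ) : ℂ) = (f n * E n t) * (((n:ℝ)^(-p) : ℝ) : ℂ) := by
    intro t n hn
    have hnpos : (0:ℝ) < (n:ℝ) := by exact_mod_cast hn
    rw [Real.rpow_neg hnpos.le, Complex.ofReal_inv, div_eq_mul_inv]
  -- head difference bound
  have hHead : ∀ (N : ℕ), 1 ≤ N → ∀ t s : ℝ,
      ‖Sp t N - Sp s N‖ ≤ c₂ * |t - s| * (N:ℝ)^(α+(k:ℝ)-p) := by
    intro N hN t s
    have hrw : Sp t N - Sp s N
        = ∑ n ∈ Icc 1 N, (f n * E n t - f n * E n s) * (((n:ℝ)^(-p) : ℝ) : ℂ) := by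
      rw [hSp]
      rw [← Finset.sum_sub_distrib]
      apply Finset.sum_congr rfl
      intro n hn
      have hn1 : 1 ≤ n := (Finset.mem_Icc.mp hn).1
      rw [hconv t n hn1, hconv s n hn1, sub_mul]
    rw [hrw]
    have hP : ∀ n : ℕ, 1 ≤ n → ‖∑ m ∈ Icc 1 n, (f m * E m t - f m * E m s)‖
        ≤ (c₁ * |t - s|) * (n:ℝ)^(α+(k:ℝ)) := by
      intro n hn
      rw [Finset.sum_sub_distrib]
      calc ‖(∑ m ∈ Icc 1 n, f m * E m t) - (∑ m ∈ Icc 1 n, f m * E m s)‖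
          ≤ c₁ * (n:ℝ)^(α+(k:ℝ)) * |t - s| :=
            stmt8_lip f k hk C α hC hα0 hA n hn t s
        _ = (c₁ * |t - s|) * (n:ℝ)^(α+(k:ℝ)) := by ring
    have := stmt8_abel_decr (fun n => f n * E n t - f n * E n s)
      (c₁ * |t - s|) (α+(k:ℝ)) p (by positivity) hp hγ hP N hN
    calc ‖∑ n ∈ Icc 1 N, (f n * E n t - f n * E n s) * (((n:ℝ)^(-p) : ℝ) : ℂ)‖
        ≤ (c₁ * |t - s|) * (p * ((2 / min (α+(k:ℝ)-p) 1) * 2^(α+(k:ℝ)-p)) + 1)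
            * (N:ℝ)^(α+(k:ℝ)-p) := this
      _ = c₂ * |t - s| * (N:ℝ)^(α+(k:ℝ)-p) := by rw [hc₂]; try ring
  -- tail bound
  have hTail : ∀ (t : ℝ) (M : ℕ), 1 ≤ M → ‖F t - Sp t M‖ ≤ c₃ * (M:ℝ)^(α-p) := by
    intro t M hM
    have hpart : ∀ N : ℕ, M ≤ N → ‖Sp t N - Sp t M‖ ≤ c₃ * (M:ℝ)^(α-p) := by
      intro N hMN
      have hsplit : Sp t N - Sp t M
          = ∑ n ∈ Ioc M N, (f n * E n t) * (((n:ℝ)^(-p) : ℝ) : ℂ) := by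
        have h1 : ∀ L : ℕ, Sp t L = ∑ n ∈ Ioc 0 L, f n * E n t / (((n : ℝ) ^ p : ℝ) : ℂ) := by
          intro L
          rw [hSp]
          congr 1
        rw [h1 N, h1 M, ← Finset.sum_Ioc_consecutive _ (Nat.zero_le M) hMN]
        rw [add_sub_cancel_left]
        apply Finset.sum_congr rfl
        intro n hn
        have hn1 : 1 ≤ n := le_trans hM (Finset.mem_Ioc.mp hn).1.le
        exact hconv t n hn1
      rw [hsplit]
      exact stmt8_abel_tail (fun n => f n * E n t) C α p hC.le hp hpα hα0
        (fun n hn => hA t n hn) M N hM hMN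
    have hlim : Tendsto (fun N : ℕ => Sp t N - Sp t M) atTop (𝓝 (F t - Sp t M)) :=
      (hF t).sub tendsto_const_nhds
    have hlimnorm : Tendsto (fun N : ℕ => ‖Sp t N - Sp t M‖) atTop (𝓝 ‖F t - Sp t M‖) :=
      hlim.norm
    apply le_of_tendsto hlimnorm
    filter_upwards [eventually_ge_atTop M] with N hN
    exact hpart N hN
  -- Hölder continuity
  set c₄ : ℝ := 2 * c₃ + c₂ * 2^(α+(k:ℝ)-p) with hc₄
  have hc₄pos : 0 < c₄ := by
    have := Real.rpow_pos_of_pos (two_pos (α := ℝ)) (α+(k:ℝ)-p)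
    nlinarith
  have hHolder : ∀ t ∈ Set.Icc (0:ℝ) 1, ∀ s ∈ Set.Icc (0:ℝ) 1,
      ‖F t - F s‖ ≤ c₄ * |t - s| ^ ((p-α)/(k:ℝ)) := by
    intro t ht s hs
    rcases eq_or_ne t s with rfl | hne
    · simp only [sub_self, abs_zero, norm_zero]
      rw [Real.zero_rpow (by positivity : (p-α)/(k:ℝ) ≠ 0)]
      simp
    · set δ : ℝ := |t - s| with hδ
      have hδpos : 0 < δ := abs_pos.mpr (sub_ne_zero.mpr hne)
      have hδ1 : δ ≤ 1 := by
        rw [hδ, abs_sub_le_iff]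
        constructor <;> [skip; skip] <;>
          · obtain ⟨h1, h2⟩ := ht; obtain ⟨h3, h4⟩ := hs; linarith
      set y : ℝ := δ ^ (-1/(k:ℝ)) with hy
      have hy1 : 1 ≤ y := by
        rw [hy]
        apply Real.one_le_rpow_of_pos_of_le_one_of_nonpos hδpos hδ1
        rw [neg_div]
        exact neg_nonpos.mpr (by positivity)
      have hypos : 0 < y := by linarith
      set N : ℕ := ⌈y⌉₊ with hNdef
      have hN1 : 1 ≤ N := by
        rw [hNdef]
        exact_mod_cast Nat.ceil_pos.mpr hypos
      have hNlow : y ≤ (N:ℝ) := Nat.le_ceil y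
      have hNup : (N:ℝ) ≤ 2 * y := by
        have := Nat.ceil_lt_add_one hypos.le
        rw [hNdef]
        linarith
      have hNpos : (0:ℝ) < (N:ℝ) := by exact_mod_cast hN1
      -- exponent computations
      have hexp1 : y ^ (α - p) = δ ^ ((p-α)/(k:ℝ)) := by
        rw [hy, ← Real.rpow_mul hδpos.le]
        congr 1
        field_simp
        ring
      have hexp2 : δ * y ^ (α+(k:ℝ)-p) = δ ^ ((p-α)/(k:ℝ)) := by
        rw [hy, ← Real.rpow_mul hδpos.le]
        nth_rewrite 1 [← Real.rpow_one δ]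
        rw [← Real.rpow_add hδpos]
        congr 1
        field_simp
        ring
      -- three pieces
      have h1 : ‖F t - Sp t N‖ ≤ c₃ * δ ^ ((p-α)/(k:ℝ)) := by
        calc ‖F t - Sp t N‖ ≤ c₃ * (N:ℝ)^(α-p) := hTail t N hN1
          _ ≤ c₃ * y^(α-p) := by
              apply mul_le_mul_of_nonneg_left _ hc₃pos.le
              exact Real.rpow_le_rpow_of_nonpos hypos hNlow (by linarith)
          _ = c₃ * δ ^ ((p-α)/(k:ℝ)) := by rw [hexp1]
      have h3 : ‖Sp s N - F s‖ ≤ c₃ * δ ^ ((p-α)/(k:ℝ)) := by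
        rw [norm_sub_rev]
        calc ‖F s - Sp s N‖ ≤ c₃ * (N:ℝ)^(α-p) := hTail s N hN1
          _ ≤ c₃ * y^(α-p) := by
              apply mul_le_mul_of_nonneg_left _ hc₃pos.le
              exact Real.rpow_le_rpow_of_nonpos hypos hNlow (by linarith)
          _ = c₃ * δ ^ ((p-α)/(k:ℝ)) := by rw [hexp1]
      have h2 : ‖Sp t N - Sp s N‖ ≤ c₂ * 2^(α+(k:ℝ)-p) * δ ^ ((p-α)/(k:ℝ)) := by
        calc ‖Sp t N - Sp s N‖ ≤ c₂ * δ * (N:ℝ)^(α+(k:ℝ)-p) := hHead N hN1 t s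
          _ ≤ c₂ * δ * (2*y)^(α+(k:ℝ)-p) := by
              apply mul_le_mul_of_nonneg_left _ (by positivity)
              exact Real.rpow_le_rpow hNpos.le hNup hγ.le
          _ = c₂ * 2^(α+(k:ℝ)-p) * (δ * y^(α+(k:ℝ)-p)) := by
              rw [Real.mul_rpow (by norm_num) hypos.le]
              ring
          _ = c₂ * 2^(α+(k:ℝ)-p) * δ ^ ((p-α)/(k:ℝ)) := by rw [hexp2]
      calc ‖F t - F s‖ = ‖(F t - Sp t N) + (Sp t N - Sp s N) + (Sp s N - F s)‖ := by
            congr 1; ring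
        _ ≤ ‖(F t - Sp t N) + (Sp t N - Sp s N)‖ + ‖Sp s N - F s‖ := norm_add_le _ _
        _ ≤ ‖F t - Sp t N‖ + ‖Sp t N - Sp s N‖ + ‖Sp s N - F s‖ := by
            apply add_le_add_left (norm_add_le _ _)
        _ ≤ c₃ * δ ^ ((p-α)/(k:ℝ)) + c₂ * 2^(α+(k:ℝ)-p) * δ ^ ((p-α)/(k:ℝ))
              + c₃ * δ ^ ((p-α)/(k:ℝ)) := add_le_add (add_le_add h1 h2) h3
        _ = c₄ * δ ^ ((p-α)/(k:ℝ)) := by rw [hc₄]; ring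
  -- Hölder ⇒ dimension bound
  have hrpos : 0 < (p-α)/(k:ℝ) := by positivity
  set r : NNReal := Real.toNNReal ((p-α)/(k:ℝ)) with hr
  have hr0 : 0 < r := Real.toNNReal_pos.mpr hrpos
  set K : NNReal := Real.toNNReal c₄ with hK
  have hHolderOn : HolderOnWith K r F (Set.Icc (0:ℝ) 1) := by
    intro x hx y hy
    rw [edist_dist, edist_dist, dist_eq_norm, Real.dist_eq]
    have hcoe : ((r:ℝ≥0) : ℝ) = (p-α)/(k:ℝ) := Real.coe_toNNReal _ hrpos.le
    have hKcoe : ((K:ℝ≥0):ℝ≥0∞) = ENNReal.ofReal c₄ := rfl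
    rw [hKcoe, ENNReal.ofReal_rpow_of_nonneg (abs_nonneg _) (by rw [hcoe]; exact hrpos.le),
      ← ENNReal.ofReal_mul hc₄pos.le]
    apply ENNReal.ofReal_le_ofReal
    rw [hcoe]
    exact hHolder x hx y hy
  have hdim := hHolderOn.dimH_image_le hr0
  refine le_trans hdim ?_
  have hIccdim : dimH (Set.Icc (0:ℝ) 1) ≤ 1 := by
    calc dimH (Set.Icc (0:ℝ) 1) ≤ dimH (Set.univ : Set ℝ) := dimH_mono (Set.subset_univ _)
      _ = 1 := Real.dimH_univ
  calc dimH (Set.Icc (0:ℝ) 1) / (r:ℝ≥0∞) ≤ 1 / (r:ℝ≥0∞) :=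
        ENNReal.div_le_div_right hIccdim _
    _ = (r:ℝ≥0∞)⁻¹ := one_div _
    _ = (ENNReal.ofReal ((p-α)/(k:ℝ)))⁻¹ := rfl
    _ = ENNReal.ofReal (((p-α)/(k:ℝ))⁻¹) := (ENNReal.ofReal_inv_of_pos hrpos).symm
    _ = ENNReal.ofReal ((k:ℝ)/(p-α)) := by rw [inv_div]
end

section
/- Let f : ℕ → ℂ be an arithmetic function, k a positive integer, and p > 0 a real number. Suppose there exist constants C > 0 and α with max(0, p−k) < α < p such that |S_k(x,t)| ≤ C·x^α for all real x ≥ 1 and all t ∈ ℝ. Then for all real x ≥ 1 and all t ∈ ℝ, the twisted sum satisfies |Σ_{1 ≤ m ≤ x^{1/k}} m^{k−p} f(m) e^{2πi m^k t}| ≤ C̃·x^{(α+k−p)/k}, where C̃ = C·(1 + |k−p|/(α+k−p)). -/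
open Filter Finset Topology intervalIntegral

lemma key_ineq (α γ a b : ℝ) (hα : 0 < α) (hβ : 0 < γ + α) (ha : 1 ≤ a) (hab : a ≤ b) :
    |b ^ γ - a ^ γ| * a ^ α ≤ |γ| / (γ + α) * (b ^ (γ + α) - a ^ (γ + α)) := by
  rcases eq_or_ne γ 0 with hγ | hγ
  · simp [hγ]
  have h0a : (0:ℝ) < a := lt_of_lt_of_le one_pos ha
  have h0mem : (0:ℝ) ∉ Set.uIcc a b := by
    rw [Set.uIcc_of_le hab]
    rintro ⟨h1, h2⟩; linarith
  have hI1 : (∫ u in a..b, u ^ (γ - 1)) = (b ^ γ - a ^ γ) / γ := by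
    rw [integral_rpow (Or.inr ⟨by intro h; apply hγ; linarith [sub_eq_iff_eq_add.mp h], h0mem⟩)]
    norm_num
  have hI2 : (∫ u in a..b, u ^ (γ + α - 1)) = (b ^ (γ + α) - a ^ (γ + α)) / (γ + α) := by
    rw [integral_rpow (Or.inl (by linarith))]
    norm_num
  have hint1 : IntervalIntegrable (fun u : ℝ => u ^ (γ - 1)) MeasureTheory.volume a b :=
    intervalIntegrable_rpow (Or.inr h0mem)
  have hint2 : IntervalIntegrable (fun u : ℝ => u ^ (γ - 1) * a ^ α) MeasureTheory.volume a b :=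
    hint1.mul_const _
  have hint3 : IntervalIntegrable (fun u : ℝ => u ^ (γ + α - 1)) MeasureTheory.volume a b :=
    intervalIntegrable_rpow (Or.inr h0mem)
  have hmono : (∫ u in a..b, u ^ (γ - 1) * a ^ α) ≤ ∫ u in a..b, u ^ (γ + α - 1) := by
    refine integral_mono_on hab hint2 hint3 (fun u hu => ?_)
    have hu0 : (0:ℝ) < u := lt_of_lt_of_le h0a hu.1
    have : u ^ (γ - 1) * a ^ α ≤ u ^ (γ - 1) * u ^ α :=
      mul_le_mul_of_nonneg_left (Real.rpow_le_rpow h0a.le hu.1 hα.le) (Real.rpow_nonneg hu0.le _)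
    refine this.trans_eq ?_
    rw [← Real.rpow_add hu0]; ring_nf
  have hnonneg : (0:ℝ) ≤ ∫ u in a..b, u ^ (γ - 1) := by
    refine integral_nonneg hab (fun u hu => ?_)
    exact Real.rpow_nonneg (le_trans h0a.le hu.1) _
  have habs : |b ^ γ - a ^ γ| = |γ| * ∫ u in a..b, u ^ (γ - 1) := by
    have : |(b ^ γ - a ^ γ) / γ| = ∫ u in a..b, u ^ (γ - 1) := by
      rw [← hI1]; exact abs_of_nonneg hnonneg
    calc |b ^ γ - a ^ γ| = |γ| * |(b ^ γ - a ^ γ) / γ| := by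
          rw [← abs_mul]; congr 1; field_simp
      _ = |γ| * ∫ u in a..b, u ^ (γ - 1) := by rw [this]
  calc |b ^ γ - a ^ γ| * a ^ α = |γ| * ((∫ u in a..b, u ^ (γ - 1)) * a ^ α) := by
        rw [habs]; ring
    _ = |γ| * ∫ u in a..b, u ^ (γ - 1) * a ^ α := by rw [integral_mul_const]
    _ ≤ |γ| * ∫ u in a..b, u ^ (γ + α - 1) := by
        exact mul_le_mul_of_nonneg_left hmono (abs_nonneg _)
    _ = |γ| / (γ + α) * (b ^ (γ + α) - a ^ (γ + α)) := by rw [hI2]; field_simp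

/-- If `|S_k(x,t)| ≤ C x^α` uniformly with `max(0, p−k) < α < p`, then the
twisted sums satisfy `|∑_{1 ≤ m ≤ x^{1/k}} m^{k−p} f(m) e^{2πi m^k t}| ≤ C̃ x^{(α+k−p)/k}`
with `C̃ = C (1 + |k−p|/(α+k−p))`. -/
theorem stmt_9 (f : ℕ → ℂ) (k : ℕ) (hk : 1 ≤ k) (p : ℝ) (hp : 0 < p)
    (C α : ℝ) (hC : 0 < C) (hα : max 0 (p - (k : ℝ)) < α) (hαp : α < p)
    (hS : ∀ x : ℝ, 1 ≤ x → ∀ t : ℝ,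
      ‖∑ n ∈ Finset.Icc 1 ⌊x⌋₊,
        f n * Complex.exp (2 * Real.pi * Complex.I * ((n : ℂ) ^ k) * (t : ℂ))‖ ≤ C * x ^ α) :
    ∀ x : ℝ, 1 ≤ x → ∀ t : ℝ,
      ‖∑ m ∈ Finset.Icc 1 ⌊x ^ ((1 : ℝ) / k)⌋₊,
          (((m : ℝ) ^ ((k : ℝ) - p) : ℝ) : ℂ) * f m *
            Complex.exp (2 * Real.pi * Complex.I * ((m : ℂ) ^ k) * (t : ℂ))‖
        ≤ C * (1 + |(k : ℝ) - p| / (α + k - p)) * x ^ ((α + k - p) / k) := by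
  intro x hx t
  have hα0 : 0 < α := lt_of_le_of_lt (le_max_left 0 _) hα
  have hβ0 : 0 < α + (k : ℝ) - p := by
    have := lt_of_le_of_lt (le_max_right 0 (p - (k:ℝ))) hα; linarith
  set γ : ℝ := (k : ℝ) - p with hγdef
  set β : ℝ := α + (k : ℝ) - p with hβdef
  have hβγ : β = γ + α := by rw [hβdef, hγdef]; ring
  set a : ℕ → ℂ := fun m => f m * Complex.exp (2 * Real.pi * Complex.I * ((m:ℂ) ^ k) * (t:ℂ))
    with ha
  set w : ℕ → ℂ := fun m => (((m : ℝ) ^ γ : ℝ) : ℂ) with hw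
  set y : ℝ := x ^ ((1:ℝ)/k) with hy
  have hx0 : (0:ℝ) < x := lt_of_lt_of_le one_pos hx
  have hy1 : 1 ≤ y := by
    rw [hy]
    calc (1:ℝ) = (1:ℝ) ^ ((1:ℝ)/k) := (Real.one_rpow _).symm
      _ ≤ x ^ ((1:ℝ)/k) := Real.rpow_le_rpow zero_le_one hx (by positivity)
  set N : ℕ := ⌊y⌋₊ with hNdef
  have hN1 : 1 ≤ N := Nat.le_floor (by exact_mod_cast hy1)
  have hNR : (1:ℝ) ≤ (N:ℝ) := by exact_mod_cast hN1
  have hNy : (N:ℝ) ≤ y := Nat.floor_le (by linarith)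
  -- partial sums bound
  have hSn : ∀ n : ℕ, 1 ≤ n → ‖∑ m ∈ Finset.Icc 1 n, a m‖ ≤ C * (n:ℝ) ^ α := by
    intro n hn
    have := hS (n : ℝ) (by exact_mod_cast hn) t
    simpa using this
  -- Abel summation
  have habel : ∑ m ∈ Finset.Icc 1 N, w m * a m
      = w N * (∑ m ∈ Finset.Icc 1 N, a m)
        - ∑ i ∈ Finset.range (N - 1),
            (w (i + 2) - w (i + 1)) * (∑ m ∈ Finset.Icc 1 (i + 1), a m) := by
    have hIcc : ∀ (g : ℕ → ℂ) (n : ℕ), ∑ m ∈ Finset.Icc 1 n, g m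
        = ∑ i ∈ Finset.range n, g (i + 1) := by
      intro g n
      rw [← Finset.Ico_add_one_right_eq_Icc, Finset.sum_Ico_eq_sum_range]
      simp [add_comm]
    have := Finset.sum_range_by_parts (fun i => w (i + 1)) (fun i => a (i + 1)) N
    simp only [smul_eq_mul] at this
    rw [hIcc (fun m => w m * a m) N, this, Nat.sub_add_cancel hN1]
    congr 1
    · rw [hIcc a N]
    · refine Finset.sum_congr rfl (fun i _ => ?_)
      rw [hIcc a (i + 1)]
  have hrw : (∑ m ∈ Finset.Icc 1 N, (((m : ℝ) ^ γ : ℝ) : ℂ) * f m *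
        Complex.exp (2 * Real.pi * Complex.I * ((m:ℂ) ^ k) * (t:ℂ)))
      = ∑ m ∈ Finset.Icc 1 N, w m * a m :=
    Finset.sum_congr rfl (fun m _ => by rw [hw, ha]; ring)
  rw [hrw, habel]
  -- bound the two pieces
  have hterm1 : ‖w N * (∑ m ∈ Finset.Icc 1 N, a m)‖ ≤ C * (N:ℝ) ^ β := by
    rw [norm_mul]
    have h1 : ‖w N‖ = (N:ℝ) ^ γ := by
      rw [hw]; simp only [Complex.norm_real, Real.norm_eq_abs]
      exact abs_of_nonneg (by positivity)
    rw [h1]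
    calc (N:ℝ) ^ γ * ‖∑ m ∈ Finset.Icc 1 N, a m‖
        ≤ (N:ℝ) ^ γ * (C * (N:ℝ) ^ α) := by
          exact mul_le_mul_of_nonneg_left (hSn N hN1) (Real.rpow_nonneg (by positivity) γ)
      _ = C * (N:ℝ) ^ β := by
          rw [hβγ, Real.rpow_add (by linarith : (0:ℝ) < (N:ℝ))]; ring
  have hterm2 : ‖∑ i ∈ Finset.range (N - 1),
      (w (i + 2) - w (i + 1)) * (∑ m ∈ Finset.Icc 1 (i + 1), a m)‖
      ≤ C * (|γ| / β) * (N:ℝ) ^ β := by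
    calc ‖∑ i ∈ Finset.range (N - 1),
          (w (i + 2) - w (i + 1)) * (∑ m ∈ Finset.Icc 1 (i + 1), a m)‖
        ≤ ∑ i ∈ Finset.range (N - 1), ‖(w (i + 2) - w (i + 1)) * (∑ m ∈ Finset.Icc 1 (i + 1), a m)‖ := by
          exact norm_sum_le _ _
      _ ≤ ∑ i ∈ Finset.range (N - 1),
            C * (|γ| / β * (((i:ℝ) + 2) ^ β - ((i:ℝ) + 1) ^ β)) := by
          refine Finset.sum_le_sum (fun i _ => ?_)
          rw [norm_mul]
          have hwd : ‖w (i + 2) - w (i + 1)‖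
              = |((i:ℝ) + 2) ^ γ - ((i:ℝ) + 1) ^ γ| := by
            rw [hw]
            push_cast
            rw [← Complex.ofReal_sub, Complex.norm_real, Real.norm_eq_abs]
          rw [hwd]
          calc |((i:ℝ) + 2) ^ γ - ((i:ℝ) + 1) ^ γ|
                * ‖∑ m ∈ Finset.Icc 1 (i + 1), a m‖
              ≤ |((i:ℝ) + 2) ^ γ - ((i:ℝ) + 1) ^ γ| * (C * ((i:ℝ) + 1) ^ α) := by
                refine mul_le_mul_of_nonneg_left ?_ (abs_nonneg _)
                have := hSn (i + 1) (by omega)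
                push_cast at this ⊢
                exact this
            _ = C * (|((i:ℝ) + 2) ^ γ - ((i:ℝ) + 1) ^ γ| * ((i:ℝ) + 1) ^ α) := by ring
            _ ≤ C * (|γ| / β * (((i:ℝ) + 2) ^ β - ((i:ℝ) + 1) ^ β)) := by
                refine mul_le_mul_of_nonneg_left ?_ hC.le
                have := key_ineq α γ ((i:ℝ) + 1) ((i:ℝ) + 2) hα0 (by rw [← hβγ]; exact hβ0)
                  (by linarith [(Nat.cast_nonneg i : (0:ℝ) ≤ (i:ℝ))]) (by linarith [(Nat.cast_nonneg i : (0:ℝ) ≤ (i:ℝ))])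
                rw [hβγ]
                exact this
      _ = C * (|γ| / β) * ∑ i ∈ Finset.range (N - 1),
            (((i:ℝ) + 2) ^ β - ((i:ℝ) + 1) ^ β) := by
          rw [Finset.mul_sum]
          refine Finset.sum_congr rfl (fun i _ => ?_)
          ring
      _ ≤ C * (|γ| / β) * (N:ℝ) ^ β := by
          refine mul_le_mul_of_nonneg_left ?_ (by positivity)
          have htel : ∑ i ∈ Finset.range (N - 1), (((i:ℝ) + 2) ^ β - ((i:ℝ) + 1) ^ β)
              = ((N:ℝ)) ^ β - 1 := by
            have h := Finset.sum_range_sub (fun i => (((i + 1 : ℕ)):ℝ) ^ β) (N - 1)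
            rw [Nat.sub_add_cancel hN1] at h
            calc ∑ i ∈ Finset.range (N - 1), (((i:ℝ) + 2) ^ β - ((i:ℝ) + 1) ^ β)
                = ∑ i ∈ Finset.range (N - 1),
                    ((((i + 1 + 1 : ℕ)):ℝ) ^ β - (((i + 1 : ℕ)):ℝ) ^ β) := by
                  refine Finset.sum_congr rfl (fun i _ => ?_)
                  push_cast; ring_nf
              _ = ((N:ℝ)) ^ β - (((0 + 1 : ℕ)):ℝ) ^ β := h
              _ = ((N:ℝ)) ^ β - 1 := by norm_num
          rw [htel]
          have hNpow : (0:ℝ) < (N:ℝ) ^ β := Real.rpow_pos_of_pos (by linarith) β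
          linarith
  have hNxb : ((N:ℝ)) ^ β ≤ x ^ (β / k) := by
    have h1 : ((N:ℝ)) ^ β ≤ y ^ β := Real.rpow_le_rpow (by positivity) hNy hβ0.le
    have h2 : y ^ β = x ^ (β / k) := by
      rw [hy, ← Real.rpow_mul hx0.le]
      congr 1
      have hk0 : (k:ℝ) ≠ 0 := by
        have : (1:ℝ) ≤ (k:ℝ) := by exact_mod_cast hk
        linarith
      field_simp
    exact h1.trans_eq h2
  calc ‖w N * (∑ m ∈ Finset.Icc 1 N, a m)
        - ∑ i ∈ Finset.range (N - 1),
            (w (i + 2) - w (i + 1)) * (∑ m ∈ Finset.Icc 1 (i + 1), a m)‖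
      ≤ ‖w N * (∑ m ∈ Finset.Icc 1 N, a m)‖
        + ‖∑ i ∈ Finset.range (N - 1),
            (w (i + 2) - w (i + 1)) * (∑ m ∈ Finset.Icc 1 (i + 1), a m)‖ := by
        exact norm_sub_le _ _
    _ ≤ C * (N:ℝ) ^ β + C * (|γ| / β) * (N:ℝ) ^ β := add_le_add hterm1 hterm2
    _ = C * (1 + |γ| / β) * (N:ℝ) ^ β := by ring
    _ ≤ C * (1 + |γ| / β) * x ^ (β / k) := by
        refine mul_le_mul_of_nonneg_left hNxb (by positivity)
end

section
/- Let a be a real number with 0 < a < 1, let b be an integer with b > 1/a, and let f : ℕ → ℂ be a bounded function. Then the series W_{a,b}(f;t) = Σ_{k=1}^∞ f(k)·a^k·e^{2πi b^k t} converges for every t ∈ ℝ, and W_{a,b}(f;·) is Hölder continuous with exponent −log a/log b: there exists a constant C₁ > 0 such that |W_{a,b}(f;s) − W_{a,b}(f;t)| ≤ C₁·|s−t|^{−log a/log b} for all s, t ∈ ℝ. Moreover, the same Hölder estimate holds for the real-valued functions t ↦ |W_{a,b}(f;t)|, t ↦ Re W_{a,b}(f;t), and t ↦ Im W_{a,b}(f;t).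 -/
open Filter Finset Topology

private lemma exp_I_diff_le (u v : ℝ) :
    ‖Complex.exp (u * Complex.I) - Complex.exp (v * Complex.I)‖
      ≤ min 2 (2 * |u - v|) := by
  have h1 : Complex.exp (u * Complex.I) - Complex.exp (v * Complex.I)
      = Complex.exp (v * Complex.I) * (Complex.exp (((u - v : ℝ) : ℂ) * Complex.I) - 1) := by
    rw [mul_sub, mul_one, ← Complex.exp_add]
    push_cast; ring_nf
  have habs : ‖((u - v : ℝ) : ℂ) * Complex.I‖ = |u - v| := by
    rw [norm_mul, Complex.norm_I, mul_one, Complex.norm_real, Real.norm_eq_abs]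
  have h2 : ‖Complex.exp (((u - v : ℝ) : ℂ) * Complex.I) - 1‖ ≤ 2 := by
    calc ‖Complex.exp (((u - v : ℝ) : ℂ) * Complex.I) - 1‖
        ≤ ‖Complex.exp (((u - v : ℝ) : ℂ) * Complex.I)‖ + ‖(1 : ℂ)‖ :=
          norm_sub_le _ _
      _ = 2 := by rw [Complex.norm_exp_ofReal_mul_I]; norm_num
  rw [h1, norm_mul, Complex.norm_exp_ofReal_mul_I, one_mul]
  rcases le_or_gt |u - v| 1 with h | h
  · refine le_min h2 ?_
    have := Complex.norm_exp_sub_one_le (x := ((u - v : ℝ) : ℂ) * Complex.I) (by rw [habs]; exact h)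
    rwa [habs] at this
  · exact le_min h2 (h2.trans (by linarith))

private lemma sum_Icc_one (g : ℕ → ℂ) (N : ℕ) :
    ∑ k ∈ Finset.Icc 1 N, g k = ∑ k ∈ Finset.range N, g (k + 1) := by
  induction N with
  | zero => simp
  | succ n ih =>
      rw [Finset.sum_Icc_succ_top (Nat.succ_le_succ (Nat.zero_le n)), ih, Finset.sum_range_succ]

set_option maxHeartbeats 1000000 in
/-- For `0 < a < 1`, an integer `b > 1/a`, and bounded `f : ℕ → ℂ`, the
generalized Weierstrass series `W_{a,b}(f;t) = ∑_{k≥1} f(k) a^k e^{2πi b^k t}` converges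
and is Hölder continuous with exponent `−log a / log b`, and likewise for its absolute
value, real part, and imaginary part. -/
theorem stmt_10 (a : ℝ) (ha0 : 0 < a) (ha1 : a < 1) (b : ℤ) (hb : 1 / a < (b : ℝ))
    (f : ℕ → ℂ) (B : ℝ) (hf : ∀ k : ℕ, ‖f k‖ ≤ B) :
    ∃ W : ℝ → ℂ,
      (∀ t : ℝ, Tendsto (fun N : ℕ => ∑ k ∈ Finset.Icc 1 N,
          f k * (a : ℂ) ^ k * Complex.exp (2 * Real.pi * Complex.I * ((b : ℂ) ^ k) * (t : ℂ)))
        atTop (𝓝 (W t))) ∧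
      ∃ C₁ : ℝ, 0 < C₁ ∧
        (∀ s t : ℝ, ‖W s - W t‖
            ≤ C₁ * |s - t| ^ (-Real.log a / Real.log b)) ∧
        (∀ s t : ℝ, |‖W s‖ - ‖W t‖|
            ≤ C₁ * |s - t| ^ (-Real.log a / Real.log b)) ∧
        (∀ s t : ℝ, |(W s).re - (W t).re|
            ≤ C₁ * |s - t| ^ (-Real.log a / Real.log b)) ∧
        (∀ s t : ℝ, |(W s).im - (W t).im|
            ≤ C₁ * |s - t| ^ (-Real.log a / Real.log b)) := by
  have hB0 : 0 ≤ B := (norm_nonneg (f 0)).trans (hf 0)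
  have hπ : 0 < Real.pi := Real.pi_pos
  have hia : 1 < 1 / a := by rw [lt_div_iff₀ ha0]; linarith
  have hb1 : (1 : ℝ) < (b : ℝ) := lt_trans hia hb
  have hb0 : (0 : ℝ) < (b : ℝ) := by linarith
  have hab : 1 < a * b := by rw [mul_comm]; exact (div_lt_iff₀ ha0).mp hb
  have hD : (0 : ℝ) < a * b - 1 := by linarith
  have h1a : (0 : ℝ) < 1 - a := by linarith
  set α : ℝ := -Real.log a / Real.log b with hα
  have hlogb : 0 < Real.log b := Real.log_pos hb1
  have hloga : Real.log a < 0 := Real.log_neg ha0 ha1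
  have hα0 : 0 < α := div_pos (by linarith) hlogb
  have hba : (b : ℝ) ^ (-α) = a := by
    rw [Real.rpow_def_of_pos hb0]
    have hmm : Real.log b * -α = Real.log a := by
      rw [hα]; field_simp
    rw [hmm, Real.exp_log ha0]
  -- the terms
  set c : ℕ → ℝ → ℂ := fun k t =>
    f k * (a : ℂ) ^ k * Complex.exp (2 * Real.pi * Complex.I * ((b : ℂ) ^ k) * (t : ℂ)) with hc
  have hexp : ∀ (k : ℕ) (t : ℝ),
      (2 * (Real.pi : ℂ) * Complex.I * ((b : ℂ) ^ k) * (t : ℂ))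
        = ((2 * Real.pi * (b : ℝ) ^ k * t : ℝ) : ℂ) * Complex.I := by
    intro k t; push_cast; ring
  have hcabs : ∀ (k : ℕ) (t : ℝ), ‖c k t‖ = ‖f k‖ * a ^ k := by
    intro k t
    simp only [hc]
    rw [hexp k t, norm_mul, norm_mul, Complex.norm_exp_ofReal_mul_I, norm_pow,
      Complex.norm_real, Real.norm_eq_abs, abs_of_pos ha0, mul_one]
  have hgeo : Summable (fun k : ℕ => a ^ k) := summable_geometric_of_lt_one ha0.le ha1
  have hBsum : Summable (fun k : ℕ => B * a ^ (k + 1)) := by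
    refine ((hgeo.mul_left (B * a)).congr ?_)
    intro k; rw [pow_succ]; ring
  have h2Bsum : Summable (fun k : ℕ => 2 * (B * a ^ (k + 1))) := hBsum.mul_left 2
  have hcle : ∀ (k : ℕ) (t : ℝ), ‖c (k + 1) t‖ ≤ B * a ^ (k + 1) := by
    intro k t
    rw [hcabs]
    exact mul_le_mul_of_nonneg_right (hf _) (pow_nonneg ha0.le _)
  have hsum : ∀ t : ℝ, Summable (fun k : ℕ => c (k + 1) t) := by
    intro t
    exact Summable.of_norm_bounded hBsum (fun k => hcle k t)
  set W : ℝ → ℂ := fun t => ∑' k : ℕ, c (k + 1) t with hW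
  refine ⟨W, ?_, ?_⟩
  · -- convergence of partial sums over Icc 1 N
    intro t
    have h := (hsum t).hasSum.tendsto_sum_nat
    refine h.congr ?_
    intro N
    exact (sum_Icc_one (fun k => c k t) N).symm
  · -- Hölder continuity
    set c₂ : ℝ := 2 * B / (a * (1 - a)) with hc₂
    set c₁ : ℝ := 4 * Real.pi * B * b / (a * b - 1) with hc₁
    set C₁ : ℝ := 1 + c₁ + c₂ with hC₁
    have hc1nn : 0 ≤ c₁ :=
      div_nonneg (mul_nonneg (mul_nonneg (by positivity) hB0) hb0.le) hD.le
    have hc2nn : 0 ≤ c₂ := div_nonneg (by linarith) (mul_pos ha0 h1a).le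
    have hC₁pos : 0 < C₁ := by rw [hC₁]; linarith
    have key : ∀ s t : ℝ, ‖W s - W t‖ ≤ C₁ * |s - t| ^ α := by
      intro s t
      set h : ℝ := |s - t| with hh
      rcases eq_or_lt_of_le (abs_nonneg (s - t)) with h0 | h0
      · have hst : s = t := by
          have h0' : |s - t| = 0 := h0.symm
          rw [abs_eq_zero] at h0'
          linarith [sub_eq_zero.mp h0']
        rw [hst, sub_self, norm_zero]
        exact mul_nonneg hC₁pos.le (Real.rpow_nonneg (by rw [hh]; exact abs_nonneg _) α)
      · -- h > 0
        rw [← hh] at h0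
        have hWd : W s - W t = ∑' k : ℕ, (c (k + 1) s - c (k + 1) t) := by
          rw [hW]; exact ((hsum s).tsum_sub (hsum t)).symm
        set m : ℕ → ℝ := fun k =>
          B * a ^ (k + 1) * min 2 (2 * (2 * Real.pi * (b : ℝ) ^ (k + 1) * h)) with hm
        have hmin_nn : ∀ k : ℕ, (0:ℝ) ≤ min 2 (2 * (2 * Real.pi * (b : ℝ) ^ (k + 1) * h)) := by
          intro k
          refine le_min (by norm_num) ?_
          have hbk : 0 < (b:ℝ) ^ (k+1) := pow_pos hb0 _
          exact mul_nonneg (by norm_num)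
            (mul_nonneg (mul_nonneg (by positivity) hbk.le) h0.le)
        have hmnn : ∀ k, 0 ≤ m k := fun k =>
          mul_nonneg (mul_nonneg hB0 (pow_nonneg ha0.le _)) (hmin_nn k)
        -- term bound
        have hdle : ∀ k : ℕ, ‖c (k + 1) s - c (k + 1) t‖ ≤ m k := by
          intro k
          have hsplit : c (k + 1) s - c (k + 1) t
              = (f (k + 1) * (a : ℂ) ^ (k + 1)) *
                (Complex.exp (((2 * Real.pi * (b : ℝ) ^ (k + 1) * s : ℝ) : ℂ) * Complex.I)
                  - Complex.exp (((2 * Real.pi * (b : ℝ) ^ (k + 1) * t : ℝ) : ℂ) * Complex.I)) := by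
            simp only [hc]
            rw [hexp (k + 1) s, hexp (k + 1) t]; ring
          rw [hsplit, norm_mul, norm_mul, norm_pow, Complex.norm_real, Real.norm_eq_abs,
            abs_of_pos ha0]
          have huv : |2 * Real.pi * (b : ℝ) ^ (k + 1) * s - 2 * Real.pi * (b : ℝ) ^ (k + 1) * t|
              = 2 * Real.pi * (b : ℝ) ^ (k + 1) * h := by
            rw [show 2 * Real.pi * (b : ℝ) ^ (k + 1) * s - 2 * Real.pi * (b : ℝ) ^ (k + 1) * t
              = 2 * Real.pi * (b : ℝ) ^ (k + 1) * (s - t) by ring, abs_mul, hh]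
            congr 1
            rw [abs_of_pos (mul_pos (by positivity) (pow_pos hb0 (k+1)))]
          have hE := exp_I_diff_le (2 * Real.pi * (b : ℝ) ^ (k + 1) * s)
            (2 * Real.pi * (b : ℝ) ^ (k + 1) * t)
          rw [huv] at hE
          exact mul_le_mul (mul_le_mul_of_nonneg_right (hf _) (pow_nonneg ha0.le _)) hE
            (norm_nonneg _) (mul_nonneg hB0 (pow_nonneg ha0.le _))
        have hm_sum : Summable m := by
          refine Summable.of_nonneg_of_le hmnn ?_ h2Bsum
          intro k
          calc m k ≤ B * a ^ (k + 1) * 2 :=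
                mul_le_mul_of_nonneg_left (min_le_left _ _)
                  (mul_nonneg hB0 (pow_nonneg ha0.le _))
            _ = 2 * (B * a ^ (k + 1)) := by ring
        have hd_sum : Summable (fun k : ℕ => ‖c (k + 1) s - c (k + 1) t‖) :=
          Summable.of_nonneg_of_le (fun k => norm_nonneg _) hdle hm_sum
        have habsW : ‖W s - W t‖ ≤ ∑' k : ℕ, m k := by
          rw [hWd]
          exact (norm_tsum_le_tsum_norm hd_sum).trans (Summable.tsum_le_tsum hdle hd_sum hm_sum)
        -- generic tail estimate
        have htail : ∀ N : ℕ, ∑' k : ℕ, m (k + N) ≤ 2 * B / (1 - a) * a ^ N := by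
          intro N
          have hsm : Summable (fun k : ℕ => m (k + N)) := (summable_nat_add_iff N).mpr hm_sum
          have hub : Summable (fun k : ℕ => 2 * B * a ^ N * a ^ (k + 1)) := by
            refine (hgeo.mul_left (2 * B * a ^ N * a)).congr ?_
            intro k; rw [pow_succ]; ring
          have hle : ∀ k : ℕ, m (k + N) ≤ 2 * B * a ^ N * a ^ (k + 1) := by
            intro k
            calc m (k + N) ≤ B * a ^ (k + N + 1) * 2 :=
                  mul_le_mul_of_nonneg_left (min_le_left _ _)
                    (mul_nonneg hB0 (pow_nonneg ha0.le _))
              _ = 2 * B * a ^ N * a ^ (k + 1) := by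
                  rw [show k + N + 1 = N + (k + 1) by ring, pow_add]; ring
          calc ∑' k : ℕ, m (k + N) ≤ ∑' k : ℕ, 2 * B * a ^ N * a ^ (k + 1) :=
                Summable.tsum_le_tsum hle hsm hub
            _ = 2 * B * a ^ N * a * (1 - a)⁻¹ := by
                rw [show (fun k : ℕ => 2 * B * a ^ N * a ^ (k + 1))
                  = fun k : ℕ => (2 * B * a ^ N * a) * a ^ k from funext fun k => by
                    rw [pow_succ]; ring, tsum_mul_left,
                  tsum_geometric_of_lt_one ha0.le ha1]
            _ ≤ 2 * B / (1 - a) * a ^ N := by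
                have e : 2 * B / (1 - a) * a ^ N = 2 * B * a ^ N * (1 - a)⁻¹ := by
                  rw [div_eq_mul_inv]; ring
                rw [e]
                refine mul_le_mul_of_nonneg_right ?_ (inv_pos.mpr h1a).le
                nlinarith [mul_nonneg (mul_nonneg hB0 (pow_nonneg ha0.le N)) h1a.le]
        rcases le_or_gt h 1 with hle1 | hgt1
        · -- small increment case
          set x : ℝ := Real.log (1 / h) / Real.log b with hx
          have hx0 : 0 ≤ x := div_nonneg
            (Real.log_nonneg (by rw [le_div_iff₀ h0]; linarith)) hlogb.le
          set N : ℕ := ⌊x⌋₊ with hN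
          have hbx : (b : ℝ) ^ x = 1 / h := by
            rw [Real.rpow_def_of_pos hb0, hx, mul_comm, div_mul_cancel₀ _ hlogb.ne',
              Real.exp_log (one_div_pos.mpr h0)]
          have hbN : (b : ℝ) ^ (N : ℕ) ≤ 1 / h := by
            rw [← Real.rpow_natCast]
            calc (b : ℝ) ^ (N : ℝ) ≤ (b : ℝ) ^ x :=
                Real.rpow_le_rpow_of_exponent_le hb1.le (Nat.floor_le hx0)
              _ = 1 / h := hbx
          have hbN1 : 1 / h ≤ (b : ℝ) ^ (N + 1 : ℕ) := by
            rw [← Real.rpow_natCast]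
            calc 1 / h = (b : ℝ) ^ x := hbx.symm
              _ ≤ (b : ℝ) ^ ((N + 1 : ℕ) : ℝ) := by
                  refine Real.rpow_le_rpow_of_exponent_le hb1.le ?_
                  push_cast
                  exact (Nat.lt_floor_add_one x).le
          have hhbN : h * (b : ℝ) ^ N ≤ 1 := by
            rw [mul_comm]
            exact (le_div_iff₀ h0).mp hbN
          have haN : a ^ (N + 1 : ℕ) ≤ h ^ α := by
            have e : a ^ (N + 1 : ℕ) = ((b : ℝ) ^ (N + 1 : ℕ)) ^ (-α) := by
              rw [← hba, ← Real.rpow_natCast ((b : ℝ) ^ (-α)) (N + 1),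
                ← Real.rpow_mul hb0.le, mul_comm, Real.rpow_mul hb0.le,
                Real.rpow_natCast]
            rw [e]
            calc ((b : ℝ) ^ (N + 1 : ℕ)) ^ (-α) ≤ (1 / h) ^ (-α) :=
                Real.rpow_le_rpow_of_nonpos (one_div_pos.mpr h0) hbN1 (by linarith)
              _ = h ^ α := by
                  rw [one_div, Real.inv_rpow h0.le, Real.rpow_neg h0.le, inv_inv]
          -- head estimate
          have hhead : ∑ k ∈ Finset.range N, m k ≤ c₁ * h ^ α := by
            have hstep : ∀ k ∈ Finset.range N,
                m k ≤ 4 * Real.pi * B * h * (a * b) ^ (k + 1) := by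
              intro k _
              calc m k ≤ B * a ^ (k + 1) * (2 * (2 * Real.pi * (b : ℝ) ^ (k + 1) * h)) :=
                    mul_le_mul_of_nonneg_left (min_le_right _ _)
                      (mul_nonneg hB0 (pow_nonneg ha0.le _))
                _ = 4 * Real.pi * B * h * (a * b) ^ (k + 1) := by rw [mul_pow]; ring
            have hgeoN : ∑ k ∈ Finset.range N, (a * b) ^ (k + 1)
                ≤ (a * b) ^ (N + 1) / (a * b - 1) := by
              have heq : ∑ k ∈ Finset.range N, (a * b) ^ (k + 1)
                  = (a * b) * (((a * b) ^ N - 1) / (a * b - 1)) := by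
                calc ∑ k ∈ Finset.range N, (a * b) ^ (k + 1)
                    = ∑ k ∈ Finset.range N, (a * b) * (a * b) ^ k :=
                      Finset.sum_congr rfl fun k _ => by rw [pow_succ]; ring
                  _ = (a * b) * ∑ k ∈ Finset.range N, (a * b) ^ k := by
                      rw [Finset.mul_sum]
                  _ = (a * b) * (((a * b) ^ N - 1) / (a * b - 1)) := by
                      rw [geom_sum_eq (ne_of_gt hab)]
              rw [heq, show (a * b) * (((a * b) ^ N - 1) / (a * b - 1))
                  = ((a * b) ^ (N + 1) - (a * b)) * (a * b - 1)⁻¹ by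
                    rw [pow_succ]; ring, div_eq_mul_inv]
              exact mul_le_mul_of_nonneg_right (by nlinarith) (inv_nonneg.mpr hD.le)
            calc ∑ k ∈ Finset.range N, m k
                ≤ ∑ k ∈ Finset.range N, 4 * Real.pi * B * h * (a * b) ^ (k + 1) :=
                  Finset.sum_le_sum hstep
              _ = 4 * Real.pi * B * h * ∑ k ∈ Finset.range N, (a * b) ^ (k + 1) := by
                  rw [Finset.mul_sum]
              _ ≤ 4 * Real.pi * B * h * ((a * b) ^ (N + 1) / (a * b - 1)) := by
                  refine mul_le_mul_of_nonneg_left hgeoN ?_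
                  exact mul_nonneg (mul_nonneg (by positivity) hB0) h0.le
              _ = (4 * Real.pi * B) * (h * (a * b) ^ (N + 1)) * (a * b - 1)⁻¹ := by
                  ring
              _ ≤ (4 * Real.pi * B) * (h ^ α * (b : ℝ)) * (a * b - 1)⁻¹ := by
                  refine mul_le_mul_of_nonneg_right
                    (mul_le_mul_of_nonneg_left ?_ (by positivity)) (inv_nonneg.mpr hD.le)
                  have e2 : h * (a * b) ^ (N + 1)
                      = a ^ (N + 1) * (b : ℝ) * (h * (b : ℝ) ^ N) := by
                    rw [mul_pow, pow_succ (b : ℝ) N]; ring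
                  rw [e2]
                  calc a ^ (N + 1) * (b : ℝ) * (h * (b : ℝ) ^ N)
                      ≤ a ^ (N + 1) * (b : ℝ) * 1 :=
                        mul_le_mul_of_nonneg_left hhbN
                          (mul_nonneg (pow_nonneg ha0.le _) hb0.le)
                    _ = a ^ (N + 1) * (b : ℝ) := mul_one _
                    _ ≤ h ^ α * b := mul_le_mul_of_nonneg_right haN hb0.le
              _ = c₁ * h ^ α := by rw [hc₁, div_eq_mul_inv]; ring
          -- tail with exponent gain
          have htail' : ∑' k : ℕ, m (k + N) ≤ c₂ * h ^ α := by
            calc ∑' k : ℕ, m (k + N) ≤ 2 * B / (1 - a) * a ^ N := htail N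
              _ = c₂ * a ^ (N + 1) := by
                  rw [hc₂, pow_succ]; field_simp
              _ ≤ c₂ * h ^ α := mul_le_mul_of_nonneg_left haN hc2nn
          have hsplit := hm_sum.sum_add_tsum_nat_add N
          calc ‖W s - W t‖ ≤ ∑' k : ℕ, m k := habsW
            _ = ∑ k ∈ Finset.range N, m k + ∑' k : ℕ, m (k + N) := hsplit.symm
            _ ≤ c₁ * h ^ α + c₂ * h ^ α := add_le_add hhead htail'
            _ ≤ C₁ * h ^ α := by
                have hhα : 0 ≤ h ^ α := Real.rpow_nonneg h0.le α
                have h2 : c₁ + c₂ ≤ C₁ := by rw [hC₁]; linarith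
                have := mul_le_mul_of_nonneg_right h2 hhα
                linarith
        · -- large increment case
          have hhα : 1 ≤ h ^ α := by
            rw [← Real.one_rpow α]
            exact Real.rpow_le_rpow (by norm_num) hgt1.le hα0.le
          have htot : ∑' k : ℕ, m k ≤ 2 * B / (1 - a) := by
            have := htail 0
            simpa using this
          calc ‖W s - W t‖ ≤ ∑' k : ℕ, m k := habsW
            _ ≤ 2 * B / (1 - a) := htot
            _ ≤ c₂ := by
                rw [hc₂]
                refine div_le_div_of_nonneg_left (by linarith) (mul_pos ha0 h1a) ?_
                nlinarith
            _ = c₂ * 1 := (mul_one _).symm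
            _ ≤ C₁ * h ^ α := by
                refine mul_le_mul ?_ hhα (by norm_num) hC₁pos.le
                rw [hC₁]; linarith
    refine ⟨C₁, hC₁pos, key, ?_, ?_, ?_⟩
    · intro s t
      refine le_trans ?_ (key s t)
      exact abs_norm_sub_norm_le _ _
    · intro s t
      refine le_trans ?_ (key s t)
      rw [show (W s).re - (W t).re = (W s - W t).re from (Complex.sub_re _ _).symm]
      exact Complex.abs_re_le_norm _
    · intro s t
      refine le_trans ?_ (key s t)
      rw [show (W s).im - (W t).im = (W s - W t).im from (Complex.sub_im _ _).symm]
      exact Complex.abs_im_le_norm _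
end

section
/- Let a be a real number with 0 < a < 1, let b be an integer with b > 1/a, and let f : ℕ → ℂ be a bounded function. Then the Hausdorff dimensions of the graphs {(t, |W_{a,b}(f;t)|) : t ∈ [0,1]}, {(t, Re W_{a,b}(f;t)) : t ∈ [0,1]}, and {(t, Im W_{a,b}(f;t)) : t ∈ [0,1]} in ℝ² are each at most 2 + log a/log b. -/
open Filter Finset Topology
open MeasureTheory ENNReal

lemma graph_dimH_le (a : ℝ) (ha0 : 0 < a) (ha1 : a < 1) (m : ℕ) (hm : 2 ≤ m)
    (hab : 1 < a * m) (C : ℝ) (hC : 0 < C) (g : ℝ → ℝ)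
    (hosc : ∀ n : ℕ, ∀ t s : ℝ, |t - s| ≤ ((m : ℝ) ^ n)⁻¹ → |g t - g s| ≤ C * a ^ n) :
    dimH {q : ℝ × ℝ | q.1 ∈ Set.Icc (0 : ℝ) 1 ∧ q.2 = g q.1}
      ≤ ENNReal.ofReal (2 + Real.log a / Real.log m) := by
  have hm0 : (0:ℝ) < m := by positivity
  have hm1 : (1:ℝ) < m := by exact_mod_cast (by omega : (1:ℕ) < m)
  have hlogm : 0 < Real.log m := Real.log_pos hm1
  have hloga : Real.log a < 0 := Real.log_neg ha0 ha1
  set α : ℝ := -(Real.log a / Real.log m) with hα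
  have hα0 : 0 < α := by
    rw [hα]; exact neg_pos.2 (div_neg_of_neg_of_pos hloga hlogm)
  have hα1 : α < 1 := by
    have h1 : 0 < Real.log (a * m) := Real.log_pos hab
    rw [Real.log_mul (ne_of_gt ha0) (ne_of_gt hm0)] at h1
    have : -Real.log a < Real.log m := by linarith
    rw [hα, ← neg_div]
    exact (div_lt_one hlogm).2 (by linarith : -Real.log a < Real.log m)
  set d : ℝ := 2 - α with hdd
  have hd0 : 0 < d := by simp only [hdd]; linarith
  have htarget : 2 + Real.log a / Real.log m = d := by rw [hdd, hα]; ring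
  -- key exponent identity
  have hma : (m:ℝ) ^ α = a⁻¹ := by
    rw [Real.rpow_def_of_pos hm0]
    have : Real.log m * α = -Real.log a := by
      rw [hα]; field_simp
    rw [this, Real.exp_neg, Real.exp_log ha0]
  have key : ∀ n : ℕ, (((m:ℝ)^n)⁻¹) ^ d = (((m:ℝ)^n)⁻¹)^(2:ℕ) * (a⁻¹)^n := by
    intro n
    have hp : (0:ℝ) < (m:ℝ)^n := by positivity
    have hip : (0:ℝ) < ((m:ℝ)^n)⁻¹ := by positivity
    have h1 : (((m:ℝ)^n)⁻¹) ^ d = (((m:ℝ)^n)⁻¹)^(2:ℝ) * (((m:ℝ)^n)⁻¹)^(-α) := by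
      rw [← Real.rpow_add hip]; norm_num [hdd, sub_eq_add_neg]
    rw [h1]
    congr 1
    · rw [Real.rpow_two]
    · rw [Real.rpow_neg (le_of_lt hip), Real.inv_rpow (le_of_lt hp), inv_inv,
        ← Real.rpow_natCast ((m:ℝ)) n, ← Real.rpow_mul (le_of_lt hm0), mul_comm,
        Real.rpow_mul (le_of_lt hm0), hma, Real.rpow_natCast]
  set G := {q : ℝ × ℝ | q.1 ∈ Set.Icc (0 : ℝ) 1 ∧ q.2 = g q.1} with hG
  set δ : ℕ → ℝ := fun n => ((m:ℝ)^n)⁻¹ with hδ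
  have hδpos : ∀ n, 0 < δ n := fun n => by rw [hδ]; positivity
  set K : ℕ → ℕ := fun n => ⌈2*C*a^n*(m:ℝ)^n⌉₊ + 1 with hK
  have hKpos : ∀ n, 0 < K n := fun n => Nat.succ_pos _
  set T : ∀ n : ℕ, Fin (m^n) × Fin (K n) → Set (ℝ×ℝ) := fun n p =>
    Set.Icc ((p.1.val : ℝ) * δ n) (((p.1.val : ℝ)+1) * δ n) ×ˢ
      Set.Icc ((g ((p.1.val:ℝ) * δ n) - C * a^n) + (p.2.val:ℝ) * δ n)
              ((g ((p.1.val:ℝ) * δ n) - C * a^n) + ((p.2.val:ℝ)+1) * δ n) with hT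
  set r : ℕ → ℝ≥0∞ := fun n => ENNReal.ofReal (δ n) with hr'
  have hr : Tendsto r atTop (𝓝 0) := by
    rw [← ENNReal.ofReal_zero]
    apply ENNReal.tendsto_ofReal
    exact Tendsto.inv_tendsto_atTop (tendsto_pow_atTop_atTop_of_one_lt hm1)
  have ht : ∀ n (i : Fin (m^n) × Fin (K n)), EMetric.diam (T n i) ≤ r n := by
    intro n i
    apply EMetric.diam_le
    rintro ⟨x1, x2⟩ ⟨hx1, hx2⟩ ⟨y1, y2⟩ ⟨hy1, hy2⟩
    rw [Prod.edist_eq]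
    have e1 : edist x1 y1 ≤ r n := by
      calc edist x1 y1 ≤ EMetric.diam (Set.Icc ((i.1.val : ℝ) * δ n) (((i.1.val:ℝ)+1) * δ n)) :=
            EMetric.edist_le_diam_of_mem hx1 hy1
        _ = ENNReal.ofReal (((i.1.val:ℝ)+1) * δ n - (i.1.val:ℝ) * δ n) := Real.ediam_Icc _ _
        _ ≤ r n := le_of_eq (by rw [hr']; congr 1; ring)
    have e2 : edist x2 y2 ≤ r n := by
      calc edist x2 y2 ≤ EMetric.diam (Set.Icc
              ((g ((i.1.val:ℝ) * δ n) - C * a^n) + (i.2.val:ℝ) * δ n)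
              ((g ((i.1.val:ℝ) * δ n) - C * a^n) + ((i.2.val:ℝ)+1) * δ n)) :=
            EMetric.edist_le_diam_of_mem hx2 hy2
        _ = ENNReal.ofReal _ := Real.ediam_Icc _ _
        _ ≤ r n := le_of_eq (by rw [hr']; congr 1; ring)
    exact max_le e1 e2
  have hst : ∀ n, G ⊆ ⋃ i, T n i := by
    intro n q hq
    obtain ⟨⟨ht0, ht1⟩, hgq⟩ := hq
    have hmn1 : 1 ≤ m ^ n := Nat.one_le_pow _ _ (by omega)
    set t : ℝ := q.1 with htq
    set j : ℕ := min ⌊t * (m:ℝ)^n⌋₊ (m^n - 1) with hj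
    have hjlt : j < m^n := lt_of_le_of_lt (min_le_right _ _) (by omega)
    have hfl : (⌊t * (m:ℝ)^n⌋₊ : ℝ) ≤ t * (m:ℝ)^n := Nat.floor_le (by positivity)
    have hjle : (j:ℝ) * δ n ≤ t := by
      have hjfloor : j ≤ ⌊t * (m:ℝ)^n⌋₊ := by rw [hj]; exact min_le_left _ _
      have h1 : (j:ℝ) ≤ t * (m:ℝ)^n := le_trans (Nat.cast_le.2 hjfloor) hfl
      calc (j:ℝ) * δ n ≤ (t * (m:ℝ)^n) * δ n :=
            mul_le_mul_of_nonneg_right h1 (hδpos n).le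
        _ = t := by rw [hδ]; field_simp
    have hjge : t ≤ ((j:ℝ)+1) * δ n := by
      by_cases hc : ⌊t * (m:ℝ)^n⌋₊ ≤ m^n - 1
      · have hj' : j = ⌊t * (m:ℝ)^n⌋₊ := min_eq_left hc
        have h2 : t * (m:ℝ)^n < (⌊t * (m:ℝ)^n⌋₊ : ℝ) + 1 := Nat.lt_floor_add_one _
        calc t = (t * (m:ℝ)^n) * δ n := by rw [hδ]; field_simp
          _ ≤ ((j:ℝ)+1) * δ n := by
              apply mul_le_mul_of_nonneg_right _ (hδpos n).le
              rw [hj']; push_cast; exact h2.le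
      · have hj' : j = m^n - 1 := min_eq_right (by omega)
        have hcast : ((j:ℝ)+1) = ((m:ℝ))^n := by
          rw [hj', Nat.cast_sub hmn1]; push_cast; ring
        calc t ≤ 1 := ht1
          _ = ((j:ℝ)+1) * δ n := by rw [hcast, hδ]; field_simp
    have hosc' : |g t - g ((j:ℝ) * δ n)| ≤ C * a^n := by
      apply hosc n
      rw [abs_le]
      constructor
      · nlinarith [hδpos n, mul_nonneg (Nat.cast_nonneg j : (0:ℝ) ≤ (j:ℝ)) (hδpos n).le]
      · have : t - (j:ℝ) * δ n ≤ δ n := by nlinarith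
        simpa [hδ] using this
    set x : ℝ := g t - (g ((j:ℝ) * δ n) - C * a^n) with hx
    have habs := abs_le.1 hosc'
    have hx0 : 0 ≤ x := by rw [hx]; linarith [habs.1]
    have hx2 : x ≤ 2*C*a^n := by rw [hx]; linarith [habs.2]
    set i : ℕ := min ⌊x * (m:ℝ)^n⌋₊ (K n - 1) with hi
    have hilt : i < K n := lt_of_le_of_lt (min_le_right _ _) (by have := hKpos n; omega)
    have hfl2 : (⌊x * (m:ℝ)^n⌋₊ : ℝ) ≤ x * (m:ℝ)^n := Nat.floor_le (by positivity)
    have hige : (i:ℝ) * δ n ≤ x := by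
      have hifloor : i ≤ ⌊x * (m:ℝ)^n⌋₊ := by rw [hi]; exact min_le_left _ _
      have h1 : (i:ℝ) ≤ x * (m:ℝ)^n := le_trans (Nat.cast_le.2 hifloor) hfl2
      calc (i:ℝ) * δ n ≤ (x * (m:ℝ)^n) * δ n :=
            mul_le_mul_of_nonneg_right h1 (hδpos n).le
        _ = x := by rw [hδ]; field_simp
    have hile : x ≤ ((i:ℝ)+1) * δ n := by
      by_cases hc : ⌊x * (m:ℝ)^n⌋₊ ≤ K n - 1
      · have hi' : i = ⌊x * (m:ℝ)^n⌋₊ := min_eq_left hc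
        have h2 : x * (m:ℝ)^n < (⌊x * (m:ℝ)^n⌋₊ : ℝ) + 1 := Nat.lt_floor_add_one _
        calc x = (x * (m:ℝ)^n) * δ n := by rw [hδ]; field_simp
          _ ≤ ((i:ℝ)+1) * δ n := by
              apply mul_le_mul_of_nonneg_right _ (hδpos n).le
              rw [hi']; push_cast; exact h2.le
      · have hi' : i = K n - 1 := min_eq_right (by omega)
        have hcast : ((i:ℝ)+1) = (K n : ℝ) := by
          rw [hi', Nat.cast_sub (hKpos n)]; push_cast; ring
        have hKge : 2*C*a^n*(m:ℝ)^n ≤ (K n : ℝ) := by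
          rw [hK]; push_cast; exact le_trans (Nat.le_ceil _) (by norm_num)
        calc x ≤ 2*C*a^n := hx2
          _ = (2*C*a^n*(m:ℝ)^n) * δ n := by rw [hδ]; field_simp
          _ ≤ ((i:ℝ)+1) * δ n := by
              rw [hcast]; exact mul_le_mul_of_nonneg_right hKge (hδpos n).le
    refine Set.mem_iUnion.2 ⟨(⟨j, hjlt⟩, ⟨i, hilt⟩), ?_⟩
    refine ⟨⟨hjle, hjge⟩, ?_, ?_⟩
    · show g ((j:ℝ) * δ n) - C * a^n + (i:ℝ) * δ n ≤ q.2
      rw [hgq]; rw [hx] at hige; linarith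
    · show q.2 ≤ g ((j:ℝ) * δ n) - C * a^n + ((i:ℝ)+1) * δ n
      rw [hgq]; rw [hx] at hile; linarith
  have hsum : ∀ n, ∑ i : Fin (m^n) × Fin (K n), EMetric.diam (T n i) ^ d
      ≤ ENNReal.ofReal (2*C + 2) := by
    intro n
    have hcard : (Finset.univ : Finset (Fin (m^n) × Fin (K n))).card = m^n * K n := by
      simp [Finset.card_univ]
    have hbound : ∀ i : Fin (m^n) × Fin (K n),
        EMetric.diam (T n i) ^ d ≤ ENNReal.ofReal (δ n ^ d) := by
      intro i
      calc EMetric.diam (T n i) ^ d ≤ (ENNReal.ofReal (δ n)) ^ d :=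
            ENNReal.rpow_le_rpow (ht n i) hd0.le
        _ = ENNReal.ofReal (δ n ^ d) := ENNReal.ofReal_rpow_of_pos (hδpos n)
    have hreal : ((m^n * K n : ℕ) : ℝ) * δ n ^ d ≤ 2*C + 2 := by
      rw [key n]
      have hδn : δ n = ((m:ℝ)^n)⁻¹ := by rw [hδ]
      have hPpos : (0:ℝ) < (m:ℝ)^n := by positivity
      have hApos : (0:ℝ) < a^n := by positivity
      have hP0 : ((m:ℝ)^n) ≠ 0 := ne_of_gt hPpos
      have ha0' : a ≠ 0 := ne_of_gt ha0
      have hPA : (1:ℝ) ≤ (m:ℝ)^n * a^n := by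
        have h1 : (1:ℝ) ≤ (a*(m:ℝ))^n := one_le_pow₀ hab.le
        have h2 : (a*(m:ℝ))^n = a^n * (m:ℝ)^n := mul_pow a (m:ℝ) n
        nlinarith
      have hKle : (K n : ℝ) ≤ 2*C*a^n*(m:ℝ)^n + 2 := by
        have hcl := Nat.ceil_lt_add_one (show (0:ℝ) ≤ 2*C*a^n*(m:ℝ)^n by positivity)
        rw [hK]; push_cast; linarith
      have hinv1 : ((m:ℝ)^n * a^n)⁻¹ ≤ 1 := inv_le_one_of_one_le₀ hPA
      calc ((m^n * K n : ℕ):ℝ) * (δ n ^ 2 * a⁻¹ ^ n)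
          = (K n:ℝ) * ((m:ℝ)^n * a^n)⁻¹ := by
            rw [hδn]; push_cast; field_simp; rw [mul_assoc, ← mul_pow, one_div, inv_mul_cancel₀ ha0', one_pow, mul_one]
        _ ≤ (2*C*a^n*(m:ℝ)^n + 2) * ((m:ℝ)^n * a^n)⁻¹ := by
            apply mul_le_mul_of_nonneg_right hKle (by positivity)
        _ = 2*C + 2*((m:ℝ)^n * a^n)⁻¹ := by field_simp
        _ ≤ 2*C + 2*1 := by nlinarith
        _ = 2*C+2 := by ring
    calc ∑ i : Fin (m^n) × Fin (K n), EMetric.diam (T n i) ^ d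
        ≤ ∑ _i : Fin (m^n) × Fin (K n), ENNReal.ofReal (δ n ^ d) :=
          Finset.sum_le_sum (fun i _ => hbound i)
      _ = ((m^n * K n : ℕ) : ℝ≥0∞) * ENNReal.ofReal (δ n ^ d) := by
          rw [Finset.sum_const, hcard, nsmul_eq_mul]
      _ = ENNReal.ofReal (((m^n * K n : ℕ) : ℝ) * δ n ^ d) := by
          rw [← ENNReal.ofReal_natCast (m^n * K n), ← ENNReal.ofReal_mul (by positivity)]
      _ ≤ ENNReal.ofReal (2*C+2) := ENNReal.ofReal_le_ofReal hreal
  have hμ : μH[d] G ≤ ENNReal.ofReal (2*C+2) := by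
    refine le_trans (MeasureTheory.Measure.hausdorffMeasure_le_liminf_sum d G r hr T
      (Filter.Eventually.of_forall ht) (Filter.Eventually.of_forall hst)) ?_
    have h2 := Filter.liminf_le_liminf (f := atTop) (Filter.Eventually.of_forall hsum)
    exact h2.trans_eq (liminf_const _)
  rw [htarget]
  have hfin : μH[(d.toNNReal : ℝ)] G ≠ ⊤ := by
    rw [Real.coe_toNNReal d hd0.le]
    exact ne_top_of_le_ne_top ENNReal.ofReal_ne_top hμ
  have hdim := dimH_le_of_hausdorffMeasure_ne_top hfin
  simpa [ENNReal.ofReal] using hdim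

lemma weierstrass_osc (a : ℝ) (ha0 : 0 < a) (ha1 : a < 1) (b : ℤ) (hb : 1 / a < (b : ℝ))
    (f : ℕ → ℂ) (B : ℝ) (hf : ∀ k : ℕ, ‖f k‖ ≤ B)
    (W : ℝ → ℂ)
    (hW : ∀ t : ℝ, Tendsto (fun N : ℕ => ∑ k ∈ Finset.Icc 1 N,
        f k * (a : ℂ) ^ k * Complex.exp (2 * Real.pi * Complex.I * ((b : ℂ) ^ k) * (t : ℂ)))
      atTop (𝓝 (W t))) :
    ∃ C : ℝ, 0 < C ∧ ∀ n : ℕ, ∀ t s : ℝ, |t - s| ≤ (((b:ℝ)) ^ n)⁻¹ →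
      ‖W t - W s‖ ≤ C * a ^ n := by
  have hπ : 0 < Real.pi := Real.pi_pos
  have h1a : (1:ℝ) < 1/a := one_lt_one_div ha0 ha1
  have hb1 : (1:ℝ) < (b:ℝ) := lt_trans h1a hb
  have hb0 : (0:ℝ) < (b:ℝ) := lt_trans one_pos hb1
  have hab : (1:ℝ) < a * b := by
    have := (div_lt_iff₀ ha0).1 hb
    linarith
  have hB : 0 ≤ B := le_trans (norm_nonneg _) (hf 0)
  set r : ℝ := a * b with hr
  set C₀ : ℝ := 4*Real.pi*B*a*(b:ℝ)/(a*(b:ℝ)-1) + 2*B*a/(1-a) with hC₀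
  have hC₀0 : 0 ≤ C₀ := by
    apply add_nonneg
    · apply div_nonneg (by positivity); linarith
    · apply div_nonneg (by positivity); linarith
  refine ⟨C₀ + 1, by linarith, ?_⟩
  intro n t s hts
  set δ : ℝ := ((b:ℝ)^n)⁻¹ with hδ
  have hδ0 : 0 < δ := by rw [hδ]; positivity
  set S : ℕ → ℝ → ℂ := fun N x => ∑ k ∈ Finset.Icc 1 N,
      f k * (a : ℂ) ^ k * Complex.exp (2 * Real.pi * Complex.I * ((b : ℂ) ^ k) * (x : ℂ)) with hS
  have key : ∀ N : ℕ, ‖S N t - S N s‖ ≤ C₀ * a ^ n := by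
    intro N
    set E : ℕ → ℝ → ℂ := fun k x =>
      Complex.exp (2 * Real.pi * Complex.I * ((b : ℂ) ^ k) * (x : ℂ)) with hE
    have hdiff : S N t - S N s = ∑ k ∈ Finset.Icc 1 N, f k * (a:ℂ)^k * (E k t - E k s) := by
      rw [hS, hE, ← Finset.sum_sub_distrib]
      apply Finset.sum_congr rfl
      intro k _
      ring
    -- bound each term
    set u : ℕ → ℝ := fun k => if k ≤ n then 4*Real.pi*B*(a*(b:ℝ))^k * δ else 2*B*a^k with hu
    have hterm : ∀ k ∈ Finset.Icc 1 N,
        ‖f k * (a:ℂ)^k * (E k t - E k s)‖ ≤ u k := by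
      intro k _
      have habsE2 : ‖E k t - E k s‖ ≤ 2 := by
        have h1 : ‖E k t‖ = 1 := by
          simp only [hE]
          have hz : 2 * (Real.pi:ℂ) * Complex.I * ((b : ℂ) ^ k) * (t : ℂ)
              = ((2 * Real.pi * (b:ℝ)^k * t : ℝ) : ℂ) * Complex.I := by push_cast; ring
          rw [hz, Complex.norm_exp_ofReal_mul_I]
        have h2 : ‖E k s‖ = 1 := by
          simp only [hE]
          have hz : 2 * (Real.pi:ℂ) * Complex.I * ((b : ℂ) ^ k) * (s : ℂ)
              = ((2 * Real.pi * (b:ℝ)^k * s : ℝ) : ℂ) * Complex.I := by push_cast; ring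
          rw [hz, Complex.norm_exp_ofReal_mul_I]
        calc ‖E k t - E k s‖ ≤ ‖E k t‖ + ‖E k s‖ :=
              norm_sub_le _ _
          _ = 2 := by rw [h1, h2]; norm_num
      have habsEy : ‖E k t - E k s‖ ≤ 2 * (2*Real.pi*(b:ℝ)^k * |t - s|) := by
        set y : ℝ := 2*Real.pi*(b:ℝ)^k * (t - s) with hy
        have hy' : |y| = 2*Real.pi*(b:ℝ)^k * |t - s| := by
          rw [hy, abs_mul, abs_of_nonneg (by positivity : (0:ℝ) ≤ 2*Real.pi*(b:ℝ)^k)]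
        have hfact : E k t - E k s = E k s * (Complex.exp ((y:ℂ) * Complex.I) - 1) := by
          simp only [hE]
          have h3 : 2 * (Real.pi:ℂ) * Complex.I * ((b : ℂ) ^ k) * (t : ℂ)
              = 2 * (Real.pi:ℂ) * Complex.I * ((b : ℂ) ^ k) * (s : ℂ) + (y:ℂ) * Complex.I := by
            rw [hy]; push_cast; ring
          rw [h3, Complex.exp_add]; ring
        have h2 : ‖E k s‖ = 1 := by
          simp only [hE]
          have hz : 2 * (Real.pi:ℂ) * Complex.I * ((b : ℂ) ^ k) * (s : ℂ)
              = ((2 * Real.pi * (b:ℝ)^k * s : ℝ) : ℂ) * Complex.I := by push_cast; ring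
          rw [hz, Complex.norm_exp_ofReal_mul_I]
        rw [hfact, norm_mul, h2, one_mul, ← hy']
        by_cases hcase : ‖(y:ℂ) * Complex.I‖ ≤ 1
        · have := Complex.norm_exp_sub_one_le hcase
          have hyy : ‖(y:ℂ) * Complex.I‖ = |y| := by
            rw [norm_mul, Complex.norm_I, mul_one, Complex.norm_real, Real.norm_eq_abs]
          rw [hyy] at this
          linarith
        · push_neg at hcase
          have hyy : ‖(y:ℂ) * Complex.I‖ = |y| := by
            rw [norm_mul, Complex.norm_I, mul_one, Complex.norm_real, Real.norm_eq_abs]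
          rw [hyy] at hcase
          have h4 : ‖Complex.exp ((y:ℂ) * Complex.I) - 1‖ ≤ 2 := by
            have h5 : ‖Complex.exp ((y:ℂ) * Complex.I)‖ = 1 :=
              Complex.norm_exp_ofReal_mul_I y
            calc ‖Complex.exp ((y:ℂ) * Complex.I) - 1‖
                ≤ ‖Complex.exp ((y:ℂ) * Complex.I)‖ + ‖(1:ℂ)‖ :=
                  norm_sub_le _ _
              _ = 2 := by rw [h5, norm_one]; norm_num
          linarith
      have habsf : ‖f k * (a:ℂ)^k * (E k t - E k s)‖
          = ‖f k‖ * a^k * ‖E k t - E k s‖ := by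
        rw [norm_mul, norm_mul, norm_pow, Complex.norm_real, Real.norm_eq_abs, abs_of_nonneg ha0.le]
      rw [habsf]; simp only [hu]
      by_cases hk : k ≤ n
      · rw [if_pos hk]
        have hts' : |t - s| ≤ δ := hts
        have hbk : (0:ℝ) < (b:ℝ)^k := by positivity
        have h6 : ‖f k‖ * a^k * ‖E k t - E k s‖
            ≤ B * a^k * (2 * (2*Real.pi*(b:ℝ)^k * |t - s|)) := by
          apply mul_le_mul _ habsEy (norm_nonneg _) (by positivity)
          apply mul_le_mul_of_nonneg_right (hf k) (by positivity)
        calc ‖f k‖ * a^k * ‖E k t - E k s‖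
            ≤ B * a^k * (2 * (2*Real.pi*(b:ℝ)^k * |t - s|)) := h6
          _ ≤ B * a^k * (2 * (2*Real.pi*(b:ℝ)^k * δ)) := by
              apply mul_le_mul_of_nonneg_left _ (by positivity)
              apply mul_le_mul_of_nonneg_left _ (by norm_num)
              apply mul_le_mul_of_nonneg_left hts' (by positivity)
          _ = 4*Real.pi*B*(a*(b:ℝ))^k * δ := by rw [mul_pow]; ring
      · rw [if_neg hk]
        calc ‖f k‖ * a^k * ‖E k t - E k s‖
            ≤ B * a^k * 2 := by
              apply mul_le_mul _ habsE2 (norm_nonneg _) (by positivity)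
              apply mul_le_mul_of_nonneg_right (hf k) (by positivity)
          _ = 2*B*a^k := by ring
    have habs : ‖S N t - S N s‖ ≤ ∑ k ∈ Finset.Icc 1 N, u k := by
      rw [hdiff]
      exact le_trans (norm_sum_le _ _) (Finset.sum_le_sum hterm)
    -- split the sum
    have hsplit : ∑ k ∈ Finset.Icc 1 N, u k
        ≤ (∑ k ∈ Finset.Icc 1 n, 4*Real.pi*B*(a*(b:ℝ))^k * δ)
          + ∑ k ∈ Finset.Icc (n+1) N, 2*B*a^k := by
      simp only [hu]
      rw [Finset.sum_ite]
      apply add_le_add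
      · apply Finset.sum_le_sum_of_subset_of_nonneg
        · intro k hk
          simp only [Finset.mem_filter, Finset.mem_Icc] at hk ⊢
          omega
        · intro k _ _
          positivity
      · apply Finset.sum_le_sum_of_subset_of_nonneg
        · intro k hk
          simp only [Finset.mem_filter, Finset.mem_Icc] at hk ⊢
          omega
        · intro k _ _
          positivity
    have hr1 : (1:ℝ) < a * (b:ℝ) := hab
    have hrne : a * (b:ℝ) ≠ 1 := ne_of_gt hr1
    have hgeom1 : ∑ k ∈ Finset.Icc 1 n, (a*(b:ℝ))^k ≤ (a*(b:ℝ))^(n+1) / (a*(b:ℝ) - 1) := by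
      have hsub : Finset.Icc 1 n ⊆ Finset.range (n+1) := by
        intro k hk
        simp only [Finset.mem_Icc] at hk
        simp only [Finset.mem_range]
        omega
      have h7 : ∑ k ∈ Finset.Icc 1 n, (a*(b:ℝ))^k ≤ ∑ k ∈ Finset.range (n+1), (a*(b:ℝ))^k :=
        Finset.sum_le_sum_of_subset_of_nonneg hsub (fun k _ _ => by positivity)
      have h8 : ∑ k ∈ Finset.range (n+1), (a*(b:ℝ))^k = ((a*(b:ℝ))^(n+1) - 1)/(a*(b:ℝ) - 1) :=
        geom_sum_eq hrne (n+1)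
      have h9 : ((a*(b:ℝ))^(n+1) - 1)/(a*(b:ℝ) - 1) ≤ (a*(b:ℝ))^(n+1)/(a*(b:ℝ) - 1) := by
        gcongr
        · linarith
      linarith [h7, h8.le, h9]
    have hane : a ≠ 1 := ne_of_lt ha1
    have h1a' : (0:ℝ) < 1 - a := by linarith
    have hgeom2 : ∑ k ∈ Finset.Icc (n+1) N, a^k ≤ a^(n+1) / (1-a) := by
      rw [← Finset.Ico_add_one_right_eq_Icc, Finset.sum_Ico_eq_sum_range]
      have he : ∀ i ∈ Finset.range (N + 1 - (n+1)), a^((n+1)+i) = a^(n+1) * a^i :=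
        fun i _ => pow_add a _ _
      rw [Finset.sum_congr rfl he, ← Finset.mul_sum]
      have h10 : ∑ i ∈ Finset.range (N+1-(n+1)), a^i
          = (a^(N+1-(n+1)) - 1)/(a - 1) := geom_sum_eq hane _
      have h11 : (a^(N+1-(n+1)) - 1)/(a-1) ≤ 1/(1-a) := by
        have hswap : (a^(N+1-(n+1)) - 1)/(a-1) = (1 - a^(N+1-(n+1)))/(1-a) := by
          rw [div_eq_div_iff (by linarith : a - 1 ≠ 0) (ne_of_gt h1a')]
          ring
        rw [hswap, div_le_div_iff₀ h1a' h1a']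
        nlinarith [pow_nonneg ha0.le (N+1-(n+1))]
      calc a^(n+1) * ∑ i ∈ Finset.range (N+1-(n+1)), a^i
          ≤ a^(n+1) * (1/(1-a)) := by
            rw [h10]
            exact mul_le_mul_of_nonneg_left h11 (by positivity)
        _ = a^(n+1)/(1-a) := by ring
    have hbn : ((b:ℝ)^n) ≠ 0 := by positivity
    have habne : a*(b:ℝ) - 1 ≠ 0 := by linarith
    have hsum1 : (∑ k ∈ Finset.Icc 1 n, 4*Real.pi*B*(a*(b:ℝ))^k * δ)
        ≤ 4*Real.pi*B*a*(b:ℝ)/(a*(b:ℝ)-1) * a^n := by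
      have he : ∑ k ∈ Finset.Icc 1 n, 4*Real.pi*B*(a*(b:ℝ))^k * δ
          = (4*Real.pi*B*δ) * ∑ k ∈ Finset.Icc 1 n, (a*(b:ℝ))^k := by
        rw [Finset.mul_sum]
        apply Finset.sum_congr rfl
        intro k _
        ring
      rw [he]
      have h12 : (4*Real.pi*B*δ) * (∑ k ∈ Finset.Icc 1 n, (a*(b:ℝ))^k)
          ≤ (4*Real.pi*B*δ) * ((a*(b:ℝ))^(n+1)/(a*(b:ℝ)-1)) :=
        mul_le_mul_of_nonneg_left hgeom1 (by positivity)
      have hee : (a*(b:ℝ))^(n+1) = a^n * a * ((b:ℝ)^n * (b:ℝ)) := by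
        rw [mul_pow, pow_succ, pow_succ]
      have h13 : (4*Real.pi*B*δ) * ((a*(b:ℝ))^(n+1)/(a*(b:ℝ)-1))
          = 4*Real.pi*B*a*(b:ℝ)/(a*(b:ℝ)-1) * a^n := by
        rw [hδ, hee]
        field_simp
      linarith
    have hsum2 : (∑ k ∈ Finset.Icc (n+1) N, 2*B*a^k) ≤ 2*B*a/(1-a) * a^n := by
      have he : ∑ k ∈ Finset.Icc (n+1) N, 2*B*a^k
          = 2*B * ∑ k ∈ Finset.Icc (n+1) N, a^k := by
        rw [Finset.mul_sum]
      rw [he]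
      have h14 : 2*B * (∑ k ∈ Finset.Icc (n+1) N, a^k) ≤ 2*B * (a^(n+1)/(1-a)) :=
        mul_le_mul_of_nonneg_left hgeom2 (by positivity)
      have h15 : 2*B * (a^(n+1)/(1-a)) = 2*B*a/(1-a) * a^n := by
        rw [pow_succ]
        field_simp
      linarith
    rw [hC₀, add_mul]
    linarith [habs, hsplit, hsum1, hsum2]
  -- pass to the limit
  have hlim : Tendsto (fun N => S N t - S N s) atTop (𝓝 (W t - W s)) := (hW t).sub (hW s)
  have hlim2 : Tendsto (fun N => ‖S N t - S N s‖) atTop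
      (𝓝 (‖W t - W s‖)) := (continuous_norm.tendsto _).comp hlim
  have hle : ‖W t - W s‖ ≤ C₀ * a ^ n :=
    le_of_tendsto hlim2 (Filter.Eventually.of_forall key)
  have han : 0 < a^n := pow_pos ha0 n
  nlinarith

/-- For `0 < a < 1`, an integer `b > 1/a`, and bounded `f : ℕ → ℂ`, the
Hausdorff dimensions of the graphs of `|W_{a,b}(f;·)|`, `Re W_{a,b}(f;·)`,
`Im W_{a,b}(f;·)` over `[0,1]` are each at most `2 + log a / log b`. -/
theorem stmt_11 (a : ℝ) (ha0 : 0 < a) (ha1 : a < 1) (b : ℤ) (hb : 1 / a < (b : ℝ))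
    (f : ℕ → ℂ) (B : ℝ) (hf : ∀ k : ℕ, ‖f k‖ ≤ B)
    (W : ℝ → ℂ)
    (hW : ∀ t : ℝ, Tendsto (fun N : ℕ => ∑ k ∈ Finset.Icc 1 N,
        f k * (a : ℂ) ^ k * Complex.exp (2 * Real.pi * Complex.I * ((b : ℂ) ^ k) * (t : ℂ)))
      atTop (𝓝 (W t))) :
    dimH {q : ℝ × ℝ | q.1 ∈ Set.Icc (0 : ℝ) 1 ∧ q.2 = ‖W q.1‖}
        ≤ ENNReal.ofReal (2 + Real.log a / Real.log b) ∧
    dimH {q : ℝ × ℝ | q.1 ∈ Set.Icc (0 : ℝ) 1 ∧ q.2 = (W q.1).re}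
        ≤ ENNReal.ofReal (2 + Real.log a / Real.log b) ∧
    dimH {q : ℝ × ℝ | q.1 ∈ Set.Icc (0 : ℝ) 1 ∧ q.2 = (W q.1).im}
        ≤ ENNReal.ofReal (2 + Real.log a / Real.log b) := by
  obtain ⟨C, hC, hosc⟩ := weierstrass_osc a ha0 ha1 b hb f B hf W hW
  have h1a : (1:ℝ) < 1/a := one_lt_one_div ha0 ha1
  have hb1R : (1:ℝ) < (b:ℝ) := lt_trans h1a hb
  have hb1 : (1:ℤ) < b := by exact_mod_cast hb1R
  set m : ℕ := b.toNat with hmdef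
  have hbm : ((m:ℕ):ℝ) = (b:ℝ) := by
    rw [hmdef]
    exact_mod_cast Int.toNat_of_nonneg (by omega)
  have hm : 2 ≤ m := by omega
  have hab : 1 < a * (m:ℝ) := by
    rw [hbm]
    have := (div_lt_iff₀ ha0).1 hb
    linarith
  have hgoal : ENNReal.ofReal (2 + Real.log a / Real.log (b:ℝ))
      = ENNReal.ofReal (2 + Real.log a / Real.log (m:ℝ)) := by rw [hbm]
  have hoscm : ∀ n : ℕ, ∀ t s : ℝ, |t - s| ≤ ((m:ℝ) ^ n)⁻¹ →
      ‖W t - W s‖ ≤ C * a ^ n := by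
    intro n t s h
    apply hosc n t s
    rwa [hbm] at h
  refine ⟨?_, ?_, ?_⟩
  · rw [hgoal]
    apply graph_dimH_le a ha0 ha1 m hm hab C hC (fun x => ‖W x‖)
    intro n t s h
    calc |‖W t‖ - ‖W s‖| ≤ ‖W t - W s‖ :=
          abs_norm_sub_norm_le _ _
      _ ≤ C * a ^ n := hoscm n t s h
  · rw [hgoal]
    apply graph_dimH_le a ha0 ha1 m hm hab C hC (fun x => (W x).re)
    intro n t s h
    calc |(W t).re - (W s).re| = |(W t - W s).re| := by rw [Complex.sub_re]
      _ ≤ ‖W t - W s‖ := Complex.abs_re_le_norm _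
      _ ≤ C * a ^ n := hoscm n t s h
  · rw [hgoal]
    apply graph_dimH_le a ha0 ha1 m hm hab C hC (fun x => (W x).im)
    intro n t s h
    calc |(W t).im - (W s).im| = |(W t - W s).im| := by rw [Complex.sub_im]
      _ ≤ ‖W t - W s‖ := Complex.abs_im_le_norm _
      _ ≤ C * a ^ n := hoscm n t s h
end

section
/- Let f : ℕ → ℂ be a bounded function. Then the series R(f;t) = Σ_{n=1}^∞ f(n)e^{2πi n² t}/n² converges for every t ∈ ℝ, and R(f;·) is Hölder continuous with exponent 1/2: there exists a constant C₁ > 0 such that |R(f;s) − R(f;t)| ≤ C₁·|s−t|^{1/2} for all s, t ∈ ℝ. Moreover, the same Hölder estimate holds for the real-valued functions t ↦ |R(f;t)|, t ↦ Re R(f;t), and t ↦ Im R(f;t). -/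
open Filter Finset Topology

private lemma tail_sq_le (M : ℕ) (hM : 1 ≤ M) :
    ∑' n : ℕ, (((n + M : ℕ) : ℝ) ^ 2)⁻¹ ≤ 2 / M := by
  have hsum : Summable (fun n : ℕ => (((n + M : ℕ) : ℝ) ^ 2)⁻¹) := by
    have := (summable_nat_add_iff (f := fun n : ℕ => ((n : ℝ) ^ 2)⁻¹) M).2
      (Real.summable_nat_pow_inv.2 one_lt_two)
    exact this
  refine Summable.tsum_le_of_sum_range_le hsum (fun m => ?_)
  have hre : ∑ i ∈ range m, (((i + M : ℕ) : ℝ) ^ 2)⁻¹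
      = ∑ i ∈ Finset.Ico M (M + m), ((i : ℝ) ^ 2)⁻¹ := by
    rw [Finset.sum_Ico_eq_sum_range]
    simp [add_comm, Nat.add_sub_cancel_left]
  rw [hre]
  rcases Nat.eq_zero_or_pos m with rfl | hm
  · simp
    positivity
  have hMm : M < M + m := by omega
  have hsplit : Finset.Ico M (M + m) = insert M (Finset.Ioo M (M + m)) := by
    rw [Finset.Ioo_insert_left hMm]
  rw [hsplit, Finset.sum_insert (by simp)]
  have h1 : ∑ i ∈ Finset.Ioo M (M + m), ((i : ℝ) ^ 2)⁻¹
      ≤ ∑ i ∈ Finset.Ioc M (M + m), ((i : ℝ) ^ 2)⁻¹ := by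
    refine Finset.sum_le_sum_of_subset_of_nonneg (fun x hx => ?_) (fun i _ _ => by positivity)
    simp only [Finset.mem_Ioo, Finset.mem_Ioc] at *
    omega
  have h2 : ∑ i ∈ Finset.Ioc M (M + m), ((i : ℝ) ^ 2)⁻¹ ≤ (M : ℝ)⁻¹ - ((M + m : ℕ) : ℝ)⁻¹ :=
    sum_Ioc_inv_sq_le_sub (by omega) (by omega)
  have hM' : (1 : ℝ) ≤ (M : ℝ) := by exact_mod_cast hM
  have h3 : ((M : ℝ) ^ 2)⁻¹ ≤ (M : ℝ)⁻¹ := by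
    apply inv_anti₀ (by linarith)
    nlinarith
  have h4 : (0 : ℝ) ≤ ((M + m : ℕ) : ℝ)⁻¹ := by positivity
  have : ((M:ℝ))⁻¹ + (M:ℝ)⁻¹ = 2 / M := by ring
  linarith


private noncomputable def Sterm (f : ℕ → ℂ) (t : ℝ) (n : ℕ) : ℂ :=
  f n * Complex.exp (2 * Real.pi * Complex.I * ((n : ℂ) ^ 2) * (t : ℂ)) / ((n : ℂ) ^ 2)

private lemma expo_eq (n : ℕ) (u : ℝ) :
    2 * (Real.pi : ℂ) * Complex.I * ((n : ℂ) ^ 2) * (u : ℂ)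
      = ((2 * Real.pi * (n : ℝ) ^ 2 * u : ℝ) : ℂ) * Complex.I := by
  push_cast; ring

private lemma Sterm_abs {f : ℕ → ℂ} {B : ℝ} (hf : ∀ n, ‖f n‖ ≤ B) (t : ℝ) (n : ℕ) :
    ‖Sterm f t n‖ ≤ B * ((n : ℝ) ^ 2)⁻¹ := by
  simp only [Sterm, norm_div, norm_mul, expo_eq,
    Complex.norm_exp_ofReal_mul_I, mul_one, norm_inv, norm_pow, Complex.norm_natCast, div_eq_mul_inv]
  exact mul_le_mul_of_nonneg_right (hf n) (inv_nonneg.2 (sq_nonneg _))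

private lemma exp_diff_le_lin' (c d : ℝ) :
    ‖Complex.exp (c * Complex.I) - Complex.exp (d * Complex.I)‖ ≤ 2 * |c - d| := by
  have key : Complex.exp (c * Complex.I) - Complex.exp (d * Complex.I)
      = Complex.exp (d * Complex.I) * (Complex.exp (((c - d : ℝ)) * Complex.I) - 1) := by
    rw [mul_sub, ← Complex.exp_add]
    push_cast
    ring_nf
  rw [key, norm_mul, Complex.norm_exp_ofReal_mul_I, one_mul]
  rcases le_or_gt (|c - d|) 1 with h1 | h1
  · have := Complex.norm_exp_sub_one_le (x := ((c - d : ℝ) : ℂ) * Complex.I)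
      (by rwa [norm_mul, Complex.norm_I, mul_one, Complex.norm_real, Real.norm_eq_abs])
    simpa [Complex.norm_I, Complex.norm_real, ← Complex.ofReal_sub] using this
  · calc ‖Complex.exp (((c - d : ℝ)) * Complex.I) - 1‖
        ≤ ‖Complex.exp (((c - d : ℝ)) * Complex.I)‖ + ‖(1 : ℂ)‖ :=
          norm_sub_le _ _
      _ ≤ 2 := by rw [Complex.norm_exp_ofReal_mul_I]; norm_num
      _ ≤ 2 * |c - d| := by nlinarith

private lemma Sterm_diff_sq {f : ℕ → ℂ} {B : ℝ} (hf : ∀ n, ‖f n‖ ≤ B)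
    (s t : ℝ) (n : ℕ) : ‖Sterm f s n - Sterm f t n‖ ≤ 2 * B * ((n : ℝ) ^ 2)⁻¹ :=
  calc ‖Sterm f s n - Sterm f t n‖ ≤ ‖Sterm f s n‖ + ‖Sterm f t n‖ := norm_sub_le _ _
    _ ≤ B * ((n : ℝ) ^ 2)⁻¹ + B * ((n : ℝ) ^ 2)⁻¹ := add_le_add (Sterm_abs hf s n) (Sterm_abs hf t n)
    _ = 2 * B * ((n : ℝ) ^ 2)⁻¹ := by ring

private lemma Sterm_diff_lin {f : ℕ → ℂ} {B : ℝ} (hf : ∀ n, ‖f n‖ ≤ B)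
    (s t : ℝ) (n : ℕ) : ‖Sterm f s n - Sterm f t n‖ ≤ 4 * Real.pi * B * |s - t| := by
  have hB0 : 0 ≤ B := le_trans (norm_nonneg _) (hf 0)
  rcases Nat.eq_zero_or_pos n with rfl | hn
  · simp only [Sterm]
    norm_num
    positivity
  · simp only [Sterm, div_sub_div_same, ← mul_sub, norm_div, norm_mul,
      norm_pow, Complex.norm_natCast, expo_eq]
    have hd := exp_diff_le_lin' (2 * Real.pi * (n : ℝ) ^ 2 * s) (2 * Real.pi * (n : ℝ) ^ 2 * t)
    have hn2 : (0 : ℝ) < (n : ℝ) ^ 2 := by positivity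
    rw [div_le_iff₀ hn2]
    have habs : |2 * Real.pi * (n : ℝ) ^ 2 * s - 2 * Real.pi * (n : ℝ) ^ 2 * t|
        = 2 * Real.pi * (n : ℝ) ^ 2 * |s - t| := by
      rw [← mul_sub, abs_mul, abs_of_nonneg (by positivity : (0 : ℝ) ≤ 2 * Real.pi * (n : ℝ) ^ 2)]
    rw [habs] at hd
    calc ‖f n‖ * ‖Complex.exp (((2 * Real.pi * (n : ℝ) ^ 2 * s : ℝ) : ℂ) * Complex.I)
          - Complex.exp (((2 * Real.pi * (n : ℝ) ^ 2 * t : ℝ) : ℂ) * Complex.I)‖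
        ≤ B * (2 * (2 * Real.pi * (n : ℝ) ^ 2 * |s - t|)) :=
          mul_le_mul (hf n) hd (norm_nonneg _) hB0
      _ = 4 * Real.pi * B * |s - t| * (n : ℝ) ^ 2 := by ring

private lemma Sterm_summable {f : ℕ → ℂ} {B : ℝ} (hf : ∀ n, ‖f n‖ ≤ B) (t : ℝ) :
    Summable (Sterm f t) :=
  Summable.of_norm_bounded ((Real.summable_nat_pow_inv.2 one_lt_two).mul_left B)
    (Sterm_abs hf t)

set_option maxHeartbeats 1000000 in
/-- For bounded `f : ℕ → ℂ`, the generalized Riemann series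
`R(f;t) = ∑ f(n) e^{2πi n² t}/n²` converges and is Hölder continuous with exponent `1/2`,
and likewise for its absolute value, real part, and imaginary part. -/
theorem stmt_13 (f : ℕ → ℂ) (B : ℝ) (hf : ∀ n : ℕ, ‖f n‖ ≤ B) :
    ∃ R : ℝ → ℂ,
      (∀ t : ℝ, Tendsto (fun N : ℕ => ∑ n ∈ Finset.Icc 1 N,
          f n * Complex.exp (2 * Real.pi * Complex.I * ((n : ℂ) ^ 2) * (t : ℂ)) / ((n : ℂ) ^ 2))
        atTop (𝓝 (R t))) ∧
      ∃ C₁ : ℝ, 0 < C₁ ∧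
        (∀ s t : ℝ, ‖R s - R t‖ ≤ C₁ * |s - t| ^ ((1 : ℝ) / 2)) ∧
        (∀ s t : ℝ, |‖R s‖ - ‖R t‖| ≤ C₁ * |s - t| ^ ((1 : ℝ) / 2)) ∧
        (∀ s t : ℝ, |(R s).re - (R t).re| ≤ C₁ * |s - t| ^ ((1 : ℝ) / 2)) ∧
        (∀ s t : ℝ, |(R s).im - (R t).im| ≤ C₁ * |s - t| ^ ((1 : ℝ) / 2)) := by
  have hB0 : 0 ≤ B := le_trans (norm_nonneg _) (hf 0)
  have hsq : Summable (fun n : ℕ => ((n : ℝ) ^ 2)⁻¹) := Real.summable_nat_pow_inv.2 one_lt_two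
  have hsum : ∀ t : ℝ, Summable (Sterm f t) := Sterm_summable hf
  set C₁ : ℝ := 50 * (B + 1) with hC
  have hC0 : 0 < C₁ := by positivity
  have hD : ∀ s t : ℝ, Summable (fun n => ‖Sterm f s n - Sterm f t n‖) := fun s t =>
    Summable.of_nonneg_of_le (fun n => norm_nonneg _) (Sterm_diff_sq hf s t)
      (hsq.mul_left (2 * B))
  have key : ∀ s t : ℝ, ‖(∑' n, Sterm f s n) - ∑' n, Sterm f t n‖
      ≤ C₁ * |s - t| ^ ((1 : ℝ) / 2) := by
    intro s t
    rcases eq_or_ne s t with rfl | hst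
    · simp only [sub_self, norm_zero]
      positivity
    have h0 : 0 < |s - t| := abs_pos.2 (sub_ne_zero.2 hst)
    have hrw : (∑' n, Sterm f s n) - ∑' n, Sterm f t n = ∑' n, (Sterm f s n - Sterm f t n) :=
      (Summable.tsum_sub (hsum s) (hsum t)).symm
    have h1 : ‖(∑' n, Sterm f s n) - ∑' n, Sterm f t n‖
        ≤ ∑' n, ‖Sterm f s n - Sterm f t n‖ := by
      rw [hrw]
      exact norm_tsum_le_tsum_norm (hD s t)
    have hsqrt : |s - t| ^ ((1 : ℝ) / 2) = Real.sqrt |s - t| := (Real.sqrt_eq_rpow _).symm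
    rw [hsqrt]
    rcases le_or_gt 1 |s - t| with hge | hlt
    · -- |s - t| ≥ 1
      have h2 : ∑' n, ‖Sterm f s n - Sterm f t n‖ ≤ ∑' n : ℕ, 2 * B * ((n : ℝ) ^ 2)⁻¹ :=
        Summable.tsum_le_tsum (Sterm_diff_sq hf s t) (hD s t) (hsq.mul_left (2 * B))
      have h3 : ∑' n : ℕ, 2 * B * ((n : ℝ) ^ 2)⁻¹ = 2 * B * ∑' n : ℕ, ((n : ℝ) ^ 2)⁻¹ :=
        tsum_mul_left
      have h4 : ∑' n : ℕ, ((n : ℝ) ^ 2)⁻¹ ≤ 2 := by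
        rw [Summable.tsum_eq_zero_add hsq]
        have h5 := tail_sq_le 1 le_rfl
        norm_num at h5 ⊢
        exact h5
      have hr1 : (1 : ℝ) ≤ Real.sqrt |s - t| := by
        nlinarith [Real.sq_sqrt (abs_nonneg (s - t)), Real.sqrt_nonneg |s - t|]
      have htsumnn : 0 ≤ ∑' n : ℕ, ((n : ℝ) ^ 2)⁻¹ :=
        tsum_nonneg fun n => by positivity
      calc ‖(∑' n, Sterm f s n) - ∑' n, Sterm f t n‖
          ≤ ∑' n, ‖Sterm f s n - Sterm f t n‖ := h1
        _ ≤ 2 * B * ∑' n : ℕ, ((n : ℝ) ^ 2)⁻¹ := h2.trans_eq h3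
        _ ≤ 2 * B * 2 := by nlinarith
        _ ≤ C₁ * Real.sqrt |s - t| := by nlinarith
    · -- 0 < |s - t| < 1
      set r := Real.sqrt |s - t| with hrdef
      have hr0 : 0 < r := Real.sqrt_pos.2 h0
      have hrr : r * r = |s - t| := Real.mul_self_sqrt (abs_nonneg _)
      have hr1 : r < 1 := by nlinarith
      have hri : r * r⁻¹ = 1 := mul_inv_cancel₀ hr0.ne'
      have hrinv : 1 ≤ r⁻¹ := by nlinarith [inv_nonneg.2 hr0.le]
      obtain ⟨N, hNge, hNle⟩ : ∃ N : ℕ, r⁻¹ ≤ (N : ℝ) ∧ (N : ℝ) ≤ r⁻¹ + 1 :=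
        ⟨⌈r⁻¹⌉₊, Nat.le_ceil _, (Nat.ceil_lt_add_one (by positivity)).le⟩
      have hsplit := (Summable.sum_add_tsum_nat_add (f := fun n => ‖Sterm f s n - Sterm f t n‖)
        (N + 1) (hD s t)).symm
      have hfirst : ∑ n ∈ Finset.range (N + 1), ‖Sterm f s n - Sterm f t n‖
          ≤ ((N : ℝ) + 1) * (4 * Real.pi * B * |s - t|) := by
        have h5 := Finset.sum_le_card_nsmul (Finset.range (N + 1)) _
          (4 * Real.pi * B * |s - t|) (fun n _ => Sterm_diff_lin hf s t n)
        rw [Finset.card_range, nsmul_eq_mul] at h5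
        push_cast at h5
        linarith
      have hN3 : (N : ℝ) + 1 ≤ 3 * r⁻¹ := by nlinarith
      have hNr : ((N : ℝ) + 1) * r ≤ 3 := by
        nlinarith [mul_le_mul_of_nonneg_right hN3 hr0.le, inv_mul_cancel₀ hr0.ne']
      have hfirst2 : ((N : ℝ) + 1) * (4 * Real.pi * B * |s - t|) ≤ 12 * Real.pi * B * r := by
        rw [← hrr]
        nlinarith [mul_le_mul_of_nonneg_left hNr
          (by positivity : (0 : ℝ) ≤ 4 * Real.pi * B * r)]
      have htail : ∑' n : ℕ, ‖Sterm f s (n + (N + 1)) - Sterm f t (n + (N + 1))‖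
          ≤ 2 * B * (2 / (((N + 1 : ℕ)) : ℝ)) := by
        have hs1 : Summable (fun n : ℕ => ‖Sterm f s (n + (N + 1)) - Sterm f t (n + (N + 1))‖) :=
          (summable_nat_add_iff (N + 1)).2 (hD s t)
        have hs2 : Summable (fun n : ℕ => 2 * B * (((n + (N + 1) : ℕ) : ℝ) ^ 2)⁻¹) :=
          ((summable_nat_add_iff (N + 1)).2 hsq).mul_left _
        have h6 : ∑' n : ℕ, ‖Sterm f s (n + (N + 1)) - Sterm f t (n + (N + 1))‖
            ≤ ∑' n : ℕ, 2 * B * (((n + (N + 1) : ℕ) : ℝ) ^ 2)⁻¹ :=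
          Summable.tsum_le_tsum (fun n => Sterm_diff_sq hf s t (n + (N + 1))) hs1 hs2
        have h7 : ∑' n : ℕ, 2 * B * (((n + (N + 1) : ℕ) : ℝ) ^ 2)⁻¹
            = 2 * B * ∑' n : ℕ, (((n + (N + 1) : ℕ) : ℝ) ^ 2)⁻¹ := tsum_mul_left
        have h8 := tail_sq_le (N + 1) (by omega)
        have h9 : 0 ≤ (2 : ℝ) * B := by positivity
        calc ∑' n : ℕ, ‖Sterm f s (n + (N + 1)) - Sterm f t (n + (N + 1))‖
            ≤ 2 * B * ∑' n : ℕ, (((n + (N + 1) : ℕ) : ℝ) ^ 2)⁻¹ := h6.trans_eq h7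
          _ ≤ 2 * B * (2 / (((N + 1 : ℕ)) : ℝ)) := mul_le_mul_of_nonneg_left h8 h9
      have hNpos : (0 : ℝ) < (N : ℝ) + 1 := by positivity
      have htail2 : 2 / (((N + 1 : ℕ)) : ℝ) ≤ 2 * r := by
        push_cast
        rw [div_le_iff₀ hNpos]
        nlinarith [mul_le_mul_of_nonneg_left hNge hr0.le]
      have htail3 : 2 * B * (2 / (((N + 1 : ℕ)) : ℝ)) ≤ 2 * B * (2 * r) :=
        mul_le_mul_of_nonneg_left htail2 (by positivity)
      calc ‖(∑' n, Sterm f s n) - ∑' n, Sterm f t n‖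
          ≤ ∑' n, ‖Sterm f s n - Sterm f t n‖ := h1
        _ = (∑ n ∈ Finset.range (N + 1), ‖Sterm f s n - Sterm f t n‖)
            + ∑' n : ℕ, ‖Sterm f s (n + (N + 1)) - Sterm f t (n + (N + 1))‖ := hsplit
        _ ≤ 12 * Real.pi * B * r + 2 * B * (2 * r) :=
            add_le_add (hfirst.trans hfirst2) (htail.trans htail3)
        _ ≤ C₁ * r := by nlinarith [Real.pi_lt_d2, Real.pi_pos, mul_nonneg hB0 hr0.le]
  refine ⟨fun t => ∑' n, Sterm f t n, fun t => ?_, C₁, hC0, key, fun s t => ?_,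
    fun s t => ?_, fun s t => ?_⟩
  · have h0 : Sterm f t 0 = 0 := by simp [Sterm]
    have heq : ∀ N : ℕ, (∑ n ∈ Finset.Icc 1 N,
        f n * Complex.exp (2 * Real.pi * Complex.I * ((n : ℂ) ^ 2) * (t : ℂ)) / ((n : ℂ) ^ 2))
        = ∑ n ∈ Finset.range (N + 1), Sterm f t n := by
      intro N
      rw [show Finset.Icc 1 N = (Finset.range (N + 1)).erase 0 by
        ext x
        simp only [Finset.mem_Icc, Finset.mem_erase, Finset.mem_range]
        omega]
      exact (Finset.sum_erase _ h0).symm ▸ rfl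
    have h2 := ((hsum t).hasSum.tendsto_sum_nat).comp (tendsto_add_atTop_nat 1)
    exact h2.congr fun N => (heq N).symm
  · exact le_trans (abs_norm_sub_norm_le _ _) (key s t)
  · have h := Complex.abs_re_le_norm ((∑' n, Sterm f s n) - ∑' n, Sterm f t n)
    rw [Complex.sub_re] at h
    exact h.trans (key s t)
  · have h := Complex.abs_im_le_norm ((∑' n, Sterm f s n) - ∑' n, Sterm f t n)
    rw [Complex.sub_im] at h
    exact h.trans (key s t)
end

section
/- Let μ denote the Möbius function. Suppose that for every ε > 0 there exists a constant C_ε > 0 such that |Σ_{1 ≤ n ≤ x} μ(n)e^{2πint}| ≤ C_ε·x^{3/4+ε} for all real x ≥ 1 and all t ∈ ℝ (this estimate holds under the Generalized Riemann Hypothesis). Then the series F(μ;t) = Σ_{n=1}^∞ μ(n)e^{2πint}/n converges for every t ∈ ℝ, and for every ε with 0 < ε < 1/4 the function F(μ;·) is Hölder continuous with exponent 1/4 − ε: there exists a constant C₁ > 0 such that |F(μ;s) − F(μ;t)| ≤ C₁·|s−t|^{1/4−ε} for all s, t ∈ ℝ. The same Hölder estimate holds for t ↦ |F(μ;t)|,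 t ↦ Re F(μ;t), and t ↦ Im F(μ;t). -/
open Filter Finset Topology

noncomputable section Stmt15Aux

noncomputable def Complex.abs : AbsoluteValue ℂ ℝ := NormedField.toAbsoluteValue ℂ

theorem Complex.norm_eq_abs (z : ℂ) : ‖z‖ = Complex.abs z := rfl

theorem Complex.abs_intCast (n : ℤ) : Complex.abs (n : ℂ) = |(n : ℝ)| := by
  show ‖(n : ℂ)‖ = |(n : ℝ)|
  exact Complex.norm_intCast n

theorem Complex.abs_ofReal (r : ℝ) : Complex.abs (r : ℂ) = |r| := by
  show ‖(r : ℂ)‖ = |r|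
  simp

theorem Complex.abs_I : Complex.abs Complex.I = 1 := by
  show ‖Complex.I‖ = 1
  simp

theorem Complex.abs_two : Complex.abs 2 = 2 := by
  show ‖(2 : ℂ)‖ = 2
  simp

theorem Complex.continuous_abs : Continuous Complex.abs := continuous_norm

theorem Complex.abs_exp_ofReal_mul_I (x : ℝ) :
    Complex.abs (Complex.exp (x * Complex.I)) = 1 :=
  Complex.norm_exp_ofReal_mul_I x

namespace Stmt15Aux

def aa (t : ℝ) (n : ℕ) : ℂ :=
  (ArithmeticFunction.moebius n : ℂ) *
    Complex.exp (2 * Real.pi * Complex.I * (n : ℂ) * (t : ℂ))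

def SS (t : ℝ) (N : ℕ) : ℂ := ∑ n ∈ Finset.Icc 1 N, aa t n

def PP (t : ℝ) (N : ℕ) : ℂ := ∑ n ∈ Finset.Icc 1 N, aa t n / (n : ℂ)

lemma abs_aa_le_one (t : ℝ) (n : ℕ) : Complex.abs (aa t n) ≤ 1 := by
  have h1 : (2 * Real.pi * Complex.I * (n : ℂ) * (t : ℂ))
      = ((2 * Real.pi * n * t : ℝ) : ℂ) * Complex.I := by push_cast; ring
  have h2 : Complex.abs (Complex.exp (2 * Real.pi * Complex.I * (n : ℂ) * (t : ℂ))) = 1 := by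
    rw [h1, Complex.abs_exp_ofReal_mul_I]
  rw [aa, map_mul, h2, mul_one]
  have : Complex.abs ((ArithmeticFunction.moebius n : ℤ) : ℂ)
      = |(ArithmeticFunction.moebius n : ℤ)| := by
    rw [Complex.abs_intCast]
    exact_mod_cast rfl
  rw [this]
  exact_mod_cast ArithmeticFunction.abs_moebius_le_one

lemma PP_sub (t : ℝ) {M N : ℕ} (h : M ≤ N) :
    PP t N - PP t M = ∑ n ∈ Finset.Ioc M N, aa t n / (n : ℂ) := by
  have h0 : ∀ K, PP t K = ∑ n ∈ Finset.Ioc 0 K, aa t n / (n : ℂ) := by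
    intro K; rw [PP, ← Finset.Icc_add_one_left_eq_Ioc]; rfl
  rw [h0, h0, ← Finset.sum_Ioc_consecutive _ (Nat.zero_le M) h]
  ring

lemma abel (t : ℝ) (M : ℕ) : ∀ N, M ≤ N →
    PP t N - PP t M = (∑ n ∈ Finset.Ioc M N, SS t n * (1/(n:ℂ) - 1/((n:ℂ)+1)))
      + SS t N / ((N:ℂ)+1) - SS t M / ((M:ℂ)+1) := by
  intro N hN
  induction N, hN using Nat.le_induction with
  | base => simp
  | succ N hMN ih =>
    have hne : ∀ K : ℕ, ((K:ℂ)+1) ≠ 0 := by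
      intro K
      have : ((K+1 : ℕ) : ℂ) ≠ 0 := Nat.cast_ne_zero.2 (Nat.succ_ne_zero K)
      push_cast at this; exact this
    have h1 : PP t (N+1) - PP t M = (PP t N - PP t M) + aa t (N+1) / ((N:ℂ)+1) := by
      rw [PP, Finset.sum_Icc_succ_top (by omega), ← PP]
      push_cast
      ring
    have h2 : SS t (N+1) = SS t N + aa t (N+1) := by
      rw [SS, Finset.sum_Icc_succ_top (by omega), ← SS]
    have h3 : (∑ n ∈ Finset.Ioc M (N+1), SS t n * (1/(n:ℂ) - 1/((n:ℂ)+1)))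
        = (∑ n ∈ Finset.Ioc M N, SS t n * (1/(n:ℂ) - 1/((n:ℂ)+1)))
          + SS t (N+1) * (1/((N:ℂ)+1) - 1/((N:ℂ)+2)) := by
      rw [Finset.sum_Ioc_succ_top hMN]
      push_cast
      ring
    rw [h1, ih, h3, h2]
    have hN1 := hne N
    have hN2 : ((N:ℂ)+2) ≠ 0 := by
      have h := hne (N+1)
      push_cast at h
      intro hcon; apply h; rw [← hcon]; ring
    have hM1 := hne M
    have hN2' : ((N:ℂ)+1+1) ≠ 0 := by rw [show ((N:ℂ)+1+1) = (N:ℂ)+2 by ring]; exact hN2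
    push_cast
    field_simp
    ring

lemma key_ineq {r : ℝ} (hr0 : 0 < r) (hr1 : r ≤ 1) {x : ℝ} (hx : 1 ≤ x) :
    (x+1) ^ (-(1+r)) ≤ (1/r) * (x ^ (-r) - (x+1) ^ (-r)) := by
  have hx0 : (0:ℝ) < x := lt_of_lt_of_le one_pos hx
  have hu0 : (0:ℝ) < x + 1 := by linarith
  set a := x ^ r with ha_def
  set b := (x+1) ^ r with hb_def
  have ha : 0 < a := Real.rpow_pos_of_pos hx0 r
  have hb : 0 < b := Real.rpow_pos_of_pos hu0 r
  have hab : a ≤ b := Real.rpow_le_rpow hx0.le (by linarith) hr0.le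
  -- Bernoulli step : a ≤ b * (1 - r/(x+1))
  have hfrac : x = (x+1) * (1 + (-(1/(x+1)))) := by field_simp; ring
  have hbern : (1 + (-(1/(x+1)))) ^ r ≤ 1 + r * (-(1/(x+1))) := by
    apply rpow_one_add_le_one_add_mul_self _ hr0.le hr1
    have h1 : 1/(x+1) ≤ 1 := by
      rw [div_le_one hu0]; linarith
    linarith
  have hmul : a ≤ b * (1 + r * (-(1/(x+1)))) := by
    have h0 : (0:ℝ) ≤ 1 + (-(1/(x+1))) := by
      have : 1/(x+1) ≤ 1 := by rw [div_le_one hu0]; linarith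
      linarith
    calc a = ((x+1) * (1 + (-(1/(x+1))))) ^ r := by rw [← hfrac]
    _ = b * (1 + (-(1/(x+1)))) ^ r := by
        rw [Real.mul_rpow hu0.le h0]
    _ ≤ b * (1 + r * (-(1/(x+1)))) := by
        exact mul_le_mul_of_nonneg_left hbern hb.le
  have hkey : r * b / (x+1) ≤ b - a := by
    have : b * (1 + r * (-(1/(x+1)))) = b - r * b / (x+1) := by field_simp; ring
    rw [this] at hmul; linarith
  -- now conclude
  have hxa : x ^ (-r) = a⁻¹ := by rw [Real.rpow_neg hx0.le]
  have hub : (x+1) ^ (-r) = b⁻¹ := by rw [Real.rpow_neg hu0.le]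
  have hur : (x+1) ^ (-(1+r)) = ((x+1) * b)⁻¹ := by
    rw [Real.rpow_neg hu0.le, Real.rpow_one_add' hu0.le (by positivity)]
  rw [hxa, hub, hur]
  have hdiff : a⁻¹ - b⁻¹ = (b - a) / (a * b) := by field_simp
  have hstep : r * ((x+1) * b)⁻¹ ≤ a⁻¹ - b⁻¹ := by
    rw [hdiff, show r * ((x+1) * b)⁻¹ = r / ((x+1)*b) from (div_eq_mul_inv r _).symm]
    calc r / ((x+1)*b) ≤ r / ((x+1)*a) := by gcongr
    _ = (r * b/(x+1)) / (a*b) := by field_simp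
    _ ≤ (b - a) / (a*b) := by gcongr
  calc ((x+1) * b)⁻¹ = (1/r) * (r * ((x+1) * b)⁻¹) := by field_simp
  _ ≤ (1/r) * (a⁻¹ - b⁻¹) := mul_le_mul_of_nonneg_left hstep (by positivity)

lemma tail_sum {r : ℝ} (hr0 : 0 < r) (hr1 : r ≤ 1) {M : ℕ} (hM : 1 ≤ M) :
    ∀ N, M ≤ N → ∑ n ∈ Finset.Ioc M N, ((n:ℝ)) ^ (-(1+r))
      ≤ (1/r) * ((M:ℝ) ^ (-r) - (N:ℝ) ^ (-r)) := by
  intro N hN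
  induction N, hN using Nat.le_induction with
  | base => simp
  | succ N hMN ih =>
    rw [Finset.sum_Ioc_succ_top hMN]
    have hx : (1:ℝ) ≤ (N:ℝ) := by exact_mod_cast le_trans hM hMN
    have hk := key_ineq hr0 hr1 hx
    have hcast : ((N+1 : ℕ) : ℝ) = (N:ℝ) + 1 := by push_cast; ring
    rw [hcast]
    calc (∑ n ∈ Finset.Ioc M N, ((n:ℝ)) ^ (-(1+r))) + ((N:ℝ)+1) ^ (-(1+r))
        ≤ (1/r) * ((M:ℝ) ^ (-r) - (N:ℝ) ^ (-r))
          + (1/r) * ((N:ℝ) ^ (-r) - ((N:ℝ)+1) ^ (-r)) := add_le_add ih hk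
      _ = (1/r) * ((M:ℝ) ^ (-r) - ((N:ℝ)+1) ^ (-r)) := by ring

lemma cauchy_est {ε C : ℝ} (hε : 0 < ε) (hε4 : ε < 1/4) (hC : 0 < C)
    (hB : ∀ N : ℕ, 1 ≤ N → ∀ t : ℝ, Complex.abs (SS t N) ≤ C * (N:ℝ) ^ ((3:ℝ)/4 + ε))
    {M N : ℕ} (hM : 1 ≤ M) (hMN : M ≤ N) (t : ℝ) :
    Complex.abs (PP t N - PP t M)
      ≤ C * (1/(1/4-ε) + 2) * (M:ℝ) ^ (-(1/4-ε)) := by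
  set r : ℝ := 1/4 - ε with hr_def
  have hr0 : 0 < r := by rw [hr_def]; linarith
  have hr1 : r ≤ 1 := by rw [hr_def]; linarith
  have hMR : (1:ℝ) ≤ (M:ℝ) := by exact_mod_cast hM
  have hMpos : (0:ℝ) < M := by linarith
  have hNR : (1:ℝ) ≤ (N:ℝ) := by
    exact_mod_cast le_trans hM hMN
  have hNpos : (0:ℝ) < N := by linarith
  -- bound each summand
  have hterm : ∀ n ∈ Finset.Ioc M N,
      Complex.abs (SS t n * (1/(n:ℂ) - 1/((n:ℂ)+1))) ≤ C * ((n:ℝ)) ^ (-(1+r)) := by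
    intro n hn
    have hn1 : 1 ≤ n := le_trans hM (Finset.mem_Ioc.1 hn).1.le
    have hnR : (1:ℝ) ≤ (n:ℝ) := by exact_mod_cast hn1
    have hnpos : (0:ℝ) < n := by linarith
    have hdab : Complex.abs (1/(n:ℂ) - 1/((n:ℂ)+1)) = 1/(n:ℝ) - 1/((n:ℝ)+1) := by
      have he : (1/(n:ℂ) - 1/((n:ℂ)+1)) = (((1/(n:ℝ) - 1/((n:ℝ)+1)) : ℝ) : ℂ) := by
        have h1 : ((n:ℝ):ℂ) = (n:ℂ) := by push_cast; rfl
        push_cast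
        field_simp
      rw [he, Complex.abs_ofReal, abs_of_nonneg]
      have : 1/((n:ℝ)+1) ≤ 1/(n:ℝ) := one_div_le_one_div_of_le hnpos (by linarith)
      linarith
    rw [map_mul, hdab]
    have hd2 : 1/(n:ℝ) - 1/((n:ℝ)+1) ≤ (n:ℝ) ^ (-(2:ℝ)) := by
      have he : 1/(n:ℝ) - 1/((n:ℝ)+1) = 1/((n:ℝ)*((n:ℝ)+1)) := by field_simp; ring
      rw [he, Real.rpow_neg hnpos.le, show ((2:ℝ)) = ((2:ℕ):ℝ) by norm_num,
        Real.rpow_natCast]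
      rw [one_div]
      apply inv_anti₀ (by positivity)
      nlinarith
    calc Complex.abs (SS t n) * (1/(n:ℝ) - 1/((n:ℝ)+1))
        ≤ (C * (n:ℝ) ^ ((3:ℝ)/4 + ε)) * ((n:ℝ) ^ (-(2:ℝ))) := by
          apply mul_le_mul (hB n hn1 t) hd2 _ (by positivity)
          have : 1/((n:ℝ)+1) ≤ 1/(n:ℝ) := one_div_le_one_div_of_le hnpos (by linarith)
          linarith
      _ = C * ((n:ℝ)) ^ (-(1+r)) := by
          rw [mul_assoc, ← Real.rpow_add hnpos]
          congr 1
          congr 1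
          rw [hr_def]; ring
  have hMr_pos : (0:ℝ) < (M:ℝ) ^ (-r) := Real.rpow_pos_of_pos hMpos _
  have hbound : ∀ K : ℕ, M ≤ K → Complex.abs (SS t K / ((K:ℂ)+1)) ≤ C * (M:ℝ) ^ (-r) := by
    intro K hMK
    have hK1 : 1 ≤ K := le_trans hM hMK
    have hKR : (1:ℝ) ≤ (K:ℝ) := by exact_mod_cast hK1
    have hKpos : (0:ℝ) < K := by linarith
    have h1 : Complex.abs (SS t K / ((K:ℂ)+1)) = Complex.abs (SS t K) / ((K:ℝ)+1) := by
      rw [map_div₀]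
      congr 1
      rw [show ((K:ℂ)+1) = (((K:ℝ)+1 : ℝ) : ℂ) by push_cast; ring,
        Complex.abs_ofReal, abs_of_nonneg (by linarith)]
    rw [h1]
    calc Complex.abs (SS t K) / ((K:ℝ)+1) ≤ (C * (K:ℝ)^((3:ℝ)/4+ε)) / (K:ℝ) :=
          div_le_div₀ (by positivity) (hB K hK1 t) hKpos (by linarith)
      _ = C * (K:ℝ)^(-r) := by
          rw [mul_div_assoc, div_eq_mul_inv, ← Real.rpow_neg_one (K:ℝ),
            ← Real.rpow_add hKpos]
          congr 1
          rw [hr_def]; ring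
      _ ≤ C * (M:ℝ)^(-r) :=
          mul_le_mul_of_nonneg_left (Real.rpow_le_rpow_of_nonpos hMpos
            (Nat.cast_le.2 hMK) (neg_nonpos.2 hr0.le)) hC.le
  have habel := abel t M N hMN
  rw [habel]
  have hsum : Complex.abs (∑ n ∈ Finset.Ioc M N, SS t n * (1/(n:ℂ) - 1/((n:ℂ)+1)))
      ≤ C * (1/r) * (M:ℝ) ^ (-r) := by
    calc Complex.abs (∑ n ∈ Finset.Ioc M N, SS t n * (1/(n:ℂ) - 1/((n:ℂ)+1)))
        ≤ ∑ n ∈ Finset.Ioc M N, Complex.abs (SS t n * (1/(n:ℂ) - 1/((n:ℂ)+1))) :=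
          Complex.abs.sum_le _ _
      _ ≤ ∑ n ∈ Finset.Ioc M N, C * ((n:ℝ)) ^ (-(1+r)) := Finset.sum_le_sum hterm
      _ = C * ∑ n ∈ Finset.Ioc M N, ((n:ℝ)) ^ (-(1+r)) := by rw [Finset.mul_sum]
      _ ≤ C * ((1/r) * ((M:ℝ) ^ (-r) - (N:ℝ) ^ (-r))) :=
          mul_le_mul_of_nonneg_left (tail_sum hr0 hr1 hM N hMN) hC.le
      _ ≤ C * (1/r) * (M:ℝ) ^ (-r) := by
          have hNr : (0:ℝ) ≤ (N:ℝ) ^ (-r) := (Real.rpow_pos_of_pos hNpos _).le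
          have h1r : (0:ℝ) ≤ 1/r := by positivity
          rw [mul_assoc]
          apply mul_le_mul_of_nonneg_left _ hC.le
          apply mul_le_mul_of_nonneg_left _ h1r
          linarith
  calc Complex.abs ((∑ n ∈ Finset.Ioc M N, SS t n * (1/(n:ℂ) - 1/((n:ℂ)+1)))
          + SS t N / ((N:ℂ)+1) - SS t M / ((M:ℂ)+1))
      ≤ Complex.abs ((∑ n ∈ Finset.Ioc M N, SS t n * (1/(n:ℂ) - 1/((n:ℂ)+1)))
          + SS t N / ((N:ℂ)+1)) + Complex.abs (SS t M / ((M:ℂ)+1)) := by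
        rw [sub_eq_add_neg]
        refine (Complex.abs.add_le _ _).trans ?_
        rw [AbsoluteValue.map_neg]
    _ ≤ Complex.abs (∑ n ∈ Finset.Ioc M N, SS t n * (1/(n:ℂ) - 1/((n:ℂ)+1)))
          + Complex.abs (SS t N / ((N:ℂ)+1)) + Complex.abs (SS t M / ((M:ℂ)+1)) := by
        have := Complex.abs.add_le (∑ n ∈ Finset.Ioc M N,
          SS t n * (1/(n:ℂ) - 1/((n:ℂ)+1))) (SS t N / ((N:ℂ)+1))
        linarith
    _ ≤ C * (1/r) * (M:ℝ) ^ (-r) + C * (M:ℝ) ^ (-r) + C * (M:ℝ) ^ (-r) := by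
        have h1 := hbound N hMN
        have h2 := hbound M le_rfl
        linarith [hsum]
    _ = C * (1/(1/4-ε) + 2) * (M:ℝ) ^ (-(1/4-ε)) := by
        rw [← hr_def]; ring

lemma hasDerivAt_PP (N : ℕ) (t : ℝ) :
    HasDerivAt (fun u : ℝ => PP u N) (2 * Real.pi * Complex.I * SS t N) t := by
  have hterm : ∀ n ∈ Finset.Icc 1 N, HasDerivAt (fun u : ℝ => aa u n / (n:ℂ))
      ((ArithmeticFunction.moebius n : ℂ) * ((2 * Real.pi * Complex.I * (n:ℂ)) *
        Complex.exp (2 * Real.pi * Complex.I * (n : ℂ) * (t : ℂ))) / (n:ℂ)) t := by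
    intro n hn
    have h1 : HasDerivAt (fun u : ℝ => ((u : ℝ) : ℂ)) 1 t := by
      simpa using (hasDerivAt_id t).ofReal_comp
    have h2 : HasDerivAt (fun u : ℝ => (2 * Real.pi * Complex.I * (n:ℂ)) * (u : ℂ))
        (2 * Real.pi * Complex.I * (n:ℂ)) t := by
      simpa using h1.const_mul (2 * Real.pi * Complex.I * (n:ℂ))
    have h3 : HasDerivAt (fun u : ℝ => Complex.exp ((2 * Real.pi * Complex.I * (n:ℂ)) * (u : ℂ)))
        ((2 * Real.pi * Complex.I * (n:ℂ)) *
          Complex.exp ((2 * Real.pi * Complex.I * (n:ℂ)) * (t : ℂ))) t := by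
      simpa [mul_comm] using h2.cexp
    have h4 := (h3.const_mul ((ArithmeticFunction.moebius n : ℤ) : ℂ)).div_const (n:ℂ)
    exact h4
  have h := HasDerivAt.fun_sum hterm
  have heq : (∑ n ∈ Finset.Icc 1 N, (ArithmeticFunction.moebius n : ℂ) *
      ((2 * Real.pi * Complex.I * (n:ℂ)) *
        Complex.exp (2 * Real.pi * Complex.I * (n : ℂ) * (t : ℂ))) / (n:ℂ))
      = 2 * Real.pi * Complex.I * SS t N := by
    rw [SS, Finset.mul_sum]
    apply Finset.sum_congr rfl
    intro n hn
    have hn0 : (n:ℂ) ≠ 0 := Nat.cast_ne_zero.2 (by have := (Finset.mem_Icc.1 hn).1; omega)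
    rw [aa]
    field_simp
  rw [← heq]
  exact h

lemma lip_PP {ε C : ℝ} (hC : 0 < C)
    (hB : ∀ N : ℕ, 1 ≤ N → ∀ t : ℝ, Complex.abs (SS t N) ≤ C * (N:ℝ) ^ ((3:ℝ)/4 + ε))
    {N : ℕ} (hN : 1 ≤ N) (s t : ℝ) :
    Complex.abs (PP s N - PP t N)
      ≤ (2 * Real.pi * (C * (N:ℝ) ^ ((3:ℝ)/4 + ε))) * |s - t| := by
  have hmvt := Convex.norm_image_sub_le_of_norm_hasDerivWithin_le
    (f := fun u : ℝ => PP u N) (f' := fun u : ℝ => 2 * Real.pi * Complex.I * SS u N)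
    (fun u _ => (hasDerivAt_PP N u).hasDerivWithinAt)
    (C := 2 * Real.pi * (C * (N:ℝ) ^ ((3:ℝ)/4 + ε)))
    (fun u _ => by
      show ‖2 * (Real.pi : ℂ) * Complex.I * SS u N‖ ≤ 2 * Real.pi * (C * (N:ℝ) ^ ((3:ℝ)/4 + ε))
      have he : ‖2 * (Real.pi : ℂ) * Complex.I * SS u N‖
          = 2 * Real.pi * Complex.abs (SS u N) := by
        rw [Complex.norm_eq_abs, map_mul, map_mul, map_mul, Complex.abs_I,
          Complex.abs_two, Complex.abs_ofReal, abs_of_pos Real.pi_pos, mul_one]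
      rw [he]
      exact mul_le_mul_of_nonneg_left (hB N hN u) (by positivity))
    convex_univ (Set.mem_univ t) (Set.mem_univ s)
  rw [show Complex.abs (PP s N - PP t N) = ‖PP s N - PP t N‖ from rfl,
    show |s - t| = ‖s - t‖ from rfl]
  exact hmvt

lemma abs_PP_one (t : ℝ) : Complex.abs (PP t 1) ≤ 1 := by
  have : PP t 1 = aa t 1 / ((1:ℕ):ℂ) := by rw [PP, Finset.Icc_self, Finset.sum_singleton]
  rw [this]
  simpa using abs_aa_le_one t 1

lemma dist_bound {D r : ℝ} (hD : 0 < D) (hr0 : 0 < r) (hr1 : r ≤ 1) (t : ℝ)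
    (hest : ∀ {M N : ℕ}, 1 ≤ M → M ≤ N →
      Complex.abs (PP t N - PP t M) ≤ D * (M:ℝ) ^ (-r)) :
    ∀ N n m : ℕ, N ≤ n → N ≤ m →
      dist (PP t n) (PP t m) ≤ (2*D+2) * ((N:ℝ)+1) ^ (-r) := by
  have hbase : ∀ N : ℕ, (0:ℝ) < ((N:ℝ)+1) ^ (-r) := by
    intro N; apply Real.rpow_pos_of_pos; positivity
  have key : ∀ N n m : ℕ, N ≤ n → N ≤ m → m ≤ n →
      dist (PP t n) (PP t m) ≤ (2*D+2) * ((N:ℝ)+1) ^ (-r) := by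
    intro N n m hn hm hmn
    rw [Complex.dist_eq]
    rcases Nat.eq_zero_or_pos m with h0 | h1m
    · subst h0
      have hN0 : N = 0 := Nat.le_zero.1 hm
      subst hN0
      have hPP0 : PP t 0 = 0 := by rw [PP]; simp
      rw [hPP0, sub_zero]
      have hb : ((0:ℕ):ℝ) + 1 = 1 := by norm_num
      rw [hb, Real.one_rpow, mul_one]
      rcases Nat.eq_zero_or_pos n with hn0 | hn1
      · subst hn0; rw [hPP0]; simp; linarith
      · calc Complex.abs (PP t n)
            ≤ Complex.abs (PP t n - PP t 1) + Complex.abs (PP t 1) := by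
              have := Complex.abs.sub_le (PP t n) (PP t 1) 0
              simpa using this
          _ ≤ D * ((1:ℕ):ℝ) ^ (-r) + 1 := add_le_add (hest le_rfl hn1) (abs_PP_one t)
          _ ≤ 2*D+2 := by
              rw [Nat.cast_one, Real.one_rpow, mul_one]; linarith
    · have hle := hest h1m hmn
      have hmR : (1:ℝ) ≤ (m:ℝ) := by exact_mod_cast h1m
      have hNm : (N:ℝ) + 1 ≤ 2 * (m:ℝ) := by
        have : (N:ℝ) ≤ (m:ℝ) := by exact_mod_cast hm
        linarith
      have h2 : ((m:ℝ)) ^ (-r) ≤ 2 * ((N:ℝ)+1) ^ (-r) := by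
        have ha : (2 * (m:ℝ)) ^ (-r) ≤ ((N:ℝ)+1) ^ (-r) :=
          Real.rpow_le_rpow_of_nonpos (by positivity) hNm (neg_nonpos.2 hr0.le)
        have hb : (2 * (m:ℝ)) ^ (-r) = (2:ℝ) ^ (-r) * ((m:ℝ)) ^ (-r) :=
          Real.mul_rpow (by norm_num) (by positivity)
        have hc : (1/2 : ℝ) ≤ (2:ℝ) ^ (-r) := by
          have := Real.rpow_le_rpow_of_exponent_le one_le_two
            (show -(1:ℝ) ≤ -r by linarith)
          rw [Real.rpow_neg_one] at this
          linarith
        have hmr : (0:ℝ) ≤ ((m:ℝ)) ^ (-r) := by positivity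
        nlinarith
      calc Complex.abs (PP t n - PP t m) ≤ D * ((m:ℝ)) ^ (-r) := hle
        _ ≤ D * (2 * ((N:ℝ)+1) ^ (-r)) := mul_le_mul_of_nonneg_left h2 hD.le
        _ ≤ (2*D+2) * ((N:ℝ)+1) ^ (-r) := by
            have := (hbase N).le; nlinarith
  intro N n m hn hm
  rcases le_total m n with h | h
  · exact key N n m hn hm h
  · rw [dist_comm]; exact key N m n hm hn h

end Stmt15Aux

open Stmt15Aux in
/-- Assuming the (GRH-conditional) bound
`|∑_{1 ≤ n ≤ x} μ(n) e^{2πint}| ≤ C_ε x^{3/4+ε}` for every `ε > 0`, the Möbius Fourier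
series `F(μ;t) = ∑ μ(n) e^{2πint}/n` converges and, for every `0 < ε < 1/4`, is Hölder
continuous with exponent `1/4 − ε`, and likewise for `|F|`, `Re F`, `Im F`. -/
theorem stmt_15
    (hS : ∀ ε : ℝ, 0 < ε → ∃ Cε : ℝ, 0 < Cε ∧ ∀ x : ℝ, 1 ≤ x → ∀ t : ℝ,
      ‖∑ n ∈ Finset.Icc 1 ⌊x⌋₊,
        (ArithmeticFunction.moebius n : ℂ) *
          Complex.exp (2 * Real.pi * Complex.I * (n : ℂ) * (t : ℂ))‖
        ≤ Cε * x ^ ((3 : ℝ) / 4 + ε)) :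
    ∃ F : ℝ → ℂ,
      (∀ t : ℝ, Tendsto (fun N : ℕ => ∑ n ∈ Finset.Icc 1 N,
          (ArithmeticFunction.moebius n : ℂ) *
            Complex.exp (2 * Real.pi * Complex.I * (n : ℂ) * (t : ℂ)) / (n : ℂ))
        atTop (𝓝 (F t))) ∧
      ∀ ε : ℝ, 0 < ε → ε < 1 / 4 →
        ∃ C₁ : ℝ, 0 < C₁ ∧
          (∀ s t : ℝ, ‖F s - F t‖ ≤ C₁ * |s - t| ^ ((1 : ℝ) / 4 - ε)) ∧
          (∀ s t : ℝ, |‖F s‖ - ‖F t‖|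
              ≤ C₁ * |s - t| ^ ((1 : ℝ) / 4 - ε)) ∧
          (∀ s t : ℝ, |(F s).re - (F t).re| ≤ C₁ * |s - t| ^ ((1 : ℝ) / 4 - ε)) ∧
          (∀ s t : ℝ, |(F s).im - (F t).im| ≤ C₁ * |s - t| ^ ((1 : ℝ) / 4 - ε)) := by
  have hSS : ∀ ε : ℝ, 0 < ε → ∃ C : ℝ, 0 < C ∧ ∀ N : ℕ, 1 ≤ N → ∀ t : ℝ,
      Complex.abs (SS t N) ≤ C * (N:ℝ) ^ ((3:ℝ)/4 + ε) := by
    intro ε hε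
    obtain ⟨C, hC, hCb⟩ := hS ε hε
    refine ⟨C, hC, fun N hN t => ?_⟩
    have h := hCb (N:ℝ) (by exact_mod_cast hN) t
    rw [Nat.floor_natCast] at h
    exact h
  -- convergence, using ε = 1/8
  obtain ⟨C₀, hC₀, hB₀⟩ := hSS (1/8) (by norm_num)
  have hD₀ : (0:ℝ) < C₀ * (1/(1/4 - 1/8) + 2) := by
    apply mul_pos hC₀; norm_num
  have hconv : ∀ t : ℝ, ∃ L : ℂ, Tendsto (fun N : ℕ => PP t N) atTop (𝓝 L) := by
    intro t
    apply cauchySeq_tendsto_of_complete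
    apply cauchySeq_of_le_tendsto_0
      (fun N : ℕ => (2*(C₀ * (1/(1/4 - 1/8) + 2))+2) * ((N:ℝ)+1) ^ (-(1/4 - 1/8 : ℝ)))
    · intro n m N hn hm
      exact dist_bound hD₀ (by norm_num) (by norm_num) t
        (fun {M N} hM hMN => cauchy_est (by norm_num) (by norm_num) hC₀ hB₀ hM hMN t)
        N n m hn hm
    · have h1 : Tendsto (fun N : ℕ => ((N:ℝ)+1)) atTop atTop :=
        tendsto_atTop_add_const_right atTop 1 tendsto_natCast_atTop_atTop
      have h2 := (tendsto_rpow_neg_atTop (show (0:ℝ) < 1/4 - 1/8 by norm_num)).comp h1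
      have h3 := h2.const_mul (2*(C₀ * (1/(1/4 - 1/8) + 2))+2)
      simpa using h3
  choose F hF using hconv
  refine ⟨F, fun t => hF t, ?_⟩
  intro ε hε hε4
  obtain ⟨C, hC, hB⟩ := hSS ε hε
  set r : ℝ := 1/4 - ε with hr_def
  have hr0 : 0 < r := by rw [hr_def]; linarith
  have hr1 : r ≤ 1 := by rw [hr_def]; linarith
  set D : ℝ := C * (1/r + 2) with hD_def
  have hD : 0 < D := by
    rw [hD_def]; apply mul_pos hC; positivity
  have hest : ∀ {M N : ℕ}, 1 ≤ M → M ≤ N → ∀ t,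
      Complex.abs (PP t N - PP t M) ≤ D * (M:ℝ) ^ (-r) :=
    fun hM hMN t => cauchy_est hε hε4 hC hB hM hMN t
  have htail : ∀ (M : ℕ), 1 ≤ M → ∀ t, Complex.abs (F t - PP t M) ≤ D * (M:ℝ) ^ (-r) := by
    intro M hM t
    have hc : Tendsto (fun N : ℕ => Complex.abs (PP t N - PP t M)) atTop
        (𝓝 (Complex.abs (F t - PP t M))) :=
      (Complex.continuous_abs.tendsto _).comp ((hF t).sub tendsto_const_nhds)
    apply le_of_tendsto hc
    filter_upwards [eventually_ge_atTop M] with N hN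
    exact hest hM hN t
  have hFb : ∀ t, Complex.abs (F t) ≤ 1 + D := by
    intro t
    calc Complex.abs (F t) ≤ Complex.abs (F t - PP t 1) + Complex.abs (PP t 1) := by
          have := Complex.abs.sub_le (F t) (PP t 1) 0
          simpa using this
      _ ≤ D * ((1:ℕ):ℝ) ^ (-r) + 1 := add_le_add (htail 1 le_rfl t) (abs_PP_one t)
      _ = 1 + D := by rw [Nat.cast_one, Real.one_rpow, mul_one]; ring
  have hC₁ : (0:ℝ) < 2 + 4*D + 4*Real.pi*C := by
    have := Real.pi_pos; nlinarith
  have key : ∀ s t : ℝ, Complex.abs (F s - F t) ≤ (2 + 4*D + 4*Real.pi*C) * |s - t| ^ r := by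
    intro s t
    rcases eq_or_lt_of_le (abs_nonneg (s - t)) with h0 | hδpos
    · have hst : s = t := by
        have := abs_eq_zero.1 h0.symm
        linarith [abs_nonneg (s-t), sub_eq_zero.1 this]
      subst hst
      simp [Real.zero_rpow hr0.ne']
    · rcases le_or_gt 1 |s - t| with h1 | h1
      · have hδr : 1 ≤ |s - t| ^ r := Real.one_le_rpow h1 hr0.le
        calc Complex.abs (F s - F t) ≤ Complex.abs (F s) + Complex.abs (F t) := by
              have := Complex.abs.sub_le (F s) 0 (F t)
              simpa using this
          _ ≤ (1+D) + (1+D) := add_le_add (hFb s) (hFb t)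
          _ ≤ (2 + 4*D + 4*Real.pi*C) * 1 := by
              have := Real.pi_pos; nlinarith
          _ ≤ (2 + 4*D + 4*Real.pi*C) * |s - t| ^ r :=
              mul_le_mul_of_nonneg_left hδr hC₁.le
      · set δ := |s - t| with hδdef
        set N : ℕ := ⌈1/δ⌉₊ with hN_def
        have hδ1 : (1:ℝ) ≤ 1/δ := by
          rw [le_div_iff₀ hδpos]; linarith
        have hN1 : 1 ≤ N := by
          rw [hN_def]
          exact Nat.one_le_ceil_iff.2 (by positivity)
        have hNlow : 1/δ ≤ (N:ℝ) := Nat.le_ceil _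
        have hNup : (N:ℝ) ≤ 2/δ := by
          have ha : (N:ℝ) < 1/δ + 1 := Nat.ceil_lt_add_one (by positivity)
          have hb : 1/δ + 1 ≤ 2/δ := by
            have : 2/δ = 2 * (1/δ) := by ring
            rw [this]; linarith
          linarith
        have hNposR : (0:ℝ) < (N:ℝ) := by
          have : (0:ℝ) < 1/δ := by positivity
          linarith
        have hδr : (N:ℝ) ^ (-r) ≤ δ ^ r := by
          have h := Real.rpow_le_rpow_of_nonpos (by positivity : (0:ℝ) < 1/δ) hNlow
            (neg_nonpos.2 hr0.le)
          calc (N:ℝ) ^ (-r) ≤ (1/δ) ^ (-r) := h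
            _ = δ ^ r := by
              rw [one_div, Real.inv_rpow hδpos.le, Real.rpow_neg hδpos.le, inv_inv]
        have hpow : (N:ℝ) ^ ((3:ℝ)/4+ε) * δ ≤ 2 * δ ^ r := by
          have h34 : (0:ℝ) ≤ 3/4 + ε := by linarith
          have h2d : (N:ℝ) ^ ((3:ℝ)/4+ε) ≤ (2/δ) ^ ((3:ℝ)/4+ε) :=
            Real.rpow_le_rpow (by positivity) hNup h34
          have h2e : (2/δ) ^ ((3:ℝ)/4+ε) = (2:ℝ) ^ ((3:ℝ)/4+ε) * (1/δ) ^ ((3:ℝ)/4+ε) := by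
            rw [show (2:ℝ)/δ = 2 * (1/δ) by ring]
            exact Real.mul_rpow (by norm_num) (by positivity)
          have h2f : (2:ℝ) ^ ((3:ℝ)/4+ε) ≤ 2 := by
            calc (2:ℝ) ^ ((3:ℝ)/4+ε) ≤ (2:ℝ) ^ (1:ℝ) :=
                Real.rpow_le_rpow_of_exponent_le one_le_two (by linarith)
              _ = 2 := Real.rpow_one 2
          have h2g : (1/δ) ^ ((3:ℝ)/4+ε) * δ = δ ^ r := by
            rw [one_div, Real.inv_rpow hδpos.le, ← Real.rpow_neg hδpos.le]
            calc δ ^ (-((3:ℝ)/4+ε)) * δ = δ ^ (-((3:ℝ)/4+ε)) * δ ^ (1:ℝ) := by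
                  rw [Real.rpow_one]
              _ = δ ^ (-((3:ℝ)/4+ε)+1) := (Real.rpow_add hδpos _ _).symm
              _ = δ ^ r := by rw [hr_def]; congr 1; ring
          have hq : (0:ℝ) ≤ (1/δ) ^ ((3:ℝ)/4+ε) := by positivity
          calc (N:ℝ) ^ ((3:ℝ)/4+ε) * δ
              ≤ ((2:ℝ) ^ ((3:ℝ)/4+ε) * (1/δ) ^ ((3:ℝ)/4+ε)) * δ := by
                rw [← h2e]
                exact mul_le_mul_of_nonneg_right h2d hδpos.le
            _ ≤ (2 * (1/δ) ^ ((3:ℝ)/4+ε)) * δ := by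
                apply mul_le_mul_of_nonneg_right _ hδpos.le
                exact mul_le_mul_of_nonneg_right h2f hq
            _ = 2 * ((1/δ) ^ ((3:ℝ)/4+ε) * δ) := by ring
            _ = 2 * δ ^ r := by rw [h2g]
        have ht1 := htail N hN1 s
        have ht2 := htail N hN1 t
        have hm := lip_PP hC hB hN1 s t
        have hδrpos : (0:ℝ) ≤ δ ^ r := Real.rpow_nonneg hδpos.le r
        calc Complex.abs (F s - F t)
            ≤ Complex.abs (F s - PP s N) + Complex.abs (PP s N - PP t N)
              + Complex.abs (PP t N - F t) := by
              have e1 := Complex.abs.sub_le (F s) (PP s N) (F t)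
              have e2 := Complex.abs.sub_le (PP s N) (PP t N) (F t)
              linarith
          _ ≤ D * (N:ℝ) ^ (-r) + (2 * Real.pi * (C * (N:ℝ) ^ ((3:ℝ)/4 + ε))) * δ
              + D * (N:ℝ) ^ (-r) := by
              have ht2' : Complex.abs (PP t N - F t) = Complex.abs (F t - PP t N) :=
                Complex.abs.map_sub _ _
              rw [ht2']
              exact add_le_add (add_le_add ht1 hm) ht2
          _ ≤ D * δ ^ r + 2 * Real.pi * C * (2 * δ ^ r) + D * δ ^ r := by
              have hmid : (2 * Real.pi * (C * (N:ℝ) ^ ((3:ℝ)/4 + ε))) * δ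
                  ≤ 2 * Real.pi * C * (2 * δ ^ r) := by
                have := mul_le_mul_of_nonneg_left hpow
                  (show (0:ℝ) ≤ 2 * Real.pi * C by positivity)
                calc (2 * Real.pi * (C * (N:ℝ) ^ ((3:ℝ)/4 + ε))) * δ
                    = 2 * Real.pi * C * ((N:ℝ) ^ ((3:ℝ)/4 + ε) * δ) := by ring
                  _ ≤ 2 * Real.pi * C * (2 * δ ^ r) := this
              have hl := mul_le_mul_of_nonneg_left hδr hD.le
              linarith
          _ ≤ (2 + 4*D + 4*Real.pi*C) * δ ^ r := by nlinarith [Real.pi_pos]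
  refine ⟨2 + 4*D + 4*Real.pi*C, hC₁, key, ?_, ?_, ?_⟩
  · intro s t
    exact le_trans (Complex.abs.abs_abv_sub_le_abv_sub _ _) (key s t)
  · intro s t
    have h := Complex.abs_re_le_norm (F s - F t)
    rw [Complex.sub_re] at h
    exact le_trans h (key s t)
  · intro s t
    have h := Complex.abs_im_le_norm (F s - F t)
    rw [Complex.sub_im] at h
    exact le_trans h (key s t)
end Stmt15Aux
end
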